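/- arXiv:1405.0022 — 10 statements merged into one kernel-verified Lean document; each statement's English description precedes it below -/
import Mathlib

section
/- If A ⊆ ℕ is a co-infinite set whose complement is computably enumerable (i.e., A is co-c.e. and co-infinite), then there is a computable permutation π : ℕ → ℕ such that π(A) has asymptotic density 0. -/
open Filter

open scoped Classical

/-- The `n`-th partial density of `S ⊆ ℕ`: `|S ∩ [0,n)| / n`. -/
noncomputable def partialDensity (S : Set ℕ) (n : ℕ) : ℝ :=
  (((Finset.range n).filter (fun m => m ∈ S)).card : ℝ) / n

/-- `S` has asymptotic density `d`. -/
def HasDensity (S : Set ℕ) (d : ℝ) : Prop :=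
  Tendsto (partialDensity S) atTop (nhds d)

/-- The upper asymptotic density of `S`. -/
noncomputable def upperDensity (S : Set ℕ) : ℝ :=
  limsup (partialDensity S) atTop

/-- The lower asymptotic density of `S`. -/
noncomputable def lowerDensity (S : Set ℕ) : ℝ :=
  liminf (partialDensity S) atTop

/-- A computable permutation of `ℕ`. -/
def ComputablePerm (π : ℕ → ℕ) : Prop :=
  Function.Bijective π ∧ Computable π

/-- `A` is computably enumerable: the domain of a partial computable function. -/
def CE (A : Set ℕ) : Prop :=
  ∃ f : ℕ →. ℕ, Partrec f ∧ ∀ n, n ∈ A ↔ (f n).Dom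

/-- The principal function of `S`: `p_S n` is the least `x` with `|S ∩ [0,x)| ≥ n`. -/
noncomputable def principalFn (S : Set ℕ) (n : ℕ) : ℕ :=
  sInf {x | n ≤ ((Finset.range x).filter (fun m => m ∈ S)).card}

/-- Total computable minimization. -/
lemma rfind_total {P : ℕ → ℕ → Bool} (hP : Computable₂ P)
    (htot : ∀ v, ∃ n, P v n = true) :
    ∃ g : ℕ → ℕ, Computable g ∧ ∀ v, P v (g v) = true ∧ ∀ m < g v, P v m = false := by
  have hpart : Partrec fun v => Nat.rfind (fun n => (Part.some (P v n) : Part Bool)) :=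
    Partrec.rfind hP.partrec₂
  refine ⟨fun v => Nat.find (htot v), ?_, ?_⟩
  · apply hpart.of_eq_tot
    intro v
    refine Nat.mem_rfind.2 ⟨?_, ?_⟩
    · simpa [Part.mem_some_iff] using (Nat.find_spec (htot v)).symm
    · intro m hm
      have := Nat.find_min (htot v) hm
      simp [Part.mem_some_iff]
      exact (Bool.eq_false_iff.2 this).symm ▸ rfl
  · intro v
    exact ⟨Nat.find_spec (htot v), fun m hm => Bool.eq_false_iff.2 (Nat.find_min (htot v) hm)⟩

lemma iter_comp {F : ℕ → ℕ} (hF : Computable F) (a : ℕ) :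
    Computable fun k => Nat.rec (motive := fun _ => ℕ) a (fun _ ih => F ih) k :=
  Computable.nat_rec Computable.id (Computable.const a)
    ((hF.comp (Computable.snd.comp Computable.snd)).to₂)

lemma infinite_unbounded {s : Set ℕ} (hs : s.Infinite) (a : ℕ) : ∃ b ∈ s, a < b := by
  by_contra h
  push_neg at h
  exact hs (Set.Finite.subset (Set.finite_Iic a) h)

/-- Given a computable strictly monotone enumeration with coinfinite range, produce the
counting function and the (computable) enumeration of the complement, with the
basic rank identities. -/
lemma enum_setup {s : ℕ → ℕ} (hs : Computable s) (hm : StrictMono s)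
    (hinf : {n | n ∉ Set.range s}.Infinite) :
    ∃ cnt d : ℕ → ℕ, Computable cnt ∧ Computable d ∧
      (∀ k, d k ∉ Set.range s) ∧
      (∀ k, cnt (s k) = k) ∧
      (∀ k, d k - cnt (d k) = k) ∧
      (∀ n, n ∉ Set.range s → d (n - cnt n) = n) ∧
      (∀ n, n ∈ Set.range s → s (cnt n) = n) := by
  have hsk : ∀ k, k ≤ s k := fun k => hm.le_apply
  obtain ⟨cnt, hcntc, hcnt⟩ :=
    rfind_total (P := fun v k => decide (v ≤ s k))
      ((Primrec.nat_le.decide.to_comp.comp Computable.fst (hs.comp Computable.snd)).to₂)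
      (fun v => ⟨v, by simpa using hsk v⟩)
  have hcnt1 : ∀ n, n ≤ s (cnt n) := fun n => by simpa using (hcnt n).1
  have hcnt2 : ∀ n m, m < cnt n → s m < n := by
    intro n m hmn
    have := (hcnt n).2 m hmn
    simpa using this
  have hiC : ∀ k, cnt (s k) = k := by
    intro k
    rcases lt_trichotomy (cnt (s k)) k with h | h | h
    · exact absurd (hcnt1 (s k)) (by simpa using (hm h).not_ge)
    · exact h
    · exact absurd (hcnt2 (s k) k h) (lt_irrefl _)
  have hivC : ∀ n, n ∈ Set.range s → s (cnt n) = n := by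
    rintro n ⟨k, rfl⟩; rw [hiC]
  have hmem : ∀ n, n ∈ Set.range s ↔ s (cnt n) = n :=
    fun n => ⟨hivC n, fun h => ⟨_, h⟩⟩
  have cnt_card : ∀ n, ((Finset.range n).filter (fun m => m ∈ Set.range s)).card = cnt n := by
    intro n
    have himg : (Finset.range n).filter (fun m => m ∈ Set.range s)
        = (Finset.range (cnt n)).image s := by
      ext m
      simp only [Finset.mem_filter, Finset.mem_range, Finset.mem_image, Set.mem_range]
      constructor
      · rintro ⟨hmn, k, rfl⟩
        refine ⟨k, ?_, rfl⟩
        by_contra hk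
        push_neg at hk
        exact absurd (le_trans (hcnt1 n) (hm.monotone hk)) (not_le.2 hmn)
      · rintro ⟨k, hk, rfl⟩
        exact ⟨hcnt2 n k hk, k, rfl⟩
    rw [himg, Finset.card_image_of_injective _ hm.injective, Finset.card_range]
  have ccard : ∀ n, ((Finset.range n).filter (fun m => m ∉ Set.range s)).card = n - cnt n := by
    intro n
    have := Finset.card_filter_add_card_filter_not
      (s := Finset.range n) (p := fun m => m ∈ Set.range s)
    rw [cnt_card n, Finset.card_range] at this
    omega
  have hP2c : Computable₂ fun (v n : ℕ) => decide (v ≤ n) && !(decide (s (cnt n) = n)) := by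
    have hc : Computable fun p : ℕ × ℕ =>
        bif decide (p.1 ≤ p.2) then !(decide (s (cnt p.2) = p.2)) else false :=
      Computable.cond (Primrec.nat_le.decide.to_comp.comp Computable.fst Computable.snd)
        ((Primrec.not.to_comp).comp
          (Primrec.eq.decide.to_comp.comp (hs.comp (hcntc.comp Computable.snd)) Computable.snd))
        (Computable.const false)
    exact Computable.to₂ (hc.of_eq
      (g := fun p : ℕ × ℕ => decide (p.1 ≤ p.2) && !(decide (s (cnt p.2) = p.2)))
      (fun p => by cases h : decide (p.1 ≤ p.2) <;> simp [h]))
  obtain ⟨G, hGc, hG⟩ :=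
    rfind_total (P := fun v n => decide (v ≤ n) && !(decide (s (cnt n) = n))) hP2c
      (by
        intro v
        obtain ⟨b, hb, hvb⟩ := infinite_unbounded hinf v
        refine ⟨b, ?_⟩
        simp only [Bool.and_eq_true, decide_eq_true_eq, Bool.not_eq_true', decide_eq_false_iff_not]
        exact ⟨le_of_lt hvb, fun h => hb ((hmem b).2 h)⟩)
  have hG1 : ∀ v, v ≤ G v ∧ G v ∉ Set.range s := by
    intro v
    have h1 := (hG v).1
    simp only [Bool.and_eq_true, decide_eq_true_eq, Bool.not_eq_true',
      decide_eq_false_iff_not] at h1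
    exact ⟨h1.1, fun h => h1.2 (hivC _ h)⟩
  have hG2 : ∀ v m, m < G v → v ≤ m → m ∈ Set.range s := by
    intro v m hmv hvm
    have h2 := (hG v).2 m hmv
    by_contra hns
    have htr : (decide (v ≤ m) && !(decide (s (cnt m) = m))) = true := by
      simp only [Bool.and_eq_true, decide_eq_true_eq, Bool.not_eq_true',
        decide_eq_false_iff_not]
      exact ⟨hvm, fun h => hns ⟨_, h⟩⟩
    rw [h2] at htr
    cases htr
  set d : ℕ → ℕ := fun k => Nat.rec (motive := fun _ => ℕ) (G 0) (fun _ ih => G (ih + 1)) k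
    with hd
  have hdc : Computable d := iter_comp (hGc.comp Computable.succ) (G 0)
  have d0 : d 0 = G 0 := rfl
  have dsucc : ∀ k, d (k + 1) = G (d k + 1) := fun k => rfl
  have dmem : ∀ k, d k ∉ Set.range s := by
    intro k; cases k with
    | zero => exact (hG1 0).2
    | succ k => rw [dsucc]; exact (hG1 _).2
  have dmono : StrictMono d := by
    apply strictMono_nat_of_lt_succ
    intro k
    rw [dsucc]
    exact lt_of_lt_of_le (Nat.lt_succ_self _) (hG1 (d k + 1)).1
  have noskip : ∀ k n, n ∉ Set.range s → n < d k → ∃ j < k, d j = n := by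
    intro k
    induction k with
    | zero =>
      intro n hn hlt
      rw [d0] at hlt
      exact absurd (hG2 0 n hlt (Nat.zero_le n)) hn
    | succ k ih =>
      intro n hn hlt
      rcases lt_trichotomy n (d k) with h | h | h
      · obtain ⟨j, hj, hjn⟩ := ih n hn h
        exact ⟨j, Nat.lt_succ_of_lt hj, hjn⟩
      · exact ⟨k, Nat.lt_succ_self k, h.symm⟩
      · rw [dsucc] at hlt
        exact absurd (hG2 (d k + 1) n hlt h) hn
  have dsurj : ∀ n, n ∉ Set.range s → ∃ j, d j = n := by
    intro n hn
    obtain ⟨j, _, hj⟩ := noskip (n + 1) n hn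
      (lt_of_lt_of_le (Nat.lt_succ_self n) (dmono.le_apply))
    exact ⟨j, hj⟩
  have hiiC : ∀ k, d k - cnt (d k) = k := by
    intro k
    have himg : (Finset.range (d k)).filter (fun m => m ∉ Set.range s)
        = (Finset.range k).image d := by
      ext m
      simp only [Finset.mem_filter, Finset.mem_range, Finset.mem_image]
      constructor
      · rintro ⟨hmd, hns⟩
        obtain ⟨j, hj, hjm⟩ := noskip k m hns hmd
        exact ⟨j, hj, hjm⟩
      · rintro ⟨j, hj, rfl⟩
        exact ⟨dmono hj, dmem j⟩
    have := ccard (d k)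
    rw [himg, Finset.card_image_of_injective _ dmono.injective, Finset.card_range] at this
    omega
  have hiiiC : ∀ n, n ∉ Set.range s → d (n - cnt n) = n := by
    intro n hn
    obtain ⟨j, rfl⟩ := dsurj n hn
    rw [hiiC]
  exact ⟨cnt, d, hcntc, hdc, dmem, hiC, hiiC, hiiiC, hivC⟩

lemma hasDensity_zero_of_subset_sq {S : Set ℕ} (hS : ∀ m ∈ S, ∃ k, k * k = m) :
    HasDensity S 0 := by
  have hb : ∀ n : ℕ, partialDensity S n ≤ ((Nat.sqrt n : ℝ) + 1) / n := by
    intro n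
    rcases Nat.eq_zero_or_pos n with rfl | hn
    · simp [partialDensity]
    · have hcard : ((Finset.range n).filter (fun m => m ∈ S)).card ≤ Nat.sqrt n + 1 := by
        have hsub : (Finset.range n).filter (fun m => m ∈ S)
            ⊆ (Finset.range (Nat.sqrt n + 1)).image (fun k => k * k) := by
          intro m hm
          simp only [Finset.mem_filter, Finset.mem_range] at hm
          obtain ⟨k, hk⟩ := hS m hm.2
          simp only [Finset.mem_image, Finset.mem_range]
          refine ⟨k, ?_, hk⟩
          have hks : k = Nat.sqrt m := by rw [← hk, Nat.sqrt_eq]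
          rw [hks]
          exact Nat.lt_succ_of_le (Nat.sqrt_le_sqrt (le_of_lt hm.1))
        calc ((Finset.range n).filter (fun m => m ∈ S)).card
            ≤ ((Finset.range (Nat.sqrt n + 1)).image (fun k => k * k)).card :=
              Finset.card_le_card hsub
          _ ≤ (Finset.range (Nat.sqrt n + 1)).card := Finset.card_image_le
          _ = Nat.sqrt n + 1 := Finset.card_range _
      have h2 : ((((Finset.range n).filter (fun m => m ∈ S)).card : ℝ))
          ≤ (Nat.sqrt n : ℝ) + 1 := by exact_mod_cast hcard
      unfold partialDensity
      gcongr
  have hnn : ∀ n, 0 ≤ partialDensity S n := fun n => by unfold partialDensity; positivity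
  have hsqrt_tendsto : Tendsto (fun n : ℕ => Nat.sqrt n) atTop atTop := by
    apply Filter.tendsto_atTop_atTop.2
    intro b
    refine ⟨b * b, fun n hn => ?_⟩
    calc b = Nat.sqrt (b * b) := (Nat.sqrt_eq b).symm
      _ ≤ Nat.sqrt n := Nat.sqrt_le_sqrt hn
  have h2s : Tendsto (fun n : ℕ => 2 / (Nat.sqrt n : ℝ)) atTop (nhds 0) :=
    (tendsto_const_div_atTop_nhds_zero_nat 2).comp hsqrt_tendsto
  have hb2 : ∀ᶠ n : ℕ in atTop, ((Nat.sqrt n : ℝ) + 1) / n ≤ 2 / (Nat.sqrt n : ℝ) := by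
    filter_upwards [eventually_ge_atTop 1] with n hn
    have hs1 : 1 ≤ Nat.sqrt n := Nat.le_sqrt.2 (by omega)
    have key : ((Nat.sqrt n : ℝ) + 1) * (Nat.sqrt n : ℝ) ≤ 2 * n := by
      have h1 : Nat.sqrt n * Nat.sqrt n ≤ n := Nat.sqrt_le n
      have : (Nat.sqrt n + 1) * Nat.sqrt n ≤ 2 * n := by nlinarith
      exact_mod_cast this
    rw [div_le_div_iff₀ (by exact_mod_cast Nat.lt_of_lt_of_le Nat.zero_lt_one hn)
      (by exact_mod_cast hs1)]
    linarith
  have hbt : Tendsto (fun n : ℕ => ((Nat.sqrt n : ℝ) + 1) / n) atTop (nhds 0) := by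
    apply tendsto_of_tendsto_of_tendsto_of_le_of_le' tendsto_const_nhds h2s
    · filter_upwards with n; positivity
    · exact hb2
  exact tendsto_of_tendsto_of_tendsto_of_le_of_le tendsto_const_nhds hbt hnn hb

set_option maxHeartbeats 1000000 in
theorem coce_density_zero (A : Set ℕ) (hA : CE Aᶜ) (hcoinf : Aᶜ.Infinite) :
    ∃ π : ℕ → ℕ, ComputablePerm π ∧ HasDensity (π '' A) 0 := by
  classical
  obtain ⟨f, pf, hdom⟩ := hA
  obtain ⟨cde, hcde⟩ := Nat.Partrec.Code.exists_code.1 (Partrec.nat_iff.1 pf)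
  set P : ℕ → Bool :=
    fun m => (Nat.Partrec.Code.evaln m.unpair.1 cde m.unpair.2).isSome with hPdef
  have hPprim : Primrec P :=
    Primrec.option_isSome.comp
      (Nat.Partrec.Code.primrec_evaln.comp
        (((Primrec.fst.comp Primrec.unpair).pair (Primrec.const cde)).pair
          (Primrec.snd.comp Primrec.unpair)))
  have hPmem : ∀ m, P m = true → m.unpair.2 ∈ Aᶜ := by
    intro m hm
    rw [hPdef] at hm
    obtain ⟨x, hx⟩ := Option.isSome_iff_exists.1 hm
    have hxe : x ∈ Nat.Partrec.Code.eval cde m.unpair.2 :=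
      Nat.Partrec.Code.evaln_complete.2 ⟨m.unpair.1, hx⟩
    rw [hcde] at hxe
    exact (hdom _).2 (Part.dom_iff_mem.2 ⟨x, hxe⟩)
  have hPex : ∀ n, n ∈ Aᶜ → ∃ s, P (Nat.pair s n) = true := by
    intro n hn
    obtain ⟨x, hx⟩ := Part.dom_iff_mem.1 ((hdom n).1 hn)
    rw [← hcde] at hx
    obtain ⟨k, hk⟩ := Nat.Partrec.Code.evaln_complete.1 hx
    refine ⟨k, ?_⟩
    rw [hPdef]
    simp only [Nat.unpair_pair]
    exact Option.isSome_iff_exists.2 ⟨x, hk⟩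
  -- the "next element of Aᶜ" search
  have hP2c : Computable₂ fun (v m : ℕ) => P m && decide (v < m.unpair.2) := by
    have hc0 : Computable fun p : ℕ × ℕ =>
        bif P p.2 then decide (p.1 < p.2.unpair.2) else false :=
      Computable.cond (hPprim.to_comp.comp Computable.snd)
        (Primrec.nat_lt.decide.to_comp.comp Computable.fst
          (Computable.snd.comp (Computable.unpair.comp Computable.snd)))
        (Computable.const false)
    exact Computable.to₂ (hc0.of_eq
      (g := fun p : ℕ × ℕ => P p.2 && decide (p.1 < p.2.unpair.2))
      (fun p => by cases h : P p.2 <;> simp [h]))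
  obtain ⟨N, hNc, hN⟩ :=
    rfind_total (P := fun v m => P m && decide (v < m.unpair.2)) hP2c
      (by
        intro v
        obtain ⟨bb, hb, hvb⟩ := infinite_unbounded hcoinf v
        obtain ⟨st, hst⟩ := hPex bb hb
        refine ⟨Nat.pair st bb, ?_⟩
        simp [Nat.unpair_pair, hst, hvb])
  set F : ℕ → ℕ := fun v => (N v).unpair.2 with hFdef
  have hFc : Computable F := Computable.snd.comp (Computable.unpair.comp hNc)
  have hF : ∀ v, F v ∈ Aᶜ ∧ v < F v := by
    intro v
    have h1 := (hN v).1
    rw [Bool.and_eq_true] at h1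
    simp only [decide_eq_true_eq] at h1
    exact ⟨hPmem _ h1.1, h1.2⟩
  -- a computable strictly monotone enumeration of an infinite co-infinite subset of Aᶜ
  set c₀ : ℕ → ℕ := fun k => Nat.rec (motive := fun _ => ℕ) (F 0) (fun _ ih => F ih) k
    with hc₀def
  have hc₀c : Computable c₀ := iter_comp hFc (F 0)
  have hc₀mono : StrictMono c₀ := strictMono_nat_of_lt_succ fun k => (hF (c₀ k)).2
  have hc₀mem : ∀ k, c₀ k ∈ Aᶜ := by
    intro k; cases k with
    | zero => exact (hF 0).1
    | succ k => exact (hF (c₀ k)).1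
  set c : ℕ → ℕ := fun k => c₀ (2 * k) with hcdef
  have hcc : Computable c :=
    hc₀c.comp ((Primrec.nat_mul.comp (Primrec.const 2) Primrec.id).to_comp)
  have hcmono : StrictMono c := fun a b h => hc₀mono (by omega)
  have hcmem : ∀ k, c k ∈ Aᶜ := fun k => hc₀mem _
  have hccoinf : {n | n ∉ Set.range c}.Infinite := by
    refine Set.infinite_of_injective_forall_mem (f := fun k : ℕ => c₀ (2 * k + 1)) ?_ ?_
    · intro a b hab
      have hab' : c₀ (2 * a + 1) = c₀ (2 * b + 1) := hab
      have : 2 * a + 1 = 2 * b + 1 := hc₀mono.injective hab'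
      omega
    · intro k
      rintro ⟨j, hj⟩
      have hj' : c₀ (2 * j) = c₀ (2 * k + 1) := hj
      have : 2 * j = 2 * k + 1 := hc₀mono.injective hj'
      omega
  -- the target sparse set: squares
  set q : ℕ → ℕ := fun k => k * k with hqdef
  have hqc : Computable q := (Primrec.nat_mul.comp Primrec.id Primrec.id).to_comp
  have hqmono : StrictMono q := strictMono_nat_of_lt_succ fun k => by
    simp only [hqdef]; nlinarith
  have hqcoinf : {n | n ∉ Set.range q}.Infinite := by
    refine Set.infinite_of_injective_forall_mem
      (f := fun k : ℕ => (k + 1) * (k + 1) + 1) ?_ ?_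
    · have : StrictMono fun k : ℕ => (k + 1) * (k + 1) + 1 :=
        strictMono_nat_of_lt_succ fun k => by nlinarith
      exact this.injective
    · intro k
      rintro ⟨j, hj⟩
      simp only [hqdef] at hj
      rcases le_or_gt j (k + 1) with h | h
      · have := Nat.mul_le_mul h h
        omega
      · have h2 : k + 2 ≤ j := h
        have := Nat.mul_le_mul h2 h2
        nlinarith
  obtain ⟨cntC, dd, hcntCc, hddc, hddmem, hiC, hiiC, hiiiC, hivC⟩ :=
    enum_setup hcc hcmono hccoinf
  obtain ⟨cntQ, b, hcntQc, hbc, hbmem, hiQ, hiiQ, hiiiQ, hivQ⟩ :=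
    enum_setup hqc hqmono hqcoinf
  set π : ℕ → ℕ := fun n => if c (cntC n) = n then b (cntC n) else q (n - cntC n) with hπdef
  set ρ : ℕ → ℕ := fun m => if q (cntQ m) = m then dd (cntQ m) else c (m - cntQ m) with hρdef
  have hπc : Computable π := by
    have hcond : Computable fun n =>
        bif decide (c (cntC n) = n) then b (cntC n) else q (n - cntC n) :=
      Computable.cond (Primrec.eq.decide.to_comp.comp (hcc.comp hcntCc) Computable.id)
        (hbc.comp hcntCc)
        (hqc.comp (Primrec.nat_sub.to_comp.comp Computable.id hcntCc))
    refine hcond.of_eq fun n => ?_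
    by_cases h : c (cntC n) = n <;> simp [hπdef, h]
  have left : Function.LeftInverse ρ π := by
    intro n
    by_cases h : c (cntC n) = n
    · have hπn : π n = b (cntC n) := by rw [hπdef]; simp only []; rw [if_pos h]
      rw [hπn, hρdef]
      simp only []
      rw [if_neg (fun he => hbmem (cntC n) ⟨_, he⟩)]
      rw [hiiQ]
      exact h
    · have hn : n ∉ Set.range c := fun hr => h (hivC n hr)
      have hπn : π n = q (n - cntC n) := by rw [hπdef]; simp only []; rw [if_neg h]
      rw [hπn, hρdef]
      simp only []
      rw [if_pos (by rw [hiQ]), hiQ]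
      exact hiiiC n hn
  have right : Function.RightInverse ρ π := by
    intro m
    by_cases h : q (cntQ m) = m
    · have hρm : ρ m = dd (cntQ m) := by rw [hρdef]; simp only []; rw [if_pos h]
      rw [hρm, hπdef]
      simp only []
      rw [if_neg (fun he => hddmem (cntQ m) ⟨_, he⟩)]
      rw [hiiC]
      exact h
    · have hm : m ∉ Set.range q := fun hr => h (hivQ m hr)
      have hρm : ρ m = c (m - cntQ m) := by rw [hρdef]; simp only []; rw [if_neg h]
      rw [hρm, hπdef]
      simp only []
      rw [if_pos (by rw [hiC]), hiC]
      exact hiiiQ m hm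
  refine ⟨π, ⟨Function.bijective_iff_has_inverse.2 ⟨ρ, left, right⟩, hπc⟩, ?_⟩
  apply hasDensity_zero_of_subset_sq
  rintro m ⟨n, hnA, rfl⟩
  have hn : n ∉ Set.range c := by
    rintro ⟨k, rfl⟩
    exact hcmem k hnA
  have hne : ¬(c (cntC n) = n) := fun he => hn ⟨_, he⟩
  refine ⟨n - cntC n, ?_⟩
  rw [hπdef]
  simp only []
  rw [if_neg hne]
end

section
/- Every r-cohesive set has intrinsic density 0; that is, if C ⊆ ℕ is r-cohesive, then for every computable permutation π : ℕ → ℕ, the image π(C) has asymptotic density 0. -/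
open Filter

open scoped Classical

/-- An infinite set `C` is r-cohesive if no computable set splits it into two
infinite pieces. -/
def RCohesive (C : Set ℕ) : Prop :=
  C.Infinite ∧ ¬∃ R : Set ℕ, ComputablePred (fun n => n ∈ R) ∧
    (R ∩ C).Infinite ∧ (Rᶜ ∩ C).Infinite

/-- Counting an arithmetic progression in an initial segment. -/
lemma count_mod_le (k j n : ℕ) : ((Finset.range n).filter (fun m => m % k = j)).card
    ≤ n / k + 1 := by
  classical
  have h := Finset.card_le_card_of_injOn (s := (Finset.range n).filter (fun m => m % k = j))
    (t := Finset.range (n / k + 1)) (fun m => m / k) ?_ ?_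
  · simpa using h
  · intro m hm
    simp only [Finset.mem_coe, Finset.mem_filter, Finset.mem_range] at hm ⊢
    exact lt_of_le_of_lt (Nat.div_le_div_right hm.1.le) (Nat.lt_succ_self _)
  · intro a ha b hb hab
    simp only [Finset.coe_filter, Set.mem_setOf_eq, Finset.mem_range] at ha hb
    have hab' : a / k = b / k := hab
    have h1 := Nat.div_add_mod a k
    have h2 := Nat.div_add_mod b k
    rw [hab'] at h1
    omega

lemma residue_computablePred (π : ℕ → ℕ) (hπ : Computable π) (k j : ℕ) :
    ComputablePred (fun n => n ∈ {n | π n % k = j}) := by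
  rw [ComputablePred.computable_iff]
  refine ⟨fun n => decide (π n % k = j), ?_, ?_⟩
  · exact (Primrec.eq.comp ((Primrec.nat_mod.comp Primrec.id (Primrec.const k)))
      (Primrec.const j)).decide.to_comp.comp hπ
  · funext n
    simp [Set.mem_setOf_eq]

lemma exists_good_residue (C : Set ℕ) (hC : RCohesive C) (π : ℕ → ℕ)
    (hπ : Computable π) (k : ℕ) (hk : 0 < k) :
    ∃ j, ({n | π n % k = j}ᶜ ∩ C).Finite := by
  have h1 : ∃ j ∈ Finset.range k, ({n | π n % k = j} ∩ C).Infinite := by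
    by_contra h
    push_neg at h
    have hsub : C ⊆ ⋃ j ∈ (Finset.range k : Finset ℕ), ({n | π n % k = j} ∩ C) := by
      intro x hx
      exact Set.mem_biUnion (Finset.mem_coe.mpr (Finset.mem_range.mpr (Nat.mod_lt _ hk)))
        ⟨rfl, hx⟩
    exact hC.1 ((Set.Finite.biUnion (Finset.range k).finite_toSet
      (fun j hj => h j (Finset.mem_coe.mp hj))).subset hsub)
  obtain ⟨j, _, hj⟩ := h1
  refine ⟨j, ?_⟩
  rw [← Set.not_infinite]
  intro hinf
  exact hC.2 ⟨{n | π n % k = j}, residue_computablePred π hπ k j, hj, hinf⟩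

lemma main_count (C : Set ℕ) (hC : RCohesive C) (π : ℕ → ℕ) (hπ : Computable π)
    (k : ℕ) (hk : 0 < k) :
    ∃ c : ℕ, ∀ n, ((Finset.range n).filter (fun m => m ∈ π '' C)).card ≤ n / k + 1 + c := by
  classical
  obtain ⟨j, hj⟩ := exists_good_residue C hC π hπ k hk
  have hF : (π '' ({n | π n % k = j}ᶜ ∩ C)).Finite := hj.image π
  refine ⟨hF.toFinset.card, fun n => ?_⟩
  have hsub : (Finset.range n).filter (fun m => m ∈ π '' C) ⊆
      ((Finset.range n).filter (fun m => m % k = j)) ∪ hF.toFinset := by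
    intro m hm
    simp only [Finset.mem_filter, Finset.mem_range, Finset.mem_union,
      Set.Finite.mem_toFinset] at hm ⊢
    obtain ⟨hmn, x, hxC, rfl⟩ := hm
    by_cases hx : π x % k = j
    · exact Or.inl ⟨hmn, hx⟩
    · exact Or.inr ⟨x, ⟨hx, hxC⟩, rfl⟩
  calc ((Finset.range n).filter (fun m => m ∈ π '' C)).card
      ≤ (((Finset.range n).filter (fun m => m % k = j)) ∪ hF.toFinset).card :=
        Finset.card_le_card hsub
    _ ≤ ((Finset.range n).filter (fun m => m % k = j)).card + hF.toFinset.card :=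
        Finset.card_union_le _ _
    _ ≤ n / k + 1 + hF.toFinset.card := by
        exact Nat.add_le_add_right (count_mod_le k j n) _

theorem rCohesive_intrinsicDensity_zero (C : Set ℕ) (hC : RCohesive C) :
    ∀ π : ℕ → ℕ, ComputablePerm π → HasDensity (π '' C) 0 := by
  intro π hπ
  rw [HasDensity, Metric.tendsto_atTop]
  intro ε hε
  -- choose k with 1/k < ε/2
  obtain ⟨k, hk⟩ := exists_nat_gt (2 / ε)
  have hk0 : 0 < k := by
    exact_mod_cast (lt_trans (by positivity : (0:ℝ) < 2 / ε) hk)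
  obtain ⟨c, hc⟩ := main_count C hC π hπ.2 k hk0
  obtain ⟨N0, hN0⟩ := exists_nat_gt (2 * (1 + c) / ε)
  refine ⟨max N0 1, fun n hn => ?_⟩
  have hn1 : 1 ≤ n := le_trans (le_max_right _ _) hn
  have hnN0 : (N0 : ℝ) ≤ n := by exact_mod_cast le_trans (le_max_left _ _) hn
  have hnpos : (0 : ℝ) < n := by exact_mod_cast hn1
  have hkpos : (0 : ℝ) < k := by exact_mod_cast hk0
  have hcard : (((Finset.range n).filter (fun m => m ∈ π '' C)).card : ℝ)
      ≤ (n : ℝ) / k + (1 + c) := by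
    have := hc n
    have h2 : ((n / k : ℕ) : ℝ) ≤ (n : ℝ) / k := Nat.cast_div_le
    have h3 : (((Finset.range n).filter (fun m => m ∈ π '' C)).card : ℝ)
        ≤ ((n / k : ℕ) : ℝ) + (1 + c) := by exact_mod_cast (by omega : ((Finset.range n).filter (fun m => m ∈ π '' C)).card ≤ n / k + (1 + c))
    linarith
  have hpd : partialDensity (π '' C) n ≤ 1 / k + (1 + c) / n := by
    rw [partialDensity]
    rw [div_le_iff₀ hnpos]
    have : ((1:ℝ) / k + (1 + c) / n) * n = (n : ℝ) / k + (1 + c) := by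
      field_simp
    rw [this]
    exact hcard
  have hpdef : dist (partialDensity (π '' C) n) 0 = partialDensity (π '' C) n := by
    rw [Real.dist_eq, sub_zero, abs_of_nonneg]
    exact div_nonneg (by positivity) (by positivity)
  rw [hpdef]
  have e1 : (1:ℝ) / k < ε / 2 := by
    rw [div_lt_div_iff₀ hkpos two_pos]
    have := (div_lt_iff₀ hε).mp hk
    linarith
  have e2 : (1 + (c:ℝ)) / n < ε / 2 := by
    rw [div_lt_div_iff₀ hnpos two_pos]
    have h4 := (div_lt_iff₀ hε).mp hN0
    have h5 : (N0:ℝ) * ε ≤ (n:ℝ) * ε := mul_le_mul_of_nonneg_right hnN0 hε.le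
    linarith
  linarith
end

section
/- Every quasi-cohesive set has intrinsic density 0; that is, if Q ⊆ ℕ is a finite union of cohesive sets, then for every computable permutation π : ℕ → ℕ, the image π(Q) has asymptotic density 0. -/
open Filter

open scoped Classical

/-- An infinite set `C` is cohesive if every c.e. set `U` either intersects `C`
finitely or has complement intersecting `C` finitely. -/
def Cohesive (C : Set ℕ) : Prop :=
  C.Infinite ∧ ∀ U : Set ℕ, CE U → (C ∩ U).Finite ∨ (C ∩ Uᶜ).Finite

lemma ce_of_computable_pred (p : ℕ → Bool) (hp : Computable p) :
    CE {n | p n = true} := by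
  refine ⟨fun n => ((bif p n then some 0 else none : Option ℕ) : Part ℕ),
    (Computable.cond hp (Computable.const (some 0)) (Computable.const none)).ofOption, ?_⟩
  intro n
  cases h : p n <;> simp [Set.mem_setOf_eq, h, Part.ofOption]

lemma ce_mod (k r : ℕ) : CE {n | n % k = r} := by
  have hp : Computable fun n => decide (n % k = r) :=
    (Primrec.eq.comp (Primrec.nat_mod.comp Primrec.id (Primrec.const k))
      (Primrec.const r)).decide.to_comp
  have := ce_of_computable_pred _ hp
  simpa using this

lemma cohesive_image {C : Set ℕ} (hC : Cohesive C) {π : ℕ → ℕ} (hπ : ComputablePerm π) :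
    Cohesive (π '' C) := by
  obtain ⟨hCinf, hcoh⟩ := hC
  obtain ⟨hbij, hcomp⟩ := hπ
  constructor
  · exact hCinf.image hbij.injective.injOn
  · rintro U ⟨f, hf, hfd⟩
    have hV : CE (π ⁻¹' U) := ⟨fun n => f (π n), hf.comp hcomp, fun n => hfd (π n)⟩
    rcases hcoh _ hV with h | h
    · left
      have he : π '' C ∩ U = π '' (C ∩ π ⁻¹' U) := by
        rw [Set.image_inter_preimage]
      rw [he]; exact h.image π
    · right
      have he : π '' C ∩ Uᶜ = π '' (C ∩ (π ⁻¹' U)ᶜ) := by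
        rw [← Set.preimage_compl, Set.image_inter_preimage]
      rw [he]; exact h.image π

lemma card_mod_filter_le (n k r : ℕ) :
    ((Finset.range n).filter (fun m => m % k = r)).card ≤ n / k + 1 := by
  have h : ((Finset.range n).filter (fun m => m % k = r)).card ≤
      (Finset.range (n / k + 1)).card := by
    apply Finset.card_le_card_of_injOn (fun m => m / k)
    · intro m hm
      simp only [Finset.coe_filter, Set.mem_setOf_eq, Finset.mem_coe, Finset.mem_filter, Finset.mem_range] at hm ⊢
      exact Nat.lt_succ_of_le (Nat.div_le_div_right (le_of_lt hm.1))
    · intro a ha b hb hab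
      simp only [Finset.coe_filter, Set.mem_setOf_eq, Finset.mem_range] at ha hb
      have h1 := Nat.div_add_mod a k
      have h2 := Nat.div_add_mod b k
      rw [ha.2] at h1
      rw [hb.2] at h2
      rw [show a / k = b / k from hab] at h1
      exact h1.symm.trans h2
  simpa using h

lemma cohesive_residue {C : Set ℕ} (hC : Cohesive C) {k : ℕ} (hk : 0 < k) :
    ∃ r, (C ∩ {n | n % k = r}ᶜ).Finite := by
  by_contra h
  push_neg at h
  have hfin : ∀ r, (C ∩ {n | n % k = r}).Finite := by
    intro r
    rcases hC.2 _ (ce_mod k r) with h1 | h1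
    · exact h1
    · exact absurd h1 (h r)
  have hsub : C ⊆ ⋃ r ∈ Finset.range k, (C ∩ {n | n % k = r}) := by
    intro x hx
    exact Set.mem_biUnion (Finset.mem_range.mpr (Nat.mod_lt x hk)) ⟨hx, rfl⟩
  exact hC.1 (((Finset.range k).finite_toSet.biUnion (fun r _ => hfin r)).subset hsub)

lemma partialDensity_nonneg (S : Set ℕ) (n : ℕ) : 0 ≤ partialDensity S n := by
  unfold partialDensity
  positivity

lemma cohesive_hasDensity_zero {C : Set ℕ} (hC : Cohesive C) : HasDensity C 0 := by
  rw [HasDensity, Metric.tendsto_atTop]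
  intro ε hε
  obtain ⟨k, hk⟩ := exists_nat_gt (2 / ε)
  have hk1 : 0 < k := by
    have : (0 : ℝ) < 2 / ε := by positivity
    exact_mod_cast this.trans hk
  obtain ⟨r, hr⟩ := cohesive_residue hC hk1
  set F := hr.toFinset with hF
  have hcard : ∀ n, (((Finset.range n).filter (fun m => m ∈ C)).card : ℝ) ≤
      (F.card : ℝ) + ((n / k : ℕ) : ℝ) + 1 := by
    intro n
    have hsub : (Finset.range n).filter (fun m => m ∈ C) ⊆
        F ∪ (Finset.range n).filter (fun m => m % k = r) := by
      intro m hm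
      simp only [Finset.mem_filter, Finset.mem_range] at hm
      by_cases hmr : m % k = r
      · exact Finset.mem_union_right _
          (Finset.mem_filter.mpr ⟨Finset.mem_range.mpr hm.1, hmr⟩)
      · exact Finset.mem_union_left _ (hr.mem_toFinset.mpr ⟨hm.2, hmr⟩)
    have h1 : ((Finset.range n).filter (fun m => m ∈ C)).card ≤ F.card + (n / k + 1) := by
      calc ((Finset.range n).filter (fun m => m ∈ C)).card
          ≤ (F ∪ (Finset.range n).filter (fun m => m % k = r)).card :=
            Finset.card_le_card hsub
        _ ≤ F.card + ((Finset.range n).filter (fun m => m % k = r)).card :=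
            Finset.card_union_le _ _
        _ ≤ F.card + (n / k + 1) := by
            exact Nat.add_le_add_left (card_mod_filter_le n k r) _
    have := (Nat.cast_le (α := ℝ)).mpr h1
    push_cast at this
    linarith
  obtain ⟨N, hN⟩ := exists_nat_gt (2 * ((F.card : ℝ) + 1) / ε)
  refine ⟨max N 1, fun n hn => ?_⟩
  have hn1 : 1 ≤ n := le_trans (le_max_right _ _) hn
  have hnN : (N : ℝ) ≤ n := Nat.cast_le.mpr (le_trans (le_max_left _ _) hn)
  have hnpos : (0 : ℝ) < n := by exact_mod_cast hn1
  rw [Real.dist_eq, sub_zero, abs_of_nonneg (partialDensity_nonneg C n)]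
  have hbound : partialDensity C n ≤ ((F.card : ℝ) + 1) / n + 1 / k := by
    unfold partialDensity
    have h2 : (((n / k : ℕ) : ℝ)) ≤ (n : ℝ) / k := Nat.cast_div_le
    calc (((Finset.range n).filter (fun m => m ∈ C)).card : ℝ) / n
        ≤ ((F.card : ℝ) + ((n / k : ℕ) : ℝ) + 1) / n := by
          apply div_le_div_of_nonneg_right (hcard n) hnpos.le
      _ ≤ ((F.card : ℝ) + (n : ℝ) / k + 1) / n := by
          apply div_le_div_of_nonneg_right _ hnpos.le
          linarith
      _ = ((F.card : ℝ) + 1) / n + 1 / k := by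
          field_simp
          ring
  have hε2a : ((F.card : ℝ) + 1) / n < ε / 2 := by
    have hNpos : (0 : ℝ) < N := lt_of_le_of_lt (by positivity) hN
    rw [div_lt_iff₀ hnpos]
    have : 2 * ((F.card : ℝ) + 1) / ε < n := lt_of_lt_of_le hN hnN
    rw [div_lt_iff₀ hε] at this
    linarith
  have hε2b : (1 : ℝ) / k < ε / 2 := by
    have hkpos : (0 : ℝ) < k := by exact_mod_cast hk1
    rw [div_lt_iff₀ hkpos]
    rw [div_lt_iff₀ hε] at hk
    linarith
  linarith

lemma partialDensity_iUnion_le {n : ℕ} (S : Fin n → Set ℕ) (m : ℕ) :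
    partialDensity (⋃ i, S i) m ≤ ∑ i, partialDensity (S i) m := by
  unfold partialDensity
  rw [← Finset.sum_div]
  rcases Nat.eq_zero_or_pos m with hm | hm
  · subst hm
    simp
  · apply div_le_div_of_nonneg_right _ (by positivity)
    have h1 : (Finset.range m).filter (fun x => x ∈ ⋃ i, S i) ⊆
        Finset.univ.biUnion (fun i : Fin n => (Finset.range m).filter (fun x => x ∈ S i)) := by
      intro x hx
      simp only [Finset.mem_filter, Set.mem_iUnion] at hx
      obtain ⟨hx1, i, hx2⟩ := hx
      exact Finset.mem_biUnion.mpr ⟨i, Finset.mem_univ i,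
        Finset.mem_filter.mpr ⟨hx1, hx2⟩⟩
    have h2 : ((Finset.range m).filter (fun x => x ∈ ⋃ i, S i)).card ≤
        ∑ i, ((Finset.range m).filter (fun x => x ∈ S i)).card :=
      le_trans (Finset.card_le_card h1) (Finset.card_biUnion_le)
    exact_mod_cast h2

theorem quasiCohesive_intrinsicDensity_zero (Q : Set ℕ)
    (hQ : ∃ (n : ℕ) (C : Fin n → Set ℕ),
      (∀ i, Cohesive (C i)) ∧ Q = ⋃ i, C i) :
    ∀ π : ℕ → ℕ, ComputablePerm π → HasDensity (π '' Q) 0 := by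
  rintro π hπ
  obtain ⟨n, C, hC, rfl⟩ := hQ
  rw [Set.image_iUnion]
  have hd : ∀ i, HasDensity (π '' C i) 0 := fun i =>
    cohesive_hasDensity_zero (cohesive_image (hC i) hπ)
  have hsum : Tendsto (fun m => ∑ i, partialDensity (π '' C i) m) atTop (nhds 0) := by
    have := tendsto_finset_sum (Finset.univ : Finset (Fin n)) (fun i _ => hd i)
    simpa using this
  exact squeeze_zero (fun m => partialDensity_nonneg _ m)
    (fun m => partialDensity_iUnion_le (fun i => π '' C i) m) hsum
end

section
/- Any infinite set A ⊆ ℕ that is not immune has asymptotic density 1 under some computable permutation; that is, if A is infinite and has an infinite computably enumerable subset, then there is a computable permutation π : ℕ → ℕ such that π(A) has asymptotic density 1. -/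
open Filter

open scoped Classical

/-! ### Auxiliary computability lemmas -/

private lemma computable_nat_find {q : ℕ → ℕ → Prop} [∀ n m, Decidable (q n m)]
    {b : ℕ → ℕ → Bool}
    (hb : ∀ n m, q n m ↔ b n m = true) (hcb : Computable₂ b) (hex : ∀ n, ∃ m, q n m) :
    Computable fun n => Nat.find (hex n) := by
  have h1 : Partrec fun n => Nat.rfind fun m => (b n : ℕ →. Bool) m :=
    Partrec.rfind hcb.partrec₂
  apply Partrec.of_eq_tot h1
  intro n
  apply Nat.mem_rfind.2
  constructor
  · simpa using ((hb n _).1 (Nat.find_spec (hex n))).symm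
  · intro m hm
    have : ¬ q n m := Nat.find_min (hex n) hm
    have hbm : b n m = false := by
      cases h : b n m
      · rfl
      · exact absurd ((hb n m).2 h) this
    simpa [hbm] using rfl

private lemma computable_count {p : ℕ → Prop} [DecidablePred p] {b : ℕ → Bool}
    (hb : ∀ n, p n ↔ b n = true) (hcb : Computable b) : Computable (Nat.count p) := by
  have h : Computable fun (n : ℕ) =>
      Nat.rec (motive := fun _ => ℕ) 0 (fun y IH => IH + cond (b y) 1 0) n := by
    have hh : Computable₂ fun (_ : ℕ) (q : ℕ × ℕ) => q.2 + cond (b q.1) 1 0 :=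
      (Primrec.nat_add.to_comp.comp (Computable.snd.comp Computable.snd)
        (Computable.cond (hcb.comp (Computable.fst.comp Computable.snd))
          (Computable.const 1) (Computable.const 0))).to₂
    exact Computable.nat_rec (f := fun n : ℕ => n) (g := fun _ : ℕ => 0)
      Computable.id (Computable.const 0) hh
  apply h.of_eq
  intro n
  induction n with
  | zero => simp
  | succ n ih =>
    show (Nat.rec (motive := fun _ => ℕ) 0 (fun y IH => IH + cond (b y) 1 0) n)
        + cond (b n) 1 0 = Nat.count p (n + 1)
    rw [ih, Nat.count_succ]
    by_cases hp : p n
    · simp [hp, (hb n).1 hp]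
    · have : b n = false := by
        cases h' : b n
        · rfl
        · exact absurd ((hb n).2 h') hp
      simp [hp, this]

private lemma computable_nth {p : ℕ → Prop} [DecidablePred p] {b : ℕ → Bool}
    (hb : ∀ n, p n ↔ b n = true) (hcb : Computable b) (hinf : (setOf p).Infinite) :
    Computable (Nat.nth p) := by
  have hcc := computable_count hb hcb
  have hex : ∀ n, ∃ m, p m ∧ Nat.count p m = n := fun n =>
    ⟨Nat.nth p n, Nat.nth_mem_of_infinite hinf n, Nat.count_nth_of_infinite hinf n⟩
  have hb2 : ∀ n m, (p m ∧ Nat.count p m = n) ↔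
      (cond (b m) (decide (Nat.count p m = n)) false) = true := by
    intro n m
    cases h' : b m <;> simp [hb m, h']
  have hcb2 : Computable₂ fun (n m : ℕ) =>
      cond (b m) (decide (Nat.count p m = n)) false := by
    have := Computable.cond (hcb.comp (Computable.snd (α := ℕ) (β := ℕ)))
      ((Primrec.eq (α := ℕ)).decide.to_comp.comp (hcc.comp Computable.snd) Computable.fst)
      (Computable.const false)
    exact this.to₂
  have hfind := computable_nat_find hb2 hcb2 hex
  apply hfind.of_eq
  intro n
  have hspec := Nat.find_spec (hex n)
  have := Nat.nth_count hspec.1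
  rw [hspec.2] at this
  exact this.symm

/-! ### A good computable enumeration of a subset of a c.e. infinite set -/

private lemma exists_good_enum {B : Set ℕ} (hce : CE B) (hBinf : B.Infinite) :
    ∃ t : ℕ → ℕ, Computable t ∧ StrictMono t ∧ Set.range t ⊆ B ∧ (Set.range t)ᶜ.Infinite := by
  classical
  obtain ⟨f, hf, hdom⟩ := hce
  obtain ⟨c, hc⟩ := Nat.Partrec.Code.exists_code.1 (Partrec.nat_iff.1 hf)
  set enum : ℕ → ℕ := fun k =>
    if (Nat.Partrec.Code.evaln k.unpair.2 c k.unpair.1).isSome then k.unpair.1 + 1 else 0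
    with henum
  have henum_prim : Primrec enum := by
    have h1 : Primrec fun k : ℕ => Nat.Partrec.Code.evaln k.unpair.2 c k.unpair.1 :=
      Nat.Partrec.Code.primrec_evaln.comp
        (((Primrec.snd.comp Primrec.unpair).pair (Primrec.const c)).pair
          (Primrec.fst.comp Primrec.unpair))
    have h2 : Primrec fun k : ℕ =>
        cond (Nat.Partrec.Code.evaln k.unpair.2 c k.unpair.1).isSome (k.unpair.1 + 1) 0 :=
      Primrec.cond (Primrec.option_isSome.comp h1)
        (Primrec.succ.comp (Primrec.fst.comp Primrec.unpair)) (Primrec.const 0)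
    apply h2.of_eq
    intro k
    rw [henum]
    cases h : (Nat.Partrec.Code.evaln k.unpair.2 c k.unpair.1).isSome <;> simp [h]
  have hmemB : ∀ n, n ∈ B ↔ ∃ k, enum k = n + 1 := by
    intro n
    constructor
    · intro hn
      obtain ⟨x, hx⟩ := Part.dom_iff_mem.1 ((hdom n).1 hn)
      rw [← hc] at hx
      obtain ⟨s, hs⟩ := Nat.Partrec.Code.evaln_complete.1 hx
      refine ⟨Nat.pair n s, ?_⟩
      have : (Nat.Partrec.Code.evaln s c n).isSome = true := by
        rw [Option.isSome_iff_exists]; exact ⟨x, hs⟩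
      simp [henum, Nat.unpair_pair, this]
    · rintro ⟨k, hk⟩
      rw [henum] at hk
      simp only at hk
      split at hk
      · next hs =>
        obtain ⟨x, hx⟩ := Option.isSome_iff_exists.1 hs
        have hxe : x ∈ f k.unpair.1 := by
          rw [← hc]; exact Nat.Partrec.Code.evaln_sound hx
        have : k.unpair.1 = n := by omega
        rw [this] at hxe
        exact (hdom n).2 (Part.dom_iff_mem.2 ⟨x, hxe⟩)
      · omega
  have hgt : ∀ m, ∃ k, m + 1 < enum k := by
    intro m
    obtain ⟨n, hnB, hmn⟩ := hBinf.exists_gt m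
    obtain ⟨k, hk⟩ := (hmemB n).1 hnB
    exact ⟨k, by omega⟩
  set G : ℕ → ℕ := fun m => enum (Nat.find (hgt m)) - 1 with hG
  have hGgt : ∀ m, m < G m := fun m => by
    have := Nat.find_spec (hgt m); simp only [hG]; omega
  have hGB : ∀ m, G m ∈ B := by
    intro m
    have h1 := Nat.find_spec (hgt m)
    apply (hmemB (G m)).2
    exact ⟨Nat.find (hgt m), by simp only [hG]; omega⟩
  have hGcomp : Computable G := by
    have hb : ∀ m k, (m + 1 < enum k) ↔ (decide (m + 1 < enum k) = true) := by simp
    have hcb : Computable₂ fun m k => decide (m + 1 < enum k) :=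
      (Primrec.nat_lt.comp (Primrec.succ.comp Primrec.fst)
        (henum_prim.comp Primrec.snd)).decide.to_comp.to₂
    have hfind : Computable fun m => Nat.find (hgt m) := computable_nat_find hb hcb hgt
    exact Primrec.nat_sub.to_comp.comp (henum_prim.to_comp.comp hfind) (Computable.const 1)
  set seq : ℕ → ℕ := fun n =>
    Nat.rec (motive := fun _ => ℕ) (G 0) (fun _ ih => G ih) n with hseq
  have hseqcomp : Computable seq := by
    have hh : Computable₂ fun (_ : ℕ) (q : ℕ × ℕ) => G q.2 :=
      (hGcomp.comp (Computable.snd.comp Computable.snd)).to₂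
    exact Computable.nat_rec (f := fun n : ℕ => n) (g := fun _ : ℕ => G 0)
      Computable.id (Computable.const (G 0)) hh
  have hseqB : ∀ n, seq n ∈ B := by
    intro n; induction n with
    | zero => exact hGB 0
    | succ n _ => exact hGB (seq n)
  have hseqmono : StrictMono seq := strictMono_nat_of_lt_succ fun n => hGgt (seq n)
  refine ⟨fun i => seq (2 * i), ?_, ?_, ?_, ?_⟩
  · exact hseqcomp.comp
      (Primrec.nat_mul.comp (Primrec.const 2) Primrec.id).to_comp
  · exact hseqmono.comp fun a b h => by omega
  · rintro x ⟨i, rfl⟩; exact hseqB (2 * i)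
  · apply Set.infinite_of_injective_forall_mem (f := fun i : ℕ => seq (2 * i + 1))
    · intro a b h
      simp only at h
      have : 2*a+1 = 2*b+1 := hseqmono.injective h
      omega
    · intro i
      rintro ⟨j, hj⟩
      simp only at hj
      have : 2*j = 2*i+1 := hseqmono.injective hj
      omega

/-! ### Squares and non-squares -/

private def sqP (n : ℕ) : Prop := ∃ k, k * k = n
private def nsqP (n : ℕ) : Prop := ¬ sqP n

private lemma sqP_iff (n : ℕ) : sqP n ↔ Nat.sqrt n * Nat.sqrt n = n :=
  Nat.exists_mul_self n

private lemma nsqP_infinite : (setOf nsqP).Infinite := by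
  apply Set.infinite_of_injective_forall_mem (f := fun k : ℕ => (k + 1) * (k + 1) + 1)
  · intro a b h; simp only at h; nlinarith
  · intro k
    rintro ⟨j, hj⟩
    rcases le_or_gt j (k + 1) with h | h
    · nlinarith
    · nlinarith

private lemma not_nsqP_infinite : (setOf fun n => ¬ nsqP n).Infinite := by
  apply Set.infinite_of_injective_forall_mem (f := fun k : ℕ => k * k)
  · intro a b h; simp only at h; nlinarith
  · intro k; simp only [Set.mem_setOf_eq, nsqP, not_not]; exact ⟨k, rfl⟩

private lemma count_sqP_le (n : ℕ) : Nat.count sqP n ≤ Nat.sqrt n + 1 := by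
  rw [Nat.count_eq_card_filter_range]
  calc ((Finset.range n).filter sqP).card
      ≤ ((Finset.range (Nat.sqrt n + 1)).image fun k => k * k).card := by
        apply Finset.card_le_card
        intro x hx
        simp only [Finset.mem_filter, Finset.mem_range] at hx
        obtain ⟨hxn, k, hk⟩ := hx
        simp only [Finset.mem_image, Finset.mem_range]
        exact ⟨k, by rw [Nat.lt_succ_iff, Nat.le_sqrt]; omega, hk⟩
    _ ≤ (Nat.sqrt n + 1) := (Finset.card_image_le).trans (by simp)

/-! ### The swap permutation -/

private noncomputable def swapFn (p q : ℕ → Prop) : ℕ → ℕ := fun n =>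
  if p n then Nat.nth q (Nat.count p n)
  else Nat.nth (fun m => ¬ q m) (Nat.count (fun m => ¬ p m) n)

private lemma swapFn_leftInv {p q : ℕ → Prop} (hq : (setOf q).Infinite)
    (hq' : (setOf fun n => ¬ q n).Infinite) (n : ℕ) : swapFn q p (swapFn p q n) = n := by
  by_cases hp : p n
  · rw [show swapFn p q n = Nat.nth q (Nat.count p n) by simp [swapFn, hp]]
    simp only [swapFn]
    rw [if_pos (Nat.nth_mem_of_infinite hq (Nat.count p n)),
      Nat.count_nth_of_infinite hq, Nat.nth_count hp]
  · rw [show swapFn p q n = Nat.nth (fun m => ¬ q m) (Nat.count (fun m => ¬ p m) n) by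
      simp [swapFn, hp]]
    simp only [swapFn]
    rw [
      if_neg (Nat.nth_mem_of_infinite hq' (Nat.count (fun m => ¬ p m) n)),
      Nat.count_nth_of_infinite hq', Nat.nth_count (p := fun m => ¬ p m) hp]

/-! ### The limit lemma -/

private lemma tendsto_lower :
    Tendsto (fun n : ℕ => 1 - ((Nat.sqrt n : ℝ) + 1) / n) atTop (nhds 1) := by
  have h0 : Tendsto (fun n : ℕ => ((Nat.sqrt n : ℝ) + 1) / n) atTop (nhds 0) := by
    have hsq : Tendsto (fun n : ℕ => (Nat.sqrt n : ℝ)) atTop atTop := by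
      apply tendsto_natCast_atTop_atTop.comp
      exact tendsto_atTop_atTop.2 fun b => ⟨b * b, fun n hn => Nat.le_sqrt.2 hn⟩
    have h2 : Tendsto (fun n : ℕ => 2 / (Nat.sqrt n : ℝ)) atTop (nhds 0) :=
      tendsto_const_nhds.div_atTop hsq
    apply tendsto_of_tendsto_of_tendsto_of_le_of_le' tendsto_const_nhds h2
    · exact Eventually.of_forall fun n => by positivity
    · filter_upwards [eventually_ge_atTop 1] with n hn
      have hs1 : 1 ≤ Nat.sqrt n := Nat.sqrt_pos.2 hn
      have hss : (Nat.sqrt n : ℝ) * (Nat.sqrt n : ℝ) ≤ (n : ℝ) := by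
        exact_mod_cast Nat.sqrt_le n
      have hnpos : (0 : ℝ) < n := by exact_mod_cast hn
      have hspos : (0 : ℝ) < (Nat.sqrt n : ℝ) := by exact_mod_cast hs1
      rw [div_le_div_iff₀ hnpos hspos]
      have hs1' : (1 : ℝ) ≤ (Nat.sqrt n : ℝ) := by exact_mod_cast hs1
      nlinarith
  have h3 : Tendsto (fun n : ℕ => (1 : ℝ) - ((Nat.sqrt n : ℝ) + 1) / n) atTop
      (nhds (1 - 0)) := Tendsto.sub tendsto_const_nhds h0
  simpa using h3

/-! ### The main theorem -/

theorem non_immune_density_one (A : Set ℕ) (hinf : A.Infinite)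
    (hni : ∃ B : Set ℕ, B ⊆ A ∧ CE B ∧ B.Infinite) :
    ∃ π : ℕ → ℕ, ComputablePerm π ∧ HasDensity (π '' A) 1 := by
  obtain ⟨B, hBA, hce, hBinf⟩ := hni
  obtain ⟨t, htc, htm, htB, htco⟩ := exists_good_enum hce hBinf
  set P : ℕ → Prop := fun n => n ∈ Set.range t with hPdef
  have hPinf : (setOf P).Infinite := Set.infinite_range_of_injective htm.injective
  have hPcinf : (setOf fun n => ¬ P n).Infinite := htco
  -- the characteristic function of `P`
  have hex : ∀ n, ∃ i, n ≤ t i := fun n => ⟨n, htm.le_apply⟩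
  set idx : ℕ → ℕ := fun n => Nat.find (hex n) with hidxdef
  have hidxc : Computable idx := by
    apply computable_nat_find (b := fun n i => decide (n ≤ t i)) (fun n i => by simp)
    exact (Primrec.nat_le.decide.to_comp.comp Computable.fst (htc.comp Computable.snd)).to₂
  set χ : ℕ → Bool := fun n => decide (t (idx n) = n) with hχdef
  have hχc : Computable χ :=
    (Primrec.eq (α := ℕ)).decide.to_comp.comp (htc.comp hidxc) Computable.id
  have hχ : ∀ n, P n ↔ χ n = true := by
    intro n
    simp only [hχdef, decide_eq_true_eq]
    constructor
    · rintro ⟨j, rfl⟩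
      have h1 : idx (t j) ≤ j := Nat.find_min' (hex (t j)) le_rfl
      have h2 : t j ≤ t (idx (t j)) := Nat.find_spec (hex (t j))
      have h3 : t (idx (t j)) ≤ t j := htm.monotone h1
      omega
    · intro h
      exact ⟨idx n, h⟩
  -- not-P
  have hnχc : Computable fun n => !(χ n) := by
    have := Computable.cond hχc (Computable.const false) (Computable.const true)
    apply this.of_eq
    intro n; cases χ n <;> rfl
  have hnχ : ∀ n, (¬ P n) ↔ (!(χ n)) = true := by
    intro n; rw [hχ n]; cases χ n <;> simp
  -- count and nth computability
  have hcntP : Computable (Nat.count P) := computable_count hχ hχc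
  have hnthP : Computable (Nat.nth P) := computable_nth hχ hχc hPinf
  have hcntP' : Computable (Nat.count (fun n => ¬ P n)) := computable_count hnχ hnχc
  have hnthP' : Computable (Nat.nth (fun n => ¬ P n)) := computable_nth hnχ hnχc hPcinf
  -- squares
  set bsq : ℕ → Bool := fun n => decide (Nat.sqrt n * Nat.sqrt n = n) with hbsqdef
  have hbsqc : Computable bsq :=
    (Primrec.eq.comp (Primrec.nat_mul.comp Primrec.nat_sqrt Primrec.nat_sqrt)
      Primrec.id).decide.to_comp
  have hbnsq : ∀ n, nsqP n ↔ (!(bsq n)) = true := by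
    intro n
    simp [hbsqdef, nsqP, sqP_iff n]
  have hbnsqc : Computable fun n => !(bsq n) := by
    have := Computable.cond hbsqc (Computable.const false) (Computable.const true)
    apply this.of_eq
    intro n; cases bsq n <;> rfl
  have hbnnsq : ∀ n, (¬ nsqP n) ↔ bsq n = true := by
    intro n
    simp [hbsqdef, nsqP, sqP_iff n]
  have hnthnsq : Computable (Nat.nth nsqP) := computable_nth hbnsq hbnsqc nsqP_infinite
  have hnthnnsq : Computable (Nat.nth (fun n => ¬ nsqP n)) :=
    computable_nth hbnnsq hbsqc not_nsqP_infinite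
  -- the permutation
  refine ⟨swapFn P nsqP, ⟨?_, ?_⟩, ?_⟩
  · -- bijective
    rw [Function.bijective_iff_has_inverse]
    refine ⟨swapFn nsqP P, ?_, ?_⟩
    · exact fun n => swapFn_leftInv nsqP_infinite not_nsqP_infinite n
    · exact fun n => swapFn_leftInv hPinf hPcinf n
  · -- computable
    have hcomp := Computable.cond hχc (hnthnsq.comp hcntP) (hnthnnsq.comp hcntP')
    apply hcomp.of_eq
    intro n
    by_cases h : P n
    · have hb : χ n = true := (hχ n).1 h
      simp [hb, swapFn, h]
    · have hb : χ n = false := by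
        cases hh : χ n
        · rfl
        · exact absurd ((hχ n).2 hh) h
      simp [hb, swapFn, h]
  · -- density
    have hsub : setOf nsqP ⊆ (swapFn P nsqP) '' A := by
      intro m hm
      refine ⟨Nat.nth P (Nat.count nsqP m), ?_, ?_⟩
      · have hmem : P (Nat.nth P (Nat.count nsqP m)) := Nat.nth_mem_of_infinite hPinf _
        exact hBA (htB hmem)
      · simp only [swapFn]
        rw [if_pos (Nat.nth_mem_of_infinite hPinf _),
          Nat.count_nth_of_infinite hPinf, Nat.nth_count (p := nsqP) hm]
    rw [HasDensity]
    apply tendsto_of_tendsto_of_tendsto_of_le_of_le' tendsto_lower tendsto_const_nhds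
    · -- lower bound, eventually
      filter_upwards [eventually_ge_atTop 1] with n hn
      have hnpos : (0 : ℝ) < n := by exact_mod_cast hn
      set S : Set ℕ := (swapFn P nsqP) '' A with hSdef
      have h1 : ((Finset.range n).filter (fun m => m ∈ setOf nsqP)).card
          ≤ ((Finset.range n).filter (fun m => m ∈ S)).card := by
        apply Finset.card_le_card
        apply Finset.monotone_filter_right
        intro x _ hx
        exact hsub hx
      have h2 : ((Finset.range n).filter (fun m => m ∈ setOf nsqP)).card
          = ((Finset.range n).filter nsqP).card := by
        congr 1
      have h3 : ((Finset.range n).filter sqP).card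
          + ((Finset.range n).filter (fun x => ¬ sqP x)).card = n := by
        rw [Finset.card_filter_add_card_filter_not, Finset.card_range]
      have h4 : ((Finset.range n).filter nsqP).card
          = ((Finset.range n).filter (fun x => ¬ sqP x)).card := by
        congr 1
        exact Finset.filter_congr fun x _ => Iff.rfl
      have h5 : ((Finset.range n).filter sqP).card ≤ Nat.sqrt n + 1 := by
        have := count_sqP_le n
        rwa [Nat.count_eq_card_filter_range] at this
      have hcard : n ≤ ((Finset.range n).filter (fun m => m ∈ S)).card
          + (Nat.sqrt n + 1) := by omega
      have hc1 : ((n : ℝ) - ((Nat.sqrt n : ℝ) + 1))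
          ≤ (((Finset.range n).filter (fun m => m ∈ S)).card : ℝ) := by
        have : (n : ℝ) ≤ (((Finset.range n).filter (fun m => m ∈ S)).card : ℝ)
            + ((Nat.sqrt n : ℝ) + 1) := by exact_mod_cast hcard
        linarith
      have heq : 1 - ((Nat.sqrt n : ℝ) + 1) / n
          = ((n : ℝ) - ((Nat.sqrt n : ℝ) + 1)) / n := by
        field_simp
      rw [heq, partialDensity]
      exact div_le_div_of_nonneg_right hc1 hnpos.le
    · -- upper bound
      apply Eventually.of_forall
      intro n
      rw [partialDensity]
      rcases Nat.eq_zero_or_pos n with rfl | hn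
      · simp
      · have hnpos : (0 : ℝ) < n := by exact_mod_cast hn
        rw [div_le_one hnpos]
        have := Finset.card_filter_le (Finset.range n) (fun m => m ∈ (swapFn P nsqP) '' A)
        exact_mod_cast this.trans_eq (Finset.card_range n)
end

section
/- Any infinite set A ⊆ ℕ with intrinsic lower density 0 is immune; that is, if A is infinite and for every computable permutation π : ℕ → ℕ the lower asymptotic density of π(A) equals 0, then A has no infinite computably enumerable subset. -/
open Filter

open scoped Classical

/-!
### Auxiliary material for `ild0_immune`

Strategy: if `B ⊆ A` were an infinite c.e. subset, we extract from it a computable strictly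
increasing sequence `g` (with gaps, so that the complement of its range is infinite). The
map sending the `m`-th element of `range g` to `2m` and the `m`-th element of the complement
to `2m+1` is a computable permutation `π` with `π '' A ⊇ {2m | m}`, so `π '' A` has lower
density at least `1/2`, contradicting intrinsic lower density `0`.
-/

/-- Every infinite c.e. set contains a computable, strictly increasing (with gaps) sequence. -/
lemma exists_enum {B : Set ℕ} (hce : CE B) (hBinf : B.Infinite) :
    ∃ g : ℕ → ℕ, Computable g ∧ (∀ n, g n ∈ B) ∧ (∀ n, g n + 2 ≤ g (n + 1)) := by
  classical
  obtain ⟨f, hf, hfB⟩ := hce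
  obtain ⟨c, hc⟩ := Nat.Partrec.Code.exists_code.1 (Partrec.nat_iff.1 hf)
  have hmem : ∀ n, n ∈ B ↔ ∃ k, (Nat.Partrec.Code.evaln k c n).isSome = true := by
    intro n
    rw [hfB n, ← hc]
    constructor
    · intro h
      obtain ⟨x, hx⟩ := Part.dom_iff_mem.1 h
      obtain ⟨k, hk⟩ := Nat.Partrec.Code.evaln_complete.1 hx
      exact ⟨k, Option.isSome_iff_exists.2 ⟨x, hk⟩⟩
    · rintro ⟨k, hk⟩
      obtain ⟨x, hx⟩ := Option.isSome_iff_exists.1 hk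
      exact Part.dom_iff_mem.2 ⟨x, Nat.Partrec.Code.evaln_complete.2 ⟨k, hx⟩⟩
  set P : ℕ → ℕ → Bool := fun b m =>
    decide (b < (Nat.unpair m).1) &&
      (Nat.Partrec.Code.evaln (Nat.unpair m).2 c (Nat.unpair m).1).isSome with hPdef
  have h1 : Primrec fun pr : ℕ × ℕ => decide (pr.1 < (Nat.unpair pr.2).1) :=
    PrimrecPred.decide <| PrimrecRel.comp Primrec.nat_lt Primrec.fst
      ((Primrec.fst.comp Primrec.unpair).comp Primrec.snd)
  have h2 : Primrec fun pr : ℕ × ℕ =>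
      (Nat.Partrec.Code.evaln (Nat.unpair pr.2).2 c (Nat.unpair pr.2).1).isSome :=
    Primrec.option_isSome.comp
      (Nat.Partrec.Code.primrec_evaln.comp
        ((((Primrec.snd.comp Primrec.unpair).comp Primrec.snd).pair (Primrec.const c)).pair
          ((Primrec.fst.comp Primrec.unpair).comp Primrec.snd)))
  have hP : Primrec₂ P := Primrec.and.comp h1 h2
  set F : ℕ →. ℕ := fun b =>
    (Nat.rfind (fun m => Part.some (P b m))).map (fun m => (Nat.unpair m).1) with hFdef
  have hFpart : Partrec F :=
    (Partrec.rfind (Computable₂.partrec₂ hP.to_comp)).map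
      (((Primrec.fst.comp Primrec.unpair).comp Primrec.snd).to_comp).to₂
  have hdom : ∀ b, (F b).Dom := by
    intro b
    obtain ⟨n, hnB, hbn⟩ := hBinf.exists_gt b
    obtain ⟨k, hk⟩ := (hmem n).1 hnB
    have hPtrue : P b (Nat.pair n k) = true := by
      simp [hPdef, Nat.unpair_pair, hbn, hk]
    have : (Nat.rfind (fun m => Part.some (P b m))).Dom :=
      Nat.rfind_dom.2 ⟨Nat.pair n k, by simpa using hPtrue, fun {m} _ => trivial⟩
    simpa [hFdef] using this
  set g0 : ℕ → ℕ := fun b => (F b).get (hdom b) with hg0def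
  have hg0comp : Computable g0 := hFpart.of_eq_tot (fun b => Part.get_mem (hdom b))
  have hg0prop : ∀ b, g0 b ∈ B ∧ b < g0 b := by
    intro b
    have hmemF : g0 b ∈ F b := Part.get_mem (hdom b)
    rw [hFdef] at hmemF
    obtain ⟨m, hm, hval⟩ := (Part.mem_map_iff _).1 hmemF
    have hspec := Nat.rfind_spec hm
    have hPm : P b m = true := by simpa using hspec
    simp only [hPdef, Bool.and_eq_true, decide_eq_true_eq] at hPm
    obtain ⟨hblt, hsome⟩ := hPm
    refine ⟨?_, hval ▸ hblt⟩
    · rw [← hval]; exact (hmem _).2 ⟨_, hsome⟩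
  set g : ℕ → ℕ := fun n => Nat.rec (motive := fun _ => ℕ) (g0 0) (fun _ IH => g0 (IH + 1)) n
    with hgdef
  have hgcomp : Computable g := by
    have h := Computable.nat_rec (Computable.id (α := ℕ)) (Computable.const (g0 0))
      ((hg0comp.comp (Computable.succ.comp (Computable.snd.comp Computable.snd))).to₂
        : Computable₂ fun (_ : ℕ) (p : ℕ × ℕ) => g0 (p.2 + 1))
    exact h
  have hgB : ∀ n, g n ∈ B := by
    intro n
    cases n with
    | zero => exact (hg0prop 0).1
    | succ k => exact (hg0prop _).1
  have hgap : ∀ n, g n + 2 ≤ g (n + 1) := by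
    intro n
    have : g n + 1 < g0 (g n + 1) := (hg0prop (g n + 1)).2
    have h2 : g (n + 1) = g0 (g n + 1) := rfl
    omega
  exact ⟨g, hgcomp, hgB, hgap⟩

/-- The permutation determined by a strictly increasing sequence `g`: the `m`-th element of
`Set.range g` goes to `2m`, the `m`-th element of the complement goes to `2m+1`. -/
noncomputable def permOf (g : ℕ → ℕ) (x : ℕ) : ℕ :=
  if x ∈ Set.range g then 2 * Nat.count (· ∈ Set.range g) x
  else 2 * Nat.count (· ∉ Set.range g) x + 1

lemma count_apply_g (g : ℕ → ℕ) (smono : StrictMono g) (m : ℕ) :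
    Nat.count (· ∈ Set.range g) (g m) = m := by
  classical
  rw [Nat.count_eq_card_filter_range]
  have himg : (Finset.range (g m)).filter (fun x => x ∈ Set.range g)
      = (Finset.range m).image g := by
    ext x
    simp only [Finset.mem_filter, Finset.mem_range, Set.mem_range, Finset.mem_image]
    constructor
    · rintro ⟨hx, k, rfl⟩
      exact ⟨k, smono.lt_iff_lt.1 hx, rfl⟩
    · rintro ⟨k, hk, rfl⟩
      exact ⟨smono hk, k, rfl⟩
  rw [himg, Finset.card_image_of_injective _ smono.injective, Finset.card_range]

lemma compl_infinite (g : ℕ → ℕ) (smono : StrictMono g)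
    (gaps : ∀ n, g n + 2 ≤ g (n + 1)) : {x | x ∉ Set.range g}.Infinite := by
  refine Set.infinite_of_injective_forall_mem (f := fun n => g n + 1)
    (fun a b hab => smono.injective (by simpa using hab)) ?_
  intro n
  rintro ⟨k, hk⟩
  change g k = g n + 1 at hk
  rcases le_or_gt k n with h | h
  · have := smono.le_iff_le.2 h
    omega
  · have h2 : n + 1 ≤ k := h
    have := smono.le_iff_le.2 h2
    have := gaps n
    omega

lemma count_add_count_compl (p : ℕ → Prop) (x : ℕ) :
    Nat.count p x + Nat.count (fun y => ¬ p y) x = x := by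
  classical
  rw [Nat.count_eq_card_filter_range, Nat.count_eq_card_filter_range,
    Finset.card_filter_add_card_filter_not, Finset.card_range]

lemma permOf_bijective (g : ℕ → ℕ) (smono : StrictMono g)
    (gaps : ∀ n, g n + 2 ≤ g (n + 1)) : Function.Bijective (permOf g) := by
  classical
  constructor
  · intro x y hxy
    by_cases hx : x ∈ Set.range g <;> by_cases hy : y ∈ Set.range g <;>
      simp only [permOf, hx, hy, if_pos, if_neg, if_true, if_false] at hxy
    · have hcount : Nat.count (· ∈ Set.range g) x = Nat.count (· ∈ Set.range g) y := by omega
      have h1 := Nat.nth_count (p := (· ∈ Set.range g)) hx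
      have h2 := Nat.nth_count (p := (· ∈ Set.range g)) hy
      rw [← h1, ← h2, hcount]
    · omega
    · omega
    · have hcount : Nat.count (· ∉ Set.range g) x = Nat.count (· ∉ Set.range g) y := by omega
      have h1 := Nat.nth_count (p := (· ∉ Set.range g)) hx
      have h2 := Nat.nth_count (p := (· ∉ Set.range g)) hy
      rw [← h1, ← h2, hcount]
  · intro y
    rcases Nat.even_or_odd y with ⟨m, hm⟩ | ⟨m, hm⟩
    · refine ⟨g m, ?_⟩
      have : g m ∈ Set.range g := ⟨m, rfl⟩
      simp only [permOf, this, if_pos, count_apply_g g smono]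
      omega
    · refine ⟨Nat.nth (· ∉ Set.range g) m, ?_⟩
      have hinf := compl_infinite g smono gaps
      have hq : Nat.nth (· ∉ Set.range g) m ∉ Set.range g :=
        Nat.nth_mem_of_infinite hinf m
      have hc : Nat.count (· ∉ Set.range g) (Nat.nth (· ∉ Set.range g) m) = m :=
        Nat.count_nth_of_infinite hinf m
      simp only [permOf, hq, if_neg, if_false, hc]
      omega

lemma permOf_computable (g : ℕ → ℕ) (hg : Computable g) (smono : StrictMono g) :
    Computable (permOf g) := by
  classical
  set χ : ℕ → Bool := fun x =>
    Nat.rec (motive := fun _ => Bool) false (fun m IH => IH || decide (g m = x)) (x + 1)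
    with hχdef
  have hχ : Computable χ := by
    have hh : Computable fun pr : ℕ × (ℕ × Bool) => pr.2.2 || decide (g pr.2.1 = pr.1) :=
      Primrec.or.to_comp.comp (Computable.snd.comp Computable.snd)
        (Primrec.eq.decide.to_comp.comp (hg.comp (Computable.fst.comp Computable.snd)) Computable.fst)
    exact Computable.nat_rec Computable.succ (Computable.const false) hh.to₂
  have hχaux : ∀ (x N : ℕ),
      (Nat.rec (motive := fun _ => Bool) false (fun m IH => IH || decide (g m = x)) N = true)
        ↔ ∃ k < N, g k = x := by
    intro x N
    induction N with
    | zero => simp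
    | succ M ih =>
      simp only [Nat.rec_add_one, Bool.or_eq_true, decide_eq_true_eq, ih]
      constructor
      · rintro (⟨k, hk, rfl⟩ | h)
        · exact ⟨k, by omega, rfl⟩
        · exact ⟨M, by omega, h⟩
      · rintro ⟨k, hk, rfl⟩
        rcases Nat.lt_succ_iff_lt_or_eq.1 hk with h | rfl
        · exact Or.inl ⟨k, h, rfl⟩
        · exact Or.inr rfl
  have hχ_iff : ∀ x, χ x = true ↔ x ∈ Set.range g := by
    intro x
    rw [hχdef]
    simp only []
    rw [hχaux x (x + 1)]
    constructor
    · rintro ⟨k, _, rfl⟩; exact ⟨k, rfl⟩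
    · rintro ⟨k, rfl⟩
      exact ⟨k, Nat.lt_succ_of_le smono.le_apply, rfl⟩
  set cnt : ℕ → ℕ := fun x =>
    Nat.rec (motive := fun _ => ℕ) 0 (fun m IH => IH + cond (χ m) 1 0) x with hcntdef
  have hcnt : Computable cnt := by
    have hh : Computable fun pr : ℕ × (ℕ × ℕ) => pr.2.2 + cond (χ pr.2.1) 1 0 :=
      Primrec.nat_add.to_comp.comp (Computable.snd.comp Computable.snd)
        (Computable.cond (hχ.comp (Computable.fst.comp Computable.snd))
          (Computable.const 1) (Computable.const 0))
    exact Computable.nat_rec Computable.id (Computable.const 0) hh.to₂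
  have hcnt_eq : ∀ x, cnt x = Nat.count (· ∈ Set.range g) x := by
    intro x
    induction x with
    | zero => simp [hcntdef]
    | succ m ih =>
      rw [Nat.count_succ]
      by_cases hm : m ∈ Set.range g
      · have : χ m = true := (hχ_iff m).2 hm
        simp [hcntdef, this, hm] at ih ⊢
        omega
      · have : χ m = false := by
          rcases Bool.eq_false_or_eq_true (χ m) with h | h
          · exact absurd ((hχ_iff m).1 h) hm
          · exact h
        simp [hcntdef, this, hm] at ih ⊢
        omega
  have hfinal : Computable fun x => cond (χ x) (2 * cnt x) (2 * (x - cnt x) + 1) := by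
    refine Computable.cond hχ ?_ ?_
    · exact Primrec.nat_mul.to_comp.comp (Computable.const 2) hcnt
    · exact Primrec.succ.to_comp.comp
        (Primrec.nat_mul.to_comp.comp (Computable.const 2)
          (Primrec.nat_sub.to_comp.comp Computable.id hcnt))
  refine hfinal.of_eq fun x => ?_
  by_cases hx : x ∈ Set.range g
  · have hχx : χ x = true := (hχ_iff x).2 hx
    rw [permOf, if_pos hx, hχx, cond_true, hcnt_eq]
  · have hχx : χ x = false := by
      rcases Bool.eq_false_or_eq_true (χ x) with h | h
      · exact absurd ((hχ_iff x).1 h) hx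
      · exact h
    have hcc := count_add_count_compl (fun y => y ∈ Set.range g) x
    rw [permOf, if_neg hx, hχx, cond_false, hcnt_eq]
    have : Nat.count (· ∉ Set.range g) x = x - Nat.count (· ∈ Set.range g) x := by
      omega
    rw [this]

lemma evens_card (n : ℕ) : ((Finset.range n).filter (fun m => m % 2 = 0)).card = (n + 1) / 2 := by
  induction n with
  | zero => simp
  | succ m ih =>
    rw [Finset.range_add_one, Finset.filter_insert]
    by_cases hm : m % 2 = 0
    · rw [if_pos hm, Finset.card_insert_of_notMem
        (fun h => Finset.notMem_range_self (Finset.mem_filter.1 h).1), ih]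
      omega
    · rw [if_neg hm, ih]
      omega

lemma half_le_partialDensity {S : Set ℕ} (hS : ∀ m, 2 * m ∈ S) {n : ℕ} (hn : 1 ≤ n) :
    (1 / 2 : ℝ) ≤ partialDensity S n := by
  classical
  have hsub : (Finset.range n).filter (fun m => m % 2 = 0) ⊆
      (Finset.range n).filter (fun m => m ∈ S) := by
    intro m hm
    rw [Finset.mem_filter] at hm ⊢
    refine ⟨hm.1, ?_⟩
    have h2 : m = 2 * (m / 2) := by omega
    rw [h2]; exact hS (m / 2)
  have hcard : (n + 1) / 2 ≤ ((Finset.range n).filter (fun m => m ∈ S)).card := by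
    rw [← evens_card n]
    exact Finset.card_le_card hsub
  have hnpos : (0 : ℝ) < n := by exact_mod_cast hn
  rw [partialDensity, le_div_iff₀ hnpos]
  have h1 : (1 / 2 : ℝ) * n = (n : ℝ) / 2 := by ring
  rw [h1]
  have h2 : (n : ℝ) / 2 ≤ (((n + 1) / 2 : ℕ) : ℝ) := by
    have : n ≤ 2 * ((n + 1) / 2) := by omega
    have hcast : (n : ℝ) ≤ 2 * (((n + 1) / 2 : ℕ) : ℝ) := by exact_mod_cast this
    linarith
  have h3 : (((n + 1) / 2 : ℕ) : ℝ) ≤ (((Finset.range n).filter (fun m => m ∈ S)).card : ℝ) := by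
    exact_mod_cast hcard
  linarith

lemma partialDensity_le_one (S : Set ℕ) (n : ℕ) : partialDensity S n ≤ 1 := by
  rcases Nat.eq_zero_or_pos n with rfl | hn
  · simp [partialDensity]
  · rw [partialDensity, div_le_one (by exact_mod_cast hn)]
    exact_mod_cast (Finset.card_filter_le _ _).trans_eq (Finset.card_range n)

theorem ild0_immune (A : Set ℕ) (hinf : A.Infinite)
    (hld : ∀ π : ℕ → ℕ, ComputablePerm π → lowerDensity (π '' A) = 0) :
    ¬∃ B : Set ℕ, B ⊆ A ∧ CE B ∧ B.Infinite := by
  rintro ⟨B, hBA, hBce, hBinf⟩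
  obtain ⟨g, hgc, hgB, hgap⟩ := exists_enum hBce hBinf
  have smono : StrictMono g := strictMono_nat_of_lt_succ (fun n => by have := hgap n; omega)
  have hbij := permOf_bijective g smono hgap
  have hcomp := permOf_computable g hgc smono
  have h0 := hld (permOf g) ⟨hbij, hcomp⟩
  have hev : ∀ m, 2 * m ∈ permOf g '' A := by
    intro m
    refine ⟨g m, hBA (hgB m), ?_⟩
    rw [permOf, if_pos ⟨m, rfl⟩, count_apply_g g smono]
  have hlb : ∀ n, 1 ≤ n → (1 / 2 : ℝ) ≤ partialDensity (permOf g '' A) n :=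
    fun n hn => half_le_partialDensity hev hn
  have hco : IsCoboundedUnder (· ≥ ·) atTop (partialDensity (permOf g '' A)) :=
    isCoboundedUnder_ge_of_eventually_le atTop
      (Eventually.of_forall fun n => partialDensity_le_one _ n)
  have hhalf : (1 / 2 : ℝ) ≤ lowerDensity (permOf g '' A) :=
    le_liminf_of_le hco (eventually_atTop.2 ⟨1, hlb⟩)
  rw [h0] at hhalf
  linarith
end

section
/- Every dense immune set has intrinsic density 0; that is, if S ⊆ ℕ is infinite and its principal function dominates every computable function, then for every computable permutation π : ℕ → ℕ, the image π(S) has asymptotic density 0. -/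
open Filter

open scoped Classical

lemma auxCount (S : Set ℕ)
    (hdom : ∀ f : ℕ → ℕ, Computable f → ∀ᶠ n in atTop, f n < principalFn S n)
    (π : ℕ → ℕ) (hπ : ComputablePerm π) (k : ℕ) :
    ∀ᶠ n in atTop,
      ((Finset.range n).filter (fun m => m ∈ π '' S)).card ≤ n / (k+1) := by
  obtain ⟨hbij, hcomp⟩ := hπ
  have hsurj : ∀ j, ∃ x, π x = j := hbij.2
  set inv : ℕ → ℕ := fun j => Nat.find (hsurj j) with hinv_def
  have hinvspec : ∀ j, π (inv j) = j := fun j => Nat.find_spec (hsurj j)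
  have hinj : Function.Injective inv := by
    intro a b hab
    have := hinvspec a; rw [hab, hinvspec b] at this; exact this.symm
  have hinv : Computable inv := by
    have hp : Computable₂ fun (j x : ℕ) => (decide (π x = j) : Bool) :=
      (Primrec.eq.decide.to_comp).comp (hcomp.comp Computable.snd) Computable.fst
    have h1 : Partrec fun j : ℕ =>
        Nat.rfind (fun x => (Part.some (decide (π x = j)) : Part Bool)) :=
      Partrec.rfind hp.partrec₂
    refine h1.of_eq_tot fun j => ?_
    refine Nat.mem_rfind.2 ?_
    constructor
    · simp [hinvspec j]
    · intro m hm
      simp only [Part.mem_some_iff]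
      simpa using Nat.find_min (hsurj j) hm
  set g : ℕ → ℕ := fun n => Nat.rec 0 (fun y IH => max (inv y) IH) n with hg_def
  have hg : Computable g := by
    have hh : Computable₂ fun (a : ℕ) (p : ℕ × ℕ) => max (inv p.1) p.2 :=
      (Primrec.nat_max.to_comp).comp (hinv.comp (Computable.fst.comp Computable.snd))
        (Computable.snd.comp Computable.snd)
    exact Computable.nat_rec Computable.id (Computable.const 0) hh
  have hgle : ∀ j n, j < n → inv j ≤ g n := by
    intro j n
    induction n with
    | zero => omega
    | succ n ih =>
      intro hj
      rcases Nat.lt_succ_iff_lt_or_eq.mp hj with h | h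
      · exact le_trans (ih h) (le_max_right _ _)
      · subst h; exact le_max_left _ _
  set f : ℕ → ℕ := fun m => g ((k+1)*m) + 1 with hf_def
  have hf : Computable f := by
    have hkm : Computable fun m : ℕ => (k+1)*m :=
      (Primrec.nat_mul.comp (Primrec.const (k+1)) Primrec.id).to_comp
    exact (Primrec.succ.to_comp).comp (hg.comp hkm)
  have key := hdom f hf
  rw [eventually_atTop] at key ⊢
  obtain ⟨M, hM⟩ := key
  refine ⟨(k+1)*M, fun n hn => ?_⟩
  set m : ℕ := n/(k+1) + 1 with hm_def
  have hmM : M ≤ m := by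
    have : M ≤ n / (k+1) := (Nat.le_div_iff_mul_le (by omega)).2 (Nat.mul_comm (k+1) M ▸ hn)
    omega
  have hnkm : n ≤ (k+1)*m := by
    have h1 := Nat.div_add_mod n (k+1)
    have h2 : n % (k+1) < k+1 := Nat.mod_lt _ (by omega)
    calc n = (k+1)*(n/(k+1)) + n%(k+1) := h1.symm
      _ ≤ (k+1)*(n/(k+1)) + (k+1) := by exact Nat.add_le_add_left (le_of_lt h2) _
      _ = (k+1)*m := by rw [hm_def]; ring
  -- count of π '' S below n ≤ count of S below f m
  have hcount : ((Finset.range n).filter (fun x => x ∈ π '' S)).card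
      ≤ ((Finset.range (f m)).filter (fun x => x ∈ S)).card := by
    apply Finset.card_le_card_of_injOn inv
    · intro j hj
      simp only [Finset.mem_coe, Finset.mem_filter, Finset.mem_range] at hj ⊢
      obtain ⟨hjn, x, hxS, hx⟩ := hj
      have hx' : inv j = x := hbij.1 (by rw [hinvspec j, hx])
      refine ⟨?_, by rw [hx']; exact hxS⟩
      have : inv j ≤ g ((k+1)*m) := hgle j _ (lt_of_lt_of_le hjn hnkm)
      simp only [hf_def]; omega
    · exact fun a _ b _ h => hinj h
  -- count of S below f m < m
  have hS : ((Finset.range (f m)).filter (fun x => x ∈ S)).card < m := by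
    by_contra h
    push_neg at h
    have : principalFn S m ≤ f m := Nat.sInf_le h
    exact absurd (hM m hmM) (by omega)
  omega


theorem denseImmune_intrinsicDensity_zero (S : Set ℕ) (hinf : S.Infinite)
    (hdom : ∀ f : ℕ → ℕ, Computable f → ∀ᶠ n in atTop, f n < principalFn S n) :
    ∀ π : ℕ → ℕ, ComputablePerm π → HasDensity (π '' S) 0 := by
  intro π hπ
  rw [HasDensity, Metric.tendsto_atTop]
  intro ε hε
  obtain ⟨k, hk⟩ := exists_nat_one_div_lt hε
  obtain ⟨M, hM⟩ := eventually_atTop.mp (auxCount S hdom π hπ k)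
  refine ⟨max M 1, fun n hn => ?_⟩
  have hn1 : 1 ≤ n := le_trans (le_max_right _ _) hn
  have hb := hM n (le_trans (le_max_left _ _) hn)
  have hn0 : (0:ℝ) < n := by exact_mod_cast hn1
  have hnonneg : 0 ≤ partialDensity (π '' S) n :=
    div_nonneg (Nat.cast_nonneg _) (Nat.cast_nonneg _)
  rw [dist_zero_right, Real.norm_eq_abs, abs_of_nonneg hnonneg]
  calc partialDensity (π '' S) n
      = (((Finset.range n).filter (fun m => m ∈ π '' S)).card : ℝ) / n := rfl
    _ ≤ ((n/(k+1) : ℕ) : ℝ) / n := by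
        apply div_le_div_of_nonneg_right ?_ hn0.le
        exact_mod_cast hb
    _ ≤ ((n:ℝ)/((k:ℝ)+1)) / n := by
        apply div_le_div_of_nonneg_right ?_ hn0.le
        have := Nat.cast_div_le (α := ℝ) (m := n) (n := k+1)
        push_cast at this
        exact this
    _ = 1/((k:ℝ)+1) := by
        rw [div_div, mul_comm, ← div_div, div_self (ne_of_gt hn0)]
    _ < ε := hk
end

section
/- Every hyperimmune set has intrinsic lower density 0; that is, if A ⊆ ℕ is infinite and no total computable function dominates its principal function (i.e., for every total computable f : ℕ → ℕ there are infinitely many n with p_A(n) ≥ f(n)), then for every computable permutation π : ℕ → ℕ, the lower asymptotic density of π(A) equals 0. -/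
open Filter

open scoped Classical

/-- The least preimage function of a computable surjection is computable. -/
lemma computable_natFind_inv {π : ℕ → ℕ} (hc : Computable π) (hs : Function.Surjective π) :
    Computable fun k => Nat.find (hs k) := by
  have hp : Computable₂ fun (k n : ℕ) => (decide (π n = k)) :=
    (Primrec.eq (α := ℕ)).decide.to_comp.comp (hc.comp Computable.snd) Computable.fst
  have h1 : Partrec fun k => Nat.rfind (fun n => Part.some (decide (π n = k))) :=
    Partrec.rfind (hp.partrec₂.comp Computable.fst.partrec Computable.snd.partrec).to₂
  show Partrec _
  refine h1.of_eq fun k => Part.eq_some_iff.2 (Nat.mem_rfind.2 ⟨?_, fun {m} hm => ?_⟩)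
  · exact Part.mem_some_iff.2 (by simp [Nat.find_spec (hs k)])
  · exact Part.mem_some_iff.2 (by simp [Nat.find_min (hs k) hm])

/-- A computable strict upper bound for a computable function on initial segments. -/
lemma exists_computable_sup (πinv : ℕ → ℕ) (hci : Computable πinv) :
    ∃ g : ℕ → ℕ, Computable g ∧ ∀ m k, k < m → πinv k < g m := by
  refine ⟨fun m => Nat.rec 1 (fun y IH => max IH (πinv y + 1)) m, ?_, ?_⟩
  · exact Computable.nat_rec Computable.id (Computable.const 1)
      ((Primrec.nat_max.to_comp.comp (Computable.snd.comp Computable.snd)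
        (Computable.succ.comp (hci.comp (Computable.fst.comp Computable.snd)))).to₂)
  · intro m
    induction m with
    | zero => intro k hk; omega
    | succ m ih =>
      intro k hk
      rcases Nat.lt_succ_iff_lt_or_eq.1 hk with h | h
      · exact lt_of_lt_of_le (ih k h) (le_max_left _ _)
      · subst h; exact lt_of_lt_of_le (Nat.lt_succ_self _) (le_max_right _ _)

theorem hyperimmune_intrinsicLowerDensity_zero (A : Set ℕ) (hinf : A.Infinite)
    (hhi : ∀ f : ℕ → ℕ, Computable f →
      ∃ᶠ n in atTop, f n ≤ principalFn A n) :
    ∀ π : ℕ → ℕ, ComputablePerm π → lowerDensity (π '' A) = 0 := by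
  intro π hπ
  obtain ⟨⟨πinj, πsurj⟩, πcomp⟩ := hπ
  set ρ := partialDensity (π '' A) with hρdef
  have hbd : IsBoundedUnder (· ≤ ·) atTop ρ :=
    isBoundedUnder_of ⟨1, fun n => partialDensity_le_one (π '' A) n⟩
  have hcb : IsCoboundedUnder (· ≥ ·) atTop ρ := hbd.isCoboundedUnder_ge
  have hge : 0 ≤ lowerDensity (π '' A) :=
    le_liminf_of_le hcb (Eventually.of_forall fun n => partialDensity_nonneg (π '' A) n)
  by_contra hne
  have hpos : 0 < lowerDensity (π '' A) := lt_of_le_of_ne hge (Ne.symm hne)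
  set ε : ℝ := lowerDensity (π '' A) / 2 with hεdef
  have hεpos : 0 < ε := by positivity
  have hbdlow : IsBoundedUnder (· ≥ ·) atTop ρ :=
    isBoundedUnder_of ⟨0, fun n => partialDensity_nonneg (π '' A) n⟩
  have hlt : ε < liminf ρ atTop := by
    have := half_lt_self hpos
    exact this
  have hev : ∀ᶠ m in atTop, ε < ρ m := eventually_lt_of_lt_liminf hlt hbdlow
  obtain ⟨N₀, hN₀⟩ := eventually_atTop.1 hev
  obtain ⟨C0, hC0⟩ := exists_nat_ge (1 / ε)
  set C : ℕ := C0 + 1 with hCdef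
  have hC1 : 1 ≤ ε * C := by
    rw [div_le_iff₀ hεpos] at hC0
    have : (C0 : ℝ) ≤ C := by exact_mod_cast Nat.le_succ C0
    nlinarith
  -- the computable inverse of π
  set πinv : ℕ → ℕ := fun k => Nat.find (πsurj k) with hπinvdef
  have hπinvspec : ∀ k, π (πinv k) = k := fun k => Nat.find_spec (πsurj k)
  have hπinvc : Computable πinv := computable_natFind_inv πcomp πsurj
  obtain ⟨g, hgc, hg⟩ := exists_computable_sup πinv hπinvc
  set f : ℕ → ℕ := fun n => g (C * (n + N₀ + 1)) + 1 with hfdef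
  have hfc : Computable f := by
    have h1 : Computable fun n : ℕ => C * (n + N₀ + 1) :=
      (Primrec.nat_mul.comp (Primrec.const C)
        (Primrec.succ.comp ((Primrec.nat_add.comp Primrec.id (Primrec.const N₀))))).to_comp
    exact Computable.succ.comp (hgc.comp h1)
  have hdom : ∀ n, principalFn A n < f n := by
    intro n
    set m : ℕ := C * (n + N₀ + 1) with hmdef
    have hmN : N₀ ≤ m := by
      calc N₀ ≤ n + N₀ + 1 := by omega
      _ ≤ C * (n + N₀ + 1) := Nat.le_mul_of_pos_left _ (by omega)
    have hmpos : 0 < m := by positivity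
    have hρm : ε < ρ m := hN₀ m hmN
    set S := (Finset.range m).filter (fun k => k ∈ π '' A) with hSdef
    have hcard : (n : ℝ) ≤ (S.card : ℝ) := by
      have h1 : ε * m ≤ (S.card : ℝ) := by
        rw [hρdef, partialDensity] at hρm
        rw [← le_div_iff₀ (by exact_mod_cast hmpos)]
        exact hρm.le
      have h2 : (n : ℝ) ≤ ε * m := by
        have : ((n : ℝ) + N₀ + 1) ≤ (ε * C) * ((n : ℝ) + N₀ + 1) := by
          nlinarith [Nat.cast_nonneg (α := ℝ) n, Nat.cast_nonneg (α := ℝ) N₀]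
        have hm' : (m : ℝ) = (C : ℝ) * ((n : ℝ) + N₀ + 1) := by
          rw [hmdef]; push_cast; ring
        rw [hm']; nlinarith
      linarith
    have hcardn : n ≤ S.card := by exact_mod_cast hcard
    -- map S into A ∩ [0, g m) via πinv
    set T := (Finset.range (g m)).filter (fun k => k ∈ A) with hTdef
    have hST : S.card ≤ T.card := by
      apply Finset.card_le_card_of_injOn πinv
      · intro k hk
        rw [hSdef, Finset.mem_coe, Finset.mem_filter, Finset.mem_range] at hk
        obtain ⟨hkm, hkA⟩ := hk
        obtain ⟨a, ha, hak⟩ := hkA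
        have : πinv k = a := πinj (by rw [hπinvspec k, hak])
        rw [hTdef, Finset.mem_coe, Finset.mem_filter, Finset.mem_range]
        exact ⟨hg m k hkm, this ▸ ha⟩
      · intro k1 _ k2 _ h
        have := congrArg π h
        rwa [hπinvspec, hπinvspec] at this
    have hmem : g m ∈ {x | n ≤ ((Finset.range x).filter (fun k => k ∈ A)).card} :=
      le_trans hcardn hST
    have : principalFn A n ≤ g m := Nat.sInf_le hmem
    show principalFn A n < g m + 1
    omega
  obtain ⟨n, hn⟩ := (hhi f hfc).exists
  exact absurd hn (not_le.2 (hdom n))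
end

section
/- Given any total computable injection p : ℕ → ℕ, there is a computable permutation π : ℕ → ℕ such that for every set S ⊆ ℕ, the preimage set π⁻¹(S) = {n : π(n) ∈ S} has the same upper asymptotic density and the same lower asymptotic density as p⁻¹(S) = {n : p(n) ∈ S}. -/
open Filter

open scoped Classical

namespace IDVP



/-- Bool membership test for lists of naturals. -/
def memB (l : List ℕ) (v : ℕ) : Bool := decide (List.idxOf v l < l.length)

lemma memB_iff (l : List ℕ) (v : ℕ) : memB l v = true ↔ v ∈ l := by
  simp [memB, List.idxOf_lt_length_iff]

lemma exists_nonmem (l : List ℕ) : ∃ v, v ∉ l := by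
  obtain ⟨v, hv⟩ := Infinite.exists_notMem_finset l.toFinset
  exact ⟨v, fun h => hv (List.mem_toFinset.2 h)⟩

lemma exists_nonmem_le (l : List ℕ) : ∃ v ≤ l.length, v ∉ l := by
  by_contra h
  push_neg at h
  have hsub : Finset.range (l.length + 1) ⊆ l.toFinset := by
    intro v hv
    exact List.mem_toFinset.2 (h v (Nat.lt_succ_iff.1 (Finset.mem_range.1 hv)))
  have h1 := Finset.card_le_card hsub
  have h2 := l.toFinset_card_le
  simp [Finset.card_range] at h1
  omega

/-- least value not in `l`, computed with a bounded loop. -/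
def freshAux (l : List ℕ) : ℕ :=
  Nat.rec 0 (fun _ j => bif memB l j then j + 1 else j) (l.length + 1)

lemma freshAux_eq (l : List ℕ) : freshAux l = Nat.find (exists_nonmem l) := by
  set F := Nat.find (exists_nonmem l) with hF
  have hFle : F ≤ l.length := by
    obtain ⟨v, hv, hvl⟩ := exists_nonmem_le l
    exact le_trans (Nat.find_min' _ hvl) hv
  have aux : ∀ k, (Nat.rec 0 (fun _ j => bif memB l j then j + 1 else j) k : ℕ) = min F k := by
    intro k
    induction k with
    | zero => simp
    | succ k ih =>
      show (bif memB l (Nat.rec 0 _ k) then _ + 1 else _) = min F (k+1)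
      rw [ih]
      by_cases hk : k < F
      · have hkl : k ∈ l := by
          have := Nat.find_min (exists_nonmem l) hk
          simpa using this
        rw [min_eq_right hk.le]
        rw [(memB_iff l k).2 hkl]
        simp
        omega
      · push_neg at hk
        rw [min_eq_left hk]
        have hFl : F ∉ l := Nat.find_spec (exists_nonmem l)
        have : memB l F = false := by
          rw [← Bool.not_eq_true, memB_iff]; exact hFl
        rw [this]
        simp
        omega
  have := aux (l.length + 1)
  unfold freshAux
  omega

lemma freshAux_not_mem (l : List ℕ) : freshAux l ∉ l := by
  rw [freshAux_eq]; exact Nat.find_spec (exists_nonmem l)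

lemma freshAux_min (l : List ℕ) {w : ℕ} (h : w < freshAux l) : w ∈ l := by
  rw [freshAux_eq] at h
  have := Nat.find_min (exists_nonmem l) h
  simpa using this


/-- list of first `N` values of `p`. -/
def pList (p : ℕ → ℕ) (N : ℕ) : List ℕ := Nat.rec [] (fun k ih => ih ++ [p k]) N

lemma mem_pList {p : ℕ → ℕ} {N v : ℕ} : v ∈ pList p N ↔ ∃ m < N, p m = v := by
  induction N with
  | zero => simp [pList]
  | succ N ih =>
    show v ∈ pList p N ++ [p N] ↔ _
    simp [List.mem_append, ih]
    constructor
    · rintro (⟨m, hm, rfl⟩ | rfl)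
      · exact ⟨m, by omega, rfl⟩
      · exact ⟨N, by omega, rfl⟩
    · rintro ⟨m, hm, rfl⟩
      rcases Nat.lt_or_eq_of_le hm with h | rfl
      · exact Or.inl ⟨m, h, rfl⟩
      · exact Or.inr rfl

/-- is `n` a power of two? -/
def isPatch (n : ℕ) : Bool := Nat.rec false (fun k ih => ih || decide (2^k = n)) (n + 1)

lemma isPatch_aux (n : ℕ) : ∀ B, (Nat.rec false (fun k ih => ih || decide (2^k = n)) B : Bool) = true ↔ ∃ k < B, 2^k = n := by
  intro B
  induction B with
  | zero => simp
  | succ B ih =>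
    show ((Nat.rec false _ B : Bool) || decide (2^B = n)) = true ↔ _
    simp [ih]
    constructor
    · rintro (⟨k, hk, rfl⟩ | rfl)
      · exact ⟨k, by omega, rfl⟩
      · exact ⟨B, by omega, rfl⟩
    · rintro ⟨k, hk, rfl⟩
      rcases Nat.lt_or_eq_of_le hk with h | rfl
      · exact Or.inl ⟨k, h, rfl⟩
      · exact Or.inr rfl

lemma isPatch_iff {n : ℕ} : isPatch n = true ↔ ∃ k, 2^k = n := by
  rw [show isPatch n = Nat.rec false (fun k ih => ih || decide (2^k = n)) (n + 1) from rfl]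
  rw [isPatch_aux n (n+1)]
  constructor
  · rintro ⟨k, _, rfl⟩; exact ⟨k, rfl⟩
  · rintro ⟨k, rfl⟩
    exact ⟨k, by have := Nat.lt_two_pow_self (n := k); omega, rfl⟩

lemma isPatch_pow (k : ℕ) : isPatch (2^k) = true := isPatch_iff.2 ⟨k, rfl⟩

/-- number of patch stages below `n`. -/
def nu (n : ℕ) : ℕ := Nat.rec 0 (fun k ih => bif isPatch k then ih + 1 else ih) n

lemma nu_succ (n : ℕ) : nu (n + 1) = bif isPatch n then nu n + 1 else nu n := rfl

lemma nu_le (n : ℕ) : nu n ≤ n := by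
  induction n with
  | zero => simp [nu]
  | succ n ih =>
    rw [nu_succ]
    cases isPatch n <;> simp <;> omega

lemma nu_eq_card (n : ℕ) :
    nu n = ((Finset.range n).filter (fun k => isPatch k = true)).card := by
  induction n with
  | zero => simp [nu]
  | succ n ih =>
    rw [nu_succ, Finset.range_add_one, Finset.filter_insert]
    cases h : isPatch n <;> simp [h, Finset.card_insert_of_notMem, ih]

lemma nu_bound (n : ℕ) (hn : 1 ≤ n) : nu n ≤ Nat.log 2 n + 1 := by
  rw [nu_eq_card]
  have : ((Finset.range n).filter (fun k => isPatch k = true)).card ≤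
      (Finset.range (Nat.log 2 n + 1)).card := by
    apply Finset.card_le_card_of_injOn (fun m => Nat.log 2 m)
    · intro m hm
      simp only [Finset.mem_coe, Finset.mem_filter, Finset.mem_range] at hm ⊢
      obtain ⟨hmn, hp⟩ := hm
      obtain ⟨k, rfl⟩ := isPatch_iff.1 hp
      rw [Nat.log_pow (by norm_num)]
      have : 2^k ≤ n := hmn.le
      have := (Nat.le_log_iff_pow_le (by norm_num) (by omega)).2 this
      omega
    · intro m hm m' hm' hmm
      simp only [Finset.mem_coe, Finset.mem_filter] at hm hm'
      obtain ⟨k, rfl⟩ := isPatch_iff.1 hm.2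
      obtain ⟨k', rfl⟩ := isPatch_iff.1 hm'.2
      simp only [Nat.log_pow (b := 2) (by norm_num)] at hmm
      rw [hmm]
  simpa using this

/-- index among non-patch positions. -/
def eF (n : ℕ) : ℕ := n - nu n

lemma eF_succ (n : ℕ) : eF (n + 1) = if isPatch n = true then eF n else eF n + 1 := by
  have h1 := nu_le n
  unfold eF
  rw [nu_succ]
  cases isPatch n <;> simp <;> omega

lemma eF_mono : Monotone eF := by
  apply monotone_nat_of_le_succ
  intro n
  rw [eF_succ]
  split <;> omega

lemma eF_lt {m n : ℕ} (hm : isPatch m = false) (hmn : m < n) : eF m < eF n := by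
  have h1 : eF (m + 1) = eF m + 1 := by rw [eF_succ]; simp [hm]
  have h2 : eF (m+1) ≤ eF n := eF_mono (Nat.succ_le_of_lt hmn)
  omega

lemma eF_injOn {m n : ℕ} (hm : isPatch m = false) (hn : isPatch n = false)
    (h : eF m = eF n) : m = n := by
  rcases lt_trichotomy m n with h' | h' | h'
  · exact absurd h (eF_lt hm h').ne
  · exact h'
  · exact absurd h.symm (eF_lt hn h').ne

lemma eF_ivt {t N : ℕ} (h : t < eF N) : ∃ n < N, isPatch n = false ∧ eF n = t := by
  induction N with
  | zero => simp [eF, nu] at h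
  | succ N ih =>
    rw [eF_succ] at h
    by_cases hP : isPatch N = true
    · rw [if_pos hP] at h
      obtain ⟨n, hn, h1, h2⟩ := ih h
      exact ⟨n, by omega, h1, h2⟩
    · rw [if_neg hP] at h
      rcases Nat.lt_succ_iff_lt_or_eq.1 h with h' | h'
      · obtain ⟨n, hn, h1, h2⟩ := ih h'
        exact ⟨n, by omega, h1, h2⟩
      · exact ⟨N, by omega, by simpa using hP, h'.symm⟩

lemma eF_unbounded (t : ℕ) : ∃ N, t < eF N := by
  refine ⟨2^(t+2), ?_⟩
  have h1 : nu (2^(t+2)) ≤ t + 3 := by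
    have := nu_bound (2^(t+2)) (Nat.one_le_two_pow)
    rwa [Nat.log_pow (by norm_num)] at this
  have h2 : t + 1 ≤ 2^t := by
    have := Nat.lt_two_pow_self (n := t)
    omega
  have h3 : 2^(t+2) = 4 * 2^t := by ring
  unfold eF
  omega

lemma eF_surj (t : ℕ) : ∃ n, isPatch n = false ∧ eF n = t := by
  obtain ⟨N, hN⟩ := eF_unbounded t
  obtain ⟨n, _, h1, h2⟩ := eF_ivt hN
  exact ⟨n, h1, h2⟩

section Construction

variable (p : ℕ → ℕ)

/-- one step of the construction: output at time `k`, given history `l`. -/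
def stepF (k : ℕ) (l : List ℕ) : ℕ :=
  bif isPatch k then freshAux (l ++ pList p (2^(k+1)))
  else bif memB l (p (k - nu k)) then freshAux (l ++ pList p (2^(k+1)))
  else p (k - nu k)

/-- history of outputs before time `n`. -/
def histF (n : ℕ) : List ℕ := Nat.rec [] (fun k ih => ih ++ [stepF p k ih]) n

/-- the permutation. -/
def piF (n : ℕ) : ℕ := stepF p n (histF p n)

lemma histF_succ (n : ℕ) : histF p (n+1) = histF p n ++ [piF p n] := rfl

lemma mem_histF {n v : ℕ} : v ∈ histF p n ↔ ∃ m < n, piF p m = v := by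
  induction n with
  | zero => simp [histF]
  | succ n ih =>
    rw [histF_succ, List.mem_append]
    simp only [List.mem_singleton, ih]
    constructor
    · rintro (⟨m, hm, rfl⟩ | rfl)
      · exact ⟨m, by omega, rfl⟩
      · exact ⟨n, by omega, rfl⟩
    · rintro ⟨m, hm, rfl⟩
      rcases Nat.lt_succ_iff_lt_or_eq.1 hm with h | rfl
      · exact Or.inl ⟨m, h, rfl⟩
      · exact Or.inr rfl

lemma piF_not_mem_histF (n : ℕ) : piF p n ∉ histF p n := by
  unfold piF stepF
  cases hP : isPatch n
  · cases hM : memB (histF p n) (p (n - nu n))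
    · simp only [Bool.cond_false]
      intro h
      rw [← memB_iff] at h
      rw [h] at hM
      exact Bool.false_ne_true hM.symm
    · simp only [Bool.cond_false, Bool.cond_true]
      intro h
      exact freshAux_not_mem _ (List.mem_append_left _ h)
  · simp only [Bool.cond_true]
    intro h
    exact freshAux_not_mem _ (List.mem_append_left _ h)

lemma piF_inj : Function.Injective (piF p) := by
  intro m n h
  rcases lt_trichotomy m n with h' | h' | h'
  · exact absurd (mem_histF p |>.2 ⟨m, h', h⟩) (piF_not_mem_histF p n)
  · exact h'
  · exact absurd (mem_histF p |>.2 ⟨n, h', h.symm⟩) (piF_not_mem_histF p m)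

lemma piF_patch {n : ℕ} (h : isPatch n = true) :
    piF p n = freshAux (histF p n ++ pList p (2^(n+1))) := by
  unfold piF stepF; rw [h]; rfl

lemma piF_nonpatch_notmem {n : ℕ} (h : isPatch n = false) (h2 : p (eF n) ∉ histF p n) :
    piF p n = p (eF n) := by
  have hM : memB (histF p n) (p (n - nu n)) = false := by
    rw [← Bool.not_eq_true, memB_iff]; exact h2
  unfold piF stepF; rw [h, hM]; rfl

lemma piF_nonpatch_mem {n : ℕ} (h : isPatch n = false) (h2 : p (eF n) ∈ histF p n) :
    piF p n = freshAux (histF p n ++ pList p (2^(n+1))) := by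
  have hM : memB (histF p n) (p (n - nu n)) = true := (memB_iff _ _).2 h2
  unfold piF stepF; rw [h, hM]; rfl

/-- Either `π n` equals `p (eF n)` at a non-patch stage, or it is a fresh value. -/
lemma piF_cases (n : ℕ) :
    (isPatch n = false ∧ piF p n = p (eF n)) ∨
      piF p n = freshAux (histF p n ++ pList p (2^(n+1))) := by
  cases hP : isPatch n
  · by_cases h2 : p (eF n) ∈ histF p n
    · exact Or.inr (piF_nonpatch_mem p hP h2)
    · exact Or.inl ⟨rfl, piF_nonpatch_notmem p hP h2⟩
  · exact Or.inr (piF_patch p hP)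

lemma hist_mem_mono {m n v : ℕ} (h : m ≤ n) (hv : v ∈ histF p m) : v ∈ histF p n := by
  rw [mem_histF] at hv ⊢
  obtain ⟨j, hj, hjv⟩ := hv
  exact ⟨j, by omega, hjv⟩

/-- all values below `v` that are in the range appear in some common history. -/
lemma bounded_hist (v : ℕ) (H : ∀ w < v, ∃ n, piF p n = w) :
    ∃ N, ∀ w < v, w ∈ histF p N := by
  induction v with
  | zero => exact ⟨0, by omega⟩
  | succ v ih =>
    obtain ⟨N, hN⟩ := ih (fun w hw => H w (by omega))
    obtain ⟨n, hn⟩ := H v (by omega)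
    refine ⟨max N (n+1), fun w hw => ?_⟩
    rcases Nat.lt_succ_iff_lt_or_eq.1 hw with h | rfl
    · exact hist_mem_mono p (le_max_left _ _) (hN w h)
    · exact hist_mem_mono p (le_max_right _ _)
        ((mem_histF p).2 ⟨n, Nat.lt_succ_self n, hn⟩)

lemma piF_surj (hpinj : Function.Injective p) : Function.Surjective (piF p) := by
  intro v
  induction v using Nat.strong_induction_on with
  | _ v IH =>
    by_cases hv : ∃ n, piF p n = v
    · exact hv
    push_neg at hv
    exfalso
    have hnothist : ∀ N, v ∉ histF p N := by
      intro N hN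
      obtain ⟨m, _, hm⟩ := (mem_histF p).1 hN
      exact hv m hm
    by_cases hrange : ∃ t, p t = v
    · -- v is a p-value; it gets placed at the unique non-patch time with eF n = t
      obtain ⟨t, ht⟩ := hrange
      obtain ⟨n, hn1, hn2⟩ := eF_surj t
      by_cases h2 : p (eF n) ∈ histF p n
      · rw [hn2, ht] at h2
        exact hnothist n h2
      · have := piF_nonpatch_notmem p hn1 h2
        rw [hn2, ht] at this
        exact hv n this
    · -- v is not a p-value; it gets placed at a large patch stage
      push_neg at hrange
      obtain ⟨N, hNmem⟩ := bounded_hist p v (fun w hw => IH w hw)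
      set n := 2^(max N 1) with hn
      have hP : isPatch n = true := isPatch_pow _
      have hNn : N ≤ n := le_trans (le_max_left N 1) (Nat.le_of_lt Nat.lt_two_pow_self)
      have hpi : piF p n = freshAux (histF p n ++ pList p (2^(n+1))) := piF_patch p hP
      set A := histF p n ++ pList p (2^(n+1)) with hA
      have hvA : v ∉ A := by
        intro h
        rcases List.mem_append.1 h with h | h
        · exact hnothist n h
        · obtain ⟨m, _, hm⟩ := mem_pList.1 h
          exact hrange m hm
      have hlow : ∀ w < v, w ∈ A := by
        intro w hw
        exact List.mem_append_left _ (hist_mem_mono p hNn (hNmem w hw))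
      have : freshAux A = v := by
        have h1 : ¬ freshAux A < v := fun h => freshAux_not_mem A (hlow _ h)
        have h2 : ¬ v < freshAux A := fun h => hvA (freshAux_min A h)
        omega
      rw [this] at hpi
      exact hv n hpi

end Construction
section Counting

variable (p : ℕ → ℕ) (hpinj : Function.Injective p)

/-- upper bound: π-count ≤ p-count + 2 log N + 1. -/
lemma count_le_one (hpinj : Function.Injective p) (S : Set ℕ) (N : ℕ) :
    ((Finset.range N).filter (fun n => piF p n ∈ S)).card ≤
      ((Finset.range N).filter (fun t => p t ∈ S)).card + (2 * Nat.log 2 N + 1) := by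
  classical
  rcases Nat.eq_zero_or_pos N with rfl | hN
  · simp
  set A := (Finset.range N).filter (fun n => piF p n ∈ S) with hA
  set Agood := (Finset.range N).filter
    (fun n => piF p n ∈ S ∧ isPatch n = false ∧ piF p n = p (eF n)) with hAgood
  set Bad := (Finset.range N).filter
    (fun n => ¬(isPatch n = false ∧ piF p n = p (eF n))) with hBad
  have hsub : A ⊆ Agood ∪ Bad := by
    intro n hn
    simp only [hA, Finset.mem_filter, Finset.mem_range] at hn
    by_cases h : isPatch n = false ∧ piF p n = p (eF n)
    · refine Finset.mem_union_left _ ?_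
      simp only [hAgood, Finset.mem_filter, Finset.mem_range]
      exact ⟨hn.1, hn.2, h.1, h.2⟩
    · exact Finset.mem_union_right _ (by simp only [hBad, Finset.mem_filter, Finset.mem_range]; exact ⟨hn.1, h⟩)
  have h1 : A.card ≤ Agood.card + Bad.card :=
    le_trans (Finset.card_le_card hsub) (Finset.card_union_le _ _)
  -- good part
  have h2 : Agood.card ≤ ((Finset.range N).filter (fun t => p t ∈ S)).card := by
    apply Finset.card_le_card_of_injOn eF
    · intro n hn
      simp only [Finset.mem_coe, hAgood, Finset.mem_filter, Finset.mem_range] at hn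
      simp only [Finset.mem_coe, Finset.mem_filter, Finset.mem_range]
      constructor
      · have : eF n ≤ n := Nat.sub_le _ _
        omega
      · rw [← hn.2.2.2]; exact hn.2.1
    · intro m hm m' hm' h
      simp only [Finset.mem_coe, hAgood, Finset.mem_filter] at hm hm'
      exact eF_injOn hm.2.2.1 hm'.2.2.1 h
  -- bad part: patches plus collisions
  set Patch := (Finset.range N).filter (fun n => isPatch n = true) with hPatch
  set Coll := (Finset.range N).filter
    (fun n => isPatch n = false ∧ piF p n ≠ p (eF n)) with hColl
  have h3 : Bad ⊆ Patch ∪ Coll := by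
    intro n hn
    simp only [hBad, Finset.mem_filter, Finset.mem_range] at hn
    cases hP : isPatch n
    · refine Finset.mem_union_right _ ?_
      simp only [hColl, Finset.mem_filter, Finset.mem_range]
      refine ⟨hn.1, hP, ?_⟩
      intro h
      exact hn.2 ⟨hP, h⟩
    · exact Finset.mem_union_left _ (by simp [hPatch, Finset.mem_filter, hn.1, hP])
  have h4 : Patch.card ≤ Nat.log 2 N + 1 := by
    rw [hPatch, ← nu_eq_card]
    exact nu_bound N hN
  have h5 : Coll.card ≤ Nat.log 2 N := by
    have hcard : Coll.card ≤ (Finset.range (Nat.log 2 N)).card := by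
      apply Finset.card_le_card_of_injOn (fun n => sInf {m | piF p m = p (eF n)})
      · intro n hn
        simp only [Finset.mem_coe, hColl, Finset.mem_filter, Finset.mem_range] at hn
        obtain ⟨hnN, hP, hne⟩ := hn
        -- p (eF n) is in the history
        have hmem : p (eF n) ∈ histF p n := by
          by_contra h
          exact hne (piF_nonpatch_notmem p hP h)
        obtain ⟨m, hm, hmv⟩ := (mem_histF p).1 hmem
        have hne' : {m | piF p m = p (eF n)}.Nonempty := ⟨m, hmv⟩
        set m₀ := sInf {m | piF p m = p (eF n)} with hm₀
        have hm₀mem : piF p m₀ = p (eF n) := Nat.sInf_mem hne'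
        have hm₀le : m₀ ≤ m := Nat.sInf_le hmv
        have hm₀n : m₀ < n := lt_of_le_of_lt hm₀le hm
        -- m₀ must be a fresh event
        rcases piF_cases p m₀ with ⟨hPm, hpm⟩ | hfresh
        · exfalso
          rw [hpm] at hm₀mem
          have := hpinj hm₀mem
          have := eF_injOn hPm hP this
          omega
        · -- fresh avoids p-values with small index
          have hnot : piF p m₀ ∉ pList p (2^(m₀+1)) := fun h =>
            freshAux_not_mem _ (hfresh ▸ List.mem_append_right _ h)
          have hgt : 2^(m₀+1) ≤ eF n := by
            by_contra h
            push_neg at h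
            exact hnot (hfresh ▸ (hfresh ▸ mem_pList.2 ⟨eF n, h, hm₀mem.symm⟩))
          have hlt : 2^(m₀+1) ≤ N := le_trans hgt (le_trans (Nat.sub_le _ _) hnN.le)
          have := (Nat.le_log_iff_pow_le (by norm_num) (by omega)).2 hlt
          simp only [Finset.mem_coe, Finset.mem_range]
          omega
      · intro n hn n' hn' h
        simp only [Finset.mem_coe, hColl, Finset.mem_filter] at hn hn'
        -- both have nonempty parent sets with the same inf
        have hmemn : p (eF n) ∈ histF p n := by
          by_contra hh; exact hn.2.2 (piF_nonpatch_notmem p hn.2.1 hh)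
        have hmemn' : p (eF n') ∈ histF p n' := by
          by_contra hh; exact hn'.2.2 (piF_nonpatch_notmem p hn'.2.1 hh)
        obtain ⟨m1, _, hm1⟩ := (mem_histF p).1 hmemn
        obtain ⟨m2, _, hm2⟩ := (mem_histF p).1 hmemn'
        have hne1 : {m | piF p m = p (eF n)}.Nonempty := ⟨m1, hm1⟩
        have hne2 : {m | piF p m = p (eF n')}.Nonempty := ⟨m2, hm2⟩
        have e1 := Nat.sInf_mem hne1
        have e2 := Nat.sInf_mem hne2
        simp only [Set.mem_setOf_eq] at e1 e2
        have h' : sInf {m | piF p m = p (eF n)} = sInf {m | piF p m = p (eF n')} := h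
        rw [h'] at e1
        rw [e1] at e2
        exact eF_injOn hn.2.1 hn'.2.1 (hpinj e2)
    simpa using hcard
  have := Finset.card_le_card h3
  have := Finset.card_union_le Patch Coll
  omega

/-- lower bound: p-count ≤ π-count + log N + 1. -/
lemma count_le_two (hpinj : Function.Injective p) (S : Set ℕ) (N : ℕ) :
    ((Finset.range N).filter (fun t => p t ∈ S)).card ≤
      ((Finset.range N).filter (fun n => piF p n ∈ S)).card + (Nat.log 2 N + 1) := by
  classical
  rcases Nat.eq_zero_or_pos N with rfl | hN
  · simp
  set B := (Finset.range N).filter (fun t => p t ∈ S) with hB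
  set B1 := (Finset.range N).filter (fun t => p t ∈ S ∧ t < eF N) with hB1
  set B2 := (Finset.range N).filter (fun t => eF N ≤ t) with hB2
  have hsub : B ⊆ B1 ∪ B2 := by
    intro t ht
    simp only [hB, Finset.mem_filter, Finset.mem_range] at ht
    by_cases h : t < eF N
    · exact Finset.mem_union_left _ (by simp only [hB1, Finset.mem_filter, Finset.mem_range]; exact ⟨ht.1, ht.2, h⟩)
    · exact Finset.mem_union_right _ (by simp only [hB2, Finset.mem_filter, Finset.mem_range]; exact ⟨ht.1, by omega⟩)
  have h2 : B2.card ≤ Nat.log 2 N + 1 := by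
    have : B2 ⊆ Finset.Ico (eF N) N := by
      intro t ht
      simp only [hB2, Finset.mem_filter, Finset.mem_range] at ht
      exact Finset.mem_Ico.2 ⟨ht.2, ht.1⟩
    have hc := Finset.card_le_card this
    rw [Nat.card_Ico] at hc
    have : N - eF N = nu N := by
      have := nu_le N
      unfold eF
      omega
    rw [this] at hc
    exact le_trans hc (nu_bound N hN)
  have h1 : B1.card ≤ ((Finset.range N).filter (fun n => piF p n ∈ S)).card := by
    apply Finset.card_le_card_of_injOn (fun t => sInf {j | j < N ∧ piF p j = p t})
    · intro t ht
      simp only [Finset.mem_coe, hB1, Finset.mem_filter, Finset.mem_range] at ht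
      obtain ⟨htN, htS, htE⟩ := ht
      obtain ⟨n, hnN, hnP, hnE⟩ := eF_ivt htE
      have hne : {j | j < N ∧ piF p j = p t}.Nonempty := by
        by_cases hmem : p (eF n) ∈ histF p n
        · obtain ⟨m, hm, hmv⟩ := (mem_histF p).1 hmem
          exact ⟨m, by omega, by rw [hmv, hnE]⟩
        · exact ⟨n, hnN, by rw [piF_nonpatch_notmem p hnP hmem, hnE]⟩
      obtain ⟨hjN, hjv⟩ := Nat.sInf_mem hne
      simp only [Finset.mem_coe, Finset.mem_filter, Finset.mem_range]
      exact ⟨hjN, by rw [hjv]; exact htS⟩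
    · intro t ht t' ht' h
      simp only [Finset.mem_coe, hB1, Finset.mem_filter, Finset.mem_range] at ht ht'
      -- recover the defining property at the common inf
      have hne : {j | j < N ∧ piF p j = p t}.Nonempty := by
        obtain ⟨n, hnN, hnP, hnE⟩ := eF_ivt ht.2.2
        by_cases hmem : p (eF n) ∈ histF p n
        · obtain ⟨m, hm, hmv⟩ := (mem_histF p).1 hmem
          exact ⟨m, by omega, by rw [hmv, hnE]⟩
        · exact ⟨n, hnN, by rw [piF_nonpatch_notmem p hnP hmem, hnE]⟩
      have hne' : {j | j < N ∧ piF p j = p t'}.Nonempty := by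
        obtain ⟨n, hnN, hnP, hnE⟩ := eF_ivt ht'.2.2
        by_cases hmem : p (eF n) ∈ histF p n
        · obtain ⟨m, hm, hmv⟩ := (mem_histF p).1 hmem
          exact ⟨m, by omega, by rw [hmv, hnE]⟩
        · exact ⟨n, hnN, by rw [piF_nonpatch_notmem p hnP hmem, hnE]⟩
      have e1 := (Nat.sInf_mem hne).2
      have e2 := (Nat.sInf_mem hne').2
      have h' : sInf {j | j < N ∧ piF p j = p t} = sInf {j | j < N ∧ piF p j = p t'} := h
      rw [h'] at e1
      rw [e1] at e2
      exact hpinj e2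
  calc B.card ≤ (B1 ∪ B2).card := Finset.card_le_card hsub
    _ ≤ B1.card + B2.card := Finset.card_union_le _ _
    _ ≤ _ := by omega

end Counting
section Analytic

open Real in
lemma log_div_tendsto_zero :
    Tendsto (fun N : ℕ => ((2 * Nat.log 2 N + 1 : ℕ) : ℝ) / N) atTop (nhds 0) := by
  have h1 : Tendsto (fun x : ℝ => Real.log x / x) atTop (nhds 0) := by
    have := Real.tendsto_pow_log_div_mul_add_atTop 1 0 1 one_ne_zero
    simpa using this
  have h2 : Tendsto (fun N : ℕ => Real.log N / N) atTop (nhds 0) :=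
    h1.comp tendsto_natCast_atTop_atTop
  have h3 : Tendsto (fun N : ℕ => (2 / Real.log 2) * (Real.log N / N) + 1 / N) atTop (nhds 0) := by
    have h4 := (h2.const_mul (2 / Real.log 2)).add tendsto_one_div_atTop_nhds_zero_nat
    simpa using h4
  apply tendsto_of_tendsto_of_tendsto_of_le_of_le' tendsto_const_nhds h3
  · filter_upwards with N
    positivity
  · filter_upwards [eventually_ge_atTop 1] with N hN
    have hN0 : (0 : ℝ) < N := by exact_mod_cast hN
    have hlog : (Nat.log 2 N : ℝ) ≤ Real.log N / Real.log 2 := by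
      have := Real.natLog_le_logb N 2
      rwa [Real.logb] at this
    have hlog2 : (0:ℝ) < Real.log 2 := Real.log_pos (by norm_num)
    have e : 2 / Real.log 2 * (Real.log N / N) + 1 / N
        = (2 * (Real.log N / Real.log 2) + 1) / N := by
      field_simp
    rw [e]
    gcongr
    push_cast
    linarith [hlog]

lemma limsup_liminf_eq_of_tendsto_sub {u v : ℕ → ℝ}
    (hu0 : ∀ n, 0 ≤ u n) (hu1 : ∀ n, u n ≤ 1)
    (hv0 : ∀ n, 0 ≤ v n) (hv1 : ∀ n, v n ≤ 1)
    (h : Tendsto (fun n => u n - v n) atTop (nhds 0)) :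
    limsup u atTop = limsup v atTop ∧ liminf u atTop = liminf v atTop := by
  have hbu : IsBoundedUnder (· ≤ ·) atTop u := ⟨1, eventually_map.2 (Eventually.of_forall hu1)⟩
  have hbv : IsBoundedUnder (· ≤ ·) atTop v := ⟨1, eventually_map.2 (Eventually.of_forall hv1)⟩
  have hbu' : IsBoundedUnder (· ≥ ·) atTop u := ⟨0, eventually_map.2 (Eventually.of_forall hu0)⟩
  have hbv' : IsBoundedUnder (· ≥ ·) atTop v := ⟨0, eventually_map.2 (Eventually.of_forall hv0)⟩
  have hcu : IsCoboundedUnder (· ≤ ·) atTop u := hbu'.isCoboundedUnder_le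
  have hcv : IsCoboundedUnder (· ≤ ·) atTop v := hbv'.isCoboundedUnder_le
  have hcu' : IsCoboundedUnder (· ≥ ·) atTop u := hbu.isCoboundedUnder_ge
  have hcv' : IsCoboundedUnder (· ≥ ·) atTop v := hbv.isCoboundedUnder_ge
  have key : ∀ ε : ℝ, 0 < ε → (∀ᶠ n in atTop, u n ≤ v n + ε) ∧ ∀ᶠ n in atTop, v n ≤ u n + ε := by
    intro ε hε
    have h2 := Metric.tendsto_nhds.mp h ε hε
    constructor
    · filter_upwards [h2] with n hn
      rw [Real.dist_eq, sub_zero] at hn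
      have := abs_lt.1 hn
      linarith [this.1, this.2]
    · filter_upwards [h2] with n hn
      rw [Real.dist_eq, sub_zero] at hn
      have := abs_lt.1 hn
      linarith [this.1, this.2]
  constructor
  · apply le_antisymm
    · apply le_of_forall_pos_le_add
      intro ε hε
      calc limsup u atTop ≤ limsup (fun n => v n + ε) atTop :=
            limsup_le_limsup ((key ε hε).1) hcu ⟨1 + ε, eventually_map.2
              (Eventually.of_forall (fun n => by have := hv1 n; linarith))⟩
        _ = limsup v atTop + ε := limsup_add_const atTop v ε hbv hcv
    · apply le_of_forall_pos_le_add
      intro ε hε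
      calc limsup v atTop ≤ limsup (fun n => u n + ε) atTop :=
            limsup_le_limsup ((key ε hε).2) hcv ⟨1 + ε, eventually_map.2
              (Eventually.of_forall (fun n => by have := hu1 n; linarith))⟩
        _ = limsup u atTop + ε := limsup_add_const atTop u ε hbu hcu
  · apply le_antisymm
    · apply le_of_forall_pos_le_add
      intro ε hε
      calc liminf u atTop ≤ liminf (fun n => v n + ε) atTop :=
            liminf_le_liminf ((key ε hε).1) hbu'
              (IsBoundedUnder.isCoboundedUnder_ge ⟨1 + ε, eventually_map.2
                (Eventually.of_forall (fun n => by have := hv1 n; linarith))⟩)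
        _ = liminf v atTop + ε := liminf_add_const atTop v ε hcv' hbv'
    · apply le_of_forall_pos_le_add
      intro ε hε
      calc liminf v atTop ≤ liminf (fun n => u n + ε) atTop :=
            liminf_le_liminf ((key ε hε).2) hbv'
              (IsBoundedUnder.isCoboundedUnder_ge ⟨1 + ε, eventually_map.2
                (Eventually.of_forall (fun n => by have := hu1 n; linarith))⟩)
        _ = liminf u atTop + ε := liminf_add_const atTop u ε hcu' hbu'

end Analytic
section Computability

lemma tpow_primrec : Primrec (fun k : ℕ => 2^k) := by
  have h : Primrec (fun k : ℕ => Nat.rec (motive := fun _ => ℕ) 1 (fun _ ih => 2 * ih) k) :=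
    Primrec.nat_rec' Primrec.id (Primrec.const 1)
      ((Primrec.nat_mul.comp (Primrec.const 2) (Primrec.snd.comp Primrec.snd)).to₂)
  refine h.of_eq fun k => ?_
  induction k with
  | zero => rfl
  | succ k ih =>
    show 2 * (Nat.rec (motive := fun _ => ℕ) 1 (fun _ ih => 2 * ih) k) = 2^(k+1)
    rw [ih, pow_succ]
    ring

lemma memB_primrec : Primrec₂ memB :=
  PrimrecPred.decide (PrimrecRel.comp Primrec.nat_lt
    (Primrec.list_idxOf.comp Primrec.snd Primrec.fst)
    (Primrec.list_length.comp Primrec.fst))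

lemma freshAux_primrec : Primrec freshAux := by
  have h : Primrec (fun l : List ℕ =>
      Nat.rec (motive := fun _ => ℕ) 0
        (fun _ j => bif memB l j then j + 1 else j) (l.length + 1)) :=
    Primrec.nat_rec' (Primrec.succ.comp Primrec.list_length) (Primrec.const 0)
      ((Primrec.cond
        (memB_primrec.comp Primrec.fst (Primrec.snd.comp Primrec.snd))
        (Primrec.succ.comp (Primrec.snd.comp Primrec.snd))
        (Primrec.snd.comp Primrec.snd)).to₂)
  exact h.of_eq fun l => rfl

lemma isPatch_primrec : Primrec isPatch := by
  have h : Primrec (fun n : ℕ =>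
      Nat.rec (motive := fun _ => Bool) false
        (fun k ih => ih || decide (2^k = n)) (n + 1)) :=
    Primrec.nat_rec' Primrec.succ (Primrec.const false)
      (((Primrec.dom_bool₂ (· || ·)).comp
        (Primrec.snd.comp Primrec.snd)
        (PrimrecPred.decide (PrimrecRel.comp Primrec.eq
          (tpow_primrec.comp (Primrec.fst.comp Primrec.snd)) Primrec.fst))).to₂)
  exact h.of_eq fun n => rfl

lemma nu_primrec : Primrec nu := by
  have h : Primrec (fun n : ℕ =>
      Nat.rec (motive := fun _ => ℕ) 0
        (fun k ih => bif isPatch k then ih + 1 else ih) n) :=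
    Primrec.nat_rec' Primrec.id (Primrec.const 0)
      ((Primrec.cond
        (isPatch_primrec.comp (Primrec.fst.comp Primrec.snd))
        (Primrec.succ.comp (Primrec.snd.comp Primrec.snd))
        (Primrec.snd.comp Primrec.snd)).to₂)
  exact h.of_eq fun n => rfl

variable {p : ℕ → ℕ}

lemma pList_computable (hpc : Computable p) : Computable (pList p) := by
  have h : Computable (fun N : ℕ =>
      Nat.rec (motive := fun _ => List ℕ) [] (fun y IH => IH ++ [p y]) N) :=
    Computable.nat_rec Computable.id (Computable.const [])
      ((Computable.list_concat.comp
        (Computable.snd.comp Computable.snd)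
        (hpc.comp (Computable.fst.comp Computable.snd))).to₂)
  exact h.of_eq fun N => rfl

lemma stepF_computable (hpc : Computable p) : Computable₂ (stepF p) := by
  have hfresh : Computable (fun q : ℕ × List ℕ =>
      freshAux (q.2 ++ pList p (2^(q.1+1)))) :=
    freshAux_primrec.to_comp.comp
      (Computable.list_append.comp Computable.snd
        ((pList_computable hpc).comp
          ((tpow_primrec.comp Primrec.succ).to_comp.comp Computable.fst)))
  have hpval : Computable (fun q : ℕ × List ℕ => p (q.1 - nu q.1)) :=
    hpc.comp ((Primrec.nat_sub.comp Primrec.id nu_primrec).to_comp.comp Computable.fst)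
  have hmem : Computable (fun q : ℕ × List ℕ => memB q.2 (p (q.1 - nu q.1))) :=
    memB_primrec.to_comp.comp Computable.snd hpval
  have h : Computable (fun q : ℕ × List ℕ =>
      bif isPatch q.1 then freshAux (q.2 ++ pList p (2^(q.1+1)))
      else bif memB q.2 (p (q.1 - nu q.1)) then freshAux (q.2 ++ pList p (2^(q.1+1)))
      else p (q.1 - nu q.1)) :=
    Computable.cond (isPatch_primrec.to_comp.comp Computable.fst) hfresh
      (Computable.cond hmem hfresh hpval)
  exact h.to₂

lemma histF_computable (hpc : Computable p) : Computable (histF p) := by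
  have h : Computable (fun n : ℕ =>
      Nat.rec (motive := fun _ => List ℕ) [] (fun y IH => IH ++ [stepF p y IH]) n) :=
    Computable.nat_rec Computable.id (Computable.const [])
      ((Computable.list_concat.comp
        (Computable.snd.comp Computable.snd)
        ((stepF_computable hpc).comp
          (Computable.fst.comp Computable.snd)
          (Computable.snd.comp Computable.snd))).to₂)
  exact h.of_eq fun n => rfl

lemma piF_computable (hpc : Computable p) : Computable (piF p) :=
  ((stepF_computable hpc).comp Computable.id (histF_computable hpc)).of_eq fun n => rfl

end Computability
end IDVP

open IDVP in
theorem injection_density_via_permutation (p : ℕ → ℕ)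
    (hpinj : Function.Injective p) (hpcomp : Computable p) :
    ∃ π : ℕ → ℕ, ComputablePerm π ∧
      ∀ S : Set ℕ,
        upperDensity (π ⁻¹' S) = upperDensity (p ⁻¹' S) ∧
        lowerDensity (π ⁻¹' S) = lowerDensity (p ⁻¹' S) := by
  refine ⟨piF p, ⟨⟨piF_inj p, piF_surj p hpinj⟩, piF_computable hpcomp⟩, ?_⟩
  intro S
  have hpd : ∀ (f : ℕ → ℕ) (N : ℕ), partialDensity (f ⁻¹' S) N
      = (((Finset.range N).filter (fun n => f n ∈ S)).card : ℝ) / N := by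
    intro f N
    unfold partialDensity
    have : (Finset.range N).filter (fun m => m ∈ f ⁻¹' S)
        = (Finset.range N).filter (fun n => f n ∈ S) := by
      apply Finset.filter_congr
      intro x _
      simp [Set.mem_preimage]
    rw [this]
  have hpd01 : ∀ (T : Set ℕ) (N : ℕ), 0 ≤ partialDensity T N ∧ partialDensity T N ≤ 1 := by
    intro T N
    constructor
    · unfold partialDensity
      positivity
    · rcases Nat.eq_zero_or_pos N with rfl | hN
      · simp [partialDensity]
      · unfold partialDensity
        rw [div_le_one (by exact_mod_cast hN)]
        have h1 := Finset.card_filter_le (Finset.range N) (fun m => m ∈ T)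
        rw [Finset.card_range] at h1
        exact_mod_cast h1
  set u := partialDensity ((piF p) ⁻¹' S) with hu
  set v := partialDensity (p ⁻¹' S) with hv
  have hdisc : ∀ N, ‖u N - v N‖ ≤ ((2 * Nat.log 2 N + 1 : ℕ) : ℝ) / N := by
    intro N
    rcases Nat.eq_zero_or_pos N with rfl | hN
    · simp [hu, hv, partialDensity]
    set a := ((Finset.range N).filter (fun n => piF p n ∈ S)).card with ha
    set b := ((Finset.range N).filter (fun t => p t ∈ S)).card with hb
    set K := 2 * Nat.log 2 N + 1 with hK
    have h1 : a ≤ b + K := count_le_one p hpinj S N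
    have h2 : b ≤ a + K := by
      have := count_le_two p hpinj S N
      omega
    have habs : |(a : ℝ) - (b : ℝ)| ≤ (K : ℝ) := by
      rw [abs_sub_le_iff]
      constructor
      · have : (a : ℝ) ≤ (b : ℝ) + (K : ℝ) := by exact_mod_cast h1
        linarith
      · have : (b : ℝ) ≤ (a : ℝ) + (K : ℝ) := by exact_mod_cast h2
        linarith
    have hNpos : (0:ℝ) < N := by exact_mod_cast hN
    rw [hu, hv, hpd (piF p) N, hpd p N, div_sub_div_same]
    rw [Real.norm_eq_abs, abs_div, abs_of_pos hNpos]
    gcongr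
  have htend : Tendsto (fun N => u N - v N) atTop (nhds 0) :=
    squeeze_zero_norm hdisc log_div_tendsto_zero
  have := limsup_liminf_eq_of_tendsto_sub
    (fun n => (hpd01 _ n).1) (fun n => (hpd01 _ n).2)
    (fun n => (hpd01 _ n).1) (fun n => (hpd01 _ n).2) htend
  exact ⟨this.1, this.2⟩
end

section
/- A set A ⊆ ℕ has intrinsic density d if and only if for every total computable injection p : ℕ → ℕ, the set p⁻¹(A) = {n : p(n) ∈ A} has asymptotic density d. -/
open Filter

open scoped Classical

namespace IntrinsicAux

/-- Insert `x` at the end of `l` if not already present. -/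
def stepIns (l : List ℕ) (x : ℕ) : List ℕ := if x ∈ l then l else l ++ [x]

/-- Insert all elements of `c` into `l` in order. -/
def insAll (l c : List ℕ) : List ℕ := c.foldl stepIns l

/-- Candidate elements at stage `k`. -/
def cand (p : ℕ → ℕ) (k : ℕ) : List ℕ :=
  (List.range ((k + 1) ^ 2)).map p ++ List.range (k + 1)

/-- The cumulative enumeration lists. -/
def LL (p : ℕ → ℕ) : ℕ → List ℕ
  | 0 => []
  | k + 1 => insAll (LL p k) (cand p k)

/-- The permutation associated to an injection `p`. -/
def pim (p : ℕ → ℕ) (x : ℕ) : ℕ := (LL p (x + 1)).idxOf x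

theorem mem_stepIns {l : List ℕ} {x y : ℕ} : y ∈ stepIns l x ↔ y ∈ l ∨ y = x := by
  unfold stepIns
  split <;> simp_all

theorem nodup_stepIns {l : List ℕ} {x : ℕ} (h : l.Nodup) : (stepIns l x).Nodup := by
  unfold stepIns
  split
  · exact h
  · rw [List.nodup_append]
    exact ⟨h, List.nodup_singleton x, by simpa using fun a (ha : a ∈ l) (h : a = x) => ‹x ∉ l› (h ▸ ha)⟩

theorem prefix_stepIns {l : List ℕ} {x : ℕ} : l <+: stepIns l x := by
  unfold stepIns
  split
  · exact List.prefix_refl l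
  · exact ⟨[x], rfl⟩

theorem mem_insAll {c l : List ℕ} {y : ℕ} : y ∈ insAll l c ↔ y ∈ l ∨ y ∈ c := by
  induction c generalizing l with
  | nil => simp [insAll]
  | cons a c ih =>
    simp only [insAll, List.foldl_cons] at *
    rw [ih, mem_stepIns]
    simp [or_assoc]

theorem nodup_insAll {c l : List ℕ} (h : l.Nodup) : (insAll l c).Nodup := by
  induction c generalizing l with
  | nil => simpa [insAll]
  | cons a c ih =>
    simp only [insAll, List.foldl_cons]
    exact ih (nodup_stepIns h)

theorem prefix_insAll {c l : List ℕ} : l <+: insAll l c := by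
  induction c generalizing l with
  | nil => simp [insAll]
  | cons a c ih =>
    simp only [insAll, List.foldl_cons]
    exact prefix_stepIns.trans ih

theorem nodup_LL (p : ℕ → ℕ) (k : ℕ) : (LL p k).Nodup := by
  induction k with
  | zero => simp [LL]
  | succ k ih => exact nodup_insAll ih

theorem prefix_LL (p : ℕ → ℕ) {k j : ℕ} (h : k ≤ j) : LL p k <+: LL p j := by
  induction j with
  | zero => simp_all
  | succ j ih =>
    rcases Nat.eq_or_lt_of_le h with rfl | h'
    · exact List.prefix_refl _
    · exact (ih (Nat.lt_succ_iff.mp h')).trans prefix_insAll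

theorem mem_cand {p : ℕ → ℕ} {k x : ℕ} :
    x ∈ cand p k ↔ (∃ j < (k + 1) ^ 2, p j = x) ∨ x < k + 1 := by
  simp [cand]

theorem cand_mono {p : ℕ → ℕ} {k k' x : ℕ} (h : k ≤ k') (hx : x ∈ cand p k) :
    x ∈ cand p k' := by
  rw [mem_cand] at *
  rcases hx with ⟨j, hj, hpj⟩ | hx
  · exact Or.inl ⟨j, lt_of_lt_of_le hj (Nat.pow_le_pow_left (by omega) 2), hpj⟩
  · exact Or.inr (by omega)

theorem mem_LL_succ {p : ℕ → ℕ} {k x : ℕ} : x ∈ LL p (k + 1) ↔ x ∈ cand p k := by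
  induction k with
  | zero => simp [LL, mem_insAll]
  | succ k ih =>
    show x ∈ insAll (LL p (k + 1)) (cand p (k + 1)) ↔ _
    rw [mem_insAll, ih]
    constructor
    · rintro (h | h)
      · exact cand_mono (Nat.le_succ k) h
      · exact h
    · exact Or.inr

theorem self_mem_LL (p : ℕ → ℕ) (x : ℕ) : x ∈ LL p (x + 1) := by
  rw [mem_LL_succ, mem_cand]
  exact Or.inr (Nat.lt_succ_self x)

theorem pim_eq {p : ℕ → ℕ} {k x : ℕ} (h : x ∈ LL p k) :
    pim p x = (LL p k).idxOf x := by
  have hx : x ∈ LL p (x + 1) := self_mem_LL p x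
  obtain ⟨t, ht⟩ := prefix_LL p (le_max_left k (x + 1))
  obtain ⟨s, hs⟩ := prefix_LL p (le_max_right k (x + 1))
  show (LL p (x + 1)).idxOf x = (LL p k).idxOf x
  calc (LL p (x + 1)).idxOf x = (LL p (max k (x + 1))).idxOf x := by
        rw [← hs, List.idxOf_append_of_mem hx]
    _ = (LL p k).idxOf x := by rw [← ht, List.idxOf_append_of_mem h]

theorem pim_lt_iff {p : ℕ → ℕ} {k x : ℕ} : pim p x < (LL p k).length ↔ x ∈ LL p k := by
  constructor
  · intro h
    by_contra hx
    have hj : x ∈ LL p (max k (x + 1)) :=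
      (prefix_LL p (le_max_right _ _)).subset (self_mem_LL p x)
    have heq := pim_eq hj
    obtain ⟨t, ht⟩ := prefix_LL p (le_max_left k (x + 1))
    rw [← ht, List.idxOf_append_of_notMem hx] at heq
    rw [heq] at h
    omega
  · intro h
    rw [pim_eq h]
    exact List.idxOf_lt_length_iff.mpr h

theorem length_LL_ge (p : ℕ → ℕ) (k : ℕ) : k ≤ (LL p k).length := by
  cases k with
  | zero => simp
  | succ k =>
    have hsub : Finset.range (k + 1) ⊆ (LL p (k + 1)).toFinset := by
      intro x hx
      rw [List.mem_toFinset, mem_LL_succ, mem_cand]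
      exact Or.inr (Finset.mem_range.mp hx)
    have := Finset.card_le_card hsub
    rwa [Finset.card_range, List.toFinset_card_of_nodup (nodup_LL p _)] at this

theorem pim_injective (p : ℕ → ℕ) : Function.Injective (pim p) := by
  intro x y h
  set j := max x y + 1 with hj
  have hx : x ∈ LL p j := (prefix_LL p (by omega)).subset (self_mem_LL p x)
  have hy : y ∈ LL p j := (prefix_LL p (by omega)).subset (self_mem_LL p y)
  rw [pim_eq hx, pim_eq hy] at h
  exact (List.idxOf_inj hx).mp h

theorem pim_surjective (p : ℕ → ℕ) : Function.Surjective (pim p) := by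
  intro n
  have h : n < (LL p (n + 1)).length := lt_of_lt_of_le (Nat.lt_succ_self n) (length_LL_ge p (n + 1))
  refine ⟨(LL p (n + 1))[n], ?_⟩
  rw [pim_eq (List.getElem_mem h)]
  exact List.Nodup.idxOf_getElem (nodup_LL p _) n h

end IntrinsicAux

namespace IntrinsicAux

theorem stepIns_primrec : Primrec₂ stepIns := by
  have hmem : PrimrecPred fun pr : List ℕ × ℕ => pr.2 ∈ pr.1 := by
    have h : PrimrecPred fun pr : List ℕ × ℕ => pr.1.idxOf pr.2 < pr.1.length :=
      Primrec.nat_lt.comp (Primrec.list_idxOf.comp Primrec.snd Primrec.fst)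
        (Primrec.list_length.comp Primrec.fst)
    exact h.of_eq fun pr => by simp [List.idxOf_lt_length_iff]
  have h : Primrec fun pr : List ℕ × ℕ =>
      if pr.2 ∈ pr.1 then pr.1 else pr.1 ++ [pr.2] :=
    Primrec.ite hmem Primrec.fst (Primrec.list_concat.comp Primrec.fst Primrec.snd)
  have h2 : Primrec fun pr : List ℕ × ℕ => stepIns pr.1 pr.2 :=
    h.of_eq fun pr => by simp [stepIns]
  exact h2

theorem insAll_primrec : Primrec₂ insAll := by
  have h := Primrec.list_foldl (α := List ℕ × List ℕ) (β := ℕ) (σ := List ℕ)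
    (f := Prod.snd) (g := Prod.fst) (h := fun _ sb => stepIns sb.1 sb.2)
    Primrec.snd Primrec.fst
    (Primrec.to₂ (stepIns_primrec.comp (Primrec.fst.comp Primrec.snd)
      (Primrec.snd.comp Primrec.snd)))
  have h2 : Primrec fun pr : List ℕ × List ℕ => insAll pr.1 pr.2 :=
    h.of_eq fun pr => rfl
  exact h2

theorem mapRange_computable {p : ℕ → ℕ} (hp : Computable p) :
    Computable fun n => (List.range n).map p := by
  have aux : ∀ n : ℕ, Nat.rec ([] : List ℕ) (fun y IH => IH ++ [p y]) n
      = (List.range n).map p := by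
    intro n
    induction n with
    | zero => simp
    | succ n ih =>
      show (Nat.rec ([] : List ℕ) (fun y IH => IH ++ [p y]) n) ++ [p n] = _
      rw [ih, List.range_succ, List.map_append]
      simp
  have h := Computable.nat_rec (α := ℕ) (σ := List ℕ) (f := id)
    (g := fun _ => ([] : List ℕ)) (h := fun _ pr => pr.2 ++ [p pr.1])
    Computable.id (Computable.const [])
    (Computable.to₂ (Computable.list_concat.comp (Computable.snd.comp Computable.snd)
      (hp.comp (Computable.fst.comp Computable.snd))))
  exact h.of_eq fun n => aux n

theorem cand_computable {p : ℕ → ℕ} (hp : Computable p) : Computable (cand p) := by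
  have hsq : Computable fun k : ℕ => (k + 1) ^ 2 := by
    have h : Primrec fun k : ℕ => (k + 1) * (k + 1) :=
      Primrec.nat_mul.comp Primrec.succ Primrec.succ
    exact (h.of_eq fun k => by ring).to_comp
  have hrange : Computable fun k : ℕ => List.range (k + 1) :=
    (Primrec.list_range.comp Primrec.succ).to_comp
  exact Computable.list_append.comp ((mapRange_computable hp).comp hsq) hrange

theorem natrec_insAll_computable {q : ℕ → List ℕ} (hq : Computable q) :
    Computable fun n : ℕ => Nat.rec (motive := fun _ => List ℕ) ([] : List ℕ) (fun y IH => insAll IH (q y)) n := by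
  have h := Computable.nat_rec (α := ℕ) (σ := List ℕ) (f := id)
    (g := fun _ => ([] : List ℕ)) (h := fun _ pr => insAll pr.2 (q pr.1))
    Computable.id (Computable.const [])
    (Computable.to₂ ((insAll_primrec.to_comp).comp (Computable.snd.comp Computable.snd)
      (hq.comp (Computable.fst.comp Computable.snd))))
  exact h.of_eq fun n => rfl

theorem LL_computable {p : ℕ → ℕ} (hp : Computable p) : Computable (LL p) := by
  have aux : ∀ n : ℕ, Nat.rec ([] : List ℕ) (fun y IH => insAll IH (cand p y)) n
      = LL p n := by
    intro n
    induction n with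
    | zero => rfl
    | succ n ih =>
      show insAll (Nat.rec ([] : List ℕ) (fun y IH => insAll IH (cand p y)) n) (cand p n) = _
      rw [ih]
      rfl
  exact (natrec_insAll_computable (cand_computable hp)).of_eq aux

theorem pim_computable {p : ℕ → ℕ} (hp : Computable p) : Computable (pim p) := by
  have h := (Primrec.list_idxOf.to_comp).comp Computable.id
    ((LL_computable hp).comp Computable.succ)
  exact h.of_eq fun x => rfl

end IntrinsicAux

namespace IntrinsicAux

theorem count_image (p : ℕ → ℕ) (A : Set ℕ) (k : ℕ) :
    ((Finset.range ((LL p k).length)).filter (fun y => y ∈ pim p '' A)).card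
      = ((LL p k).toFinset.filter (fun x => x ∈ A)).card := by
  have hset : (Finset.range ((LL p k).length)).filter (fun y => y ∈ pim p '' A)
      = ((LL p k).toFinset.filter (fun x => x ∈ A)).image (pim p) := by
    ext y
    simp only [Finset.mem_filter, Finset.mem_range, Finset.mem_image, List.mem_toFinset,
      Set.mem_image]
    constructor
    · rintro ⟨hy, x, hxA, rfl⟩
      exact ⟨x, ⟨pim_lt_iff.mp hy, hxA⟩, rfl⟩
    · rintro ⟨x, ⟨hxL, hxA⟩, rfl⟩
      exact ⟨pim_lt_iff.mpr hxL, x, hxA, rfl⟩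
  rw [hset, Finset.card_image_of_injective _ (pim_injective p)]

theorem toFinset_LL (p : ℕ → ℕ) (k : ℕ) :
    (LL p (k + 1)).toFinset = (Finset.range ((k + 1) ^ 2)).image p ∪ Finset.range (k + 1) := by
  ext x
  simp only [List.mem_toFinset, mem_LL_succ, mem_cand, Finset.mem_union, Finset.mem_image,
    Finset.mem_range]

theorem ratio_bound {a b N M K : ℕ} (h1 : b ≤ a) (h2 : a ≤ b + K) (h3 : b ≤ N)
    (h4 : N ≤ M) (h5 : M ≤ N + K) (hN : 0 < N) :
    |(a : ℝ) / M - (b : ℝ) / N| ≤ (K : ℝ) / N := by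
  have hN' : (0 : ℝ) < N := by exact_mod_cast hN
  have hM' : (0 : ℝ) < M := lt_of_lt_of_le hN' (by exact_mod_cast h4)
  have hba : (b : ℝ) ≤ a := by exact_mod_cast h1
  have hab : (a : ℝ) ≤ b + K := by exact_mod_cast h2
  have hbN : (b : ℝ) ≤ N := by exact_mod_cast h3
  have hNM : (N : ℝ) ≤ M := by exact_mod_cast h4
  have hMN : (M : ℝ) ≤ N + K := by exact_mod_cast h5
  have hK : (0 : ℝ) ≤ K := Nat.cast_nonneg K
  rw [abs_sub_le_iff]
  constructor
  · rw [div_sub_div _ _ hM'.ne' hN'.ne', div_le_div_iff₀ (by positivity) hN']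
    nlinarith [mul_le_mul_of_nonneg_right hab hN'.le,
      mul_le_mul_of_nonneg_right hNM (Nat.cast_nonneg b : (0:ℝ) ≤ b),
      mul_le_mul_of_nonneg_left hNM (mul_nonneg hK hN'.le)]
  · rw [div_sub_div _ _ hN'.ne' hM'.ne', div_le_div_iff₀ (by positivity) hN']
    nlinarith [mul_le_mul_of_nonneg_right hba hN'.le,
      mul_le_mul hbN (sub_le_iff_le_add'.mpr hMN) (sub_nonneg.mpr hNM) hN'.le,
      mul_le_mul_of_nonneg_left hNM (mul_nonneg hK hN'.le)]

theorem sqrt_tendsto : Filter.Tendsto Nat.sqrt atTop atTop :=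
  Filter.tendsto_atTop_atTop.mpr fun b => ⟨b * b, fun _ hn => Nat.le_sqrt.mpr hn⟩

end IntrinsicAux

open IntrinsicAux in
theorem intrinsicDensity_iff_injection_sampling (A : Set ℕ) (d : ℝ) :
    (∀ π : ℕ → ℕ, ComputablePerm π → HasDensity (π '' A) d) ↔
      (∀ p : ℕ → ℕ, Function.Injective p → Computable p →
        HasDensity (p ⁻¹' A) d) := by
  constructor
  · -- permutations ⇒ injections
    intro hperm p hpinj hpcomp
    have hbij : Function.Bijective (pim p) := ⟨pim_injective p, pim_surjective p⟩
    have hd0 : Tendsto (partialDensity (pim p '' A)) atTop (nhds d) :=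
      hperm _ ⟨hbij, pim_computable hpcomp⟩
    -- abbreviations (as plain functions)
    have c_def : ∀ n : ℕ, partialDensity (p ⁻¹' A) n
        = ((((Finset.range n).filter (fun m => m ∈ p ⁻¹' A)).card : ℝ)) / n := fun n => rfl
    set c : ℕ → ℕ := fun n => ((Finset.range n).filter (fun m => m ∈ p ⁻¹' A)).card with hc
    set c' : ℕ → ℕ := fun k => ((LL p k).toFinset.filter (fun x => x ∈ A)).card with hc'
    set m : ℕ → ℕ := fun k => (LL p k).length with hm
    have hcn : ∀ n : ℕ, c n = (((Finset.range n).image p).filter (fun x => x ∈ A)).card := by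
      intro n
      show ((Finset.range n).filter (fun m => m ∈ p ⁻¹' A)).card = _
      rw [Finset.filter_image, Finset.card_image_of_injective _ hpinj]
      exact congrArg Finset.card (Finset.filter_congr fun x _ => by rfl)
    have c_le : ∀ n, c n ≤ n := fun n =>
      le_trans (Finset.card_filter_le _ _) (le_of_eq (Finset.card_range n))
    have cLip : ∀ {N M : ℕ}, N ≤ M → c N ≤ c M ∧ c M ≤ c N + (M - N) := by
      intro N M h
      have hr : Finset.range M = Finset.range N ∪ Finset.Ico N M := by
        rw [Finset.range_eq_Ico, Finset.range_eq_Ico]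
        exact (Finset.Ico_union_Ico_eq_Ico (Nat.zero_le N) h).symm
      constructor
      · simp only [hc, hr, Finset.filter_union]
        exact Finset.card_le_card Finset.subset_union_left
      · simp only [hc, hr, Finset.filter_union]
        refine le_trans (Finset.card_union_le _ _) ?_
        have h2 : ((Finset.Ico N M).filter (fun m => m ∈ p ⁻¹' A)).card ≤ M - N :=
          le_trans (Finset.card_filter_le _ _) (le_of_eq (Nat.card_Ico N M))
        omega
    have hmlow : ∀ k : ℕ, (k + 1) ^ 2 ≤ m (k + 1) := by
      intro k
      have h1 : ((Finset.range ((k + 1) ^ 2)).image p).card ≤ (LL p (k + 1)).toFinset.card :=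
        Finset.card_le_card (by rw [toFinset_LL]; exact Finset.subset_union_left)
      rwa [Finset.card_image_of_injective _ hpinj, Finset.card_range,
        List.toFinset_card_of_nodup (nodup_LL p _)] at h1
    have hmhigh : ∀ k : ℕ, m (k + 1) ≤ (k + 1) ^ 2 + (k + 1) := by
      intro k
      have h1 : (LL p (k + 1)).toFinset.card ≤ (k + 1) ^ 2 + (k + 1) := by
        rw [toFinset_LL]
        refine le_trans (Finset.card_union_le _ _) ?_
        have := Finset.card_image_le (s := Finset.range ((k + 1) ^ 2)) (f := p)
        rw [Finset.card_range] at this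
        rw [Finset.card_range]
        omega
      rwa [List.toFinset_card_of_nodup (nodup_LL p _)] at h1
    have hc'low : ∀ k : ℕ, c ((k + 1) ^ 2) ≤ c' (k + 1) := by
      intro k
      rw [hcn]
      simp only [hc', toFinset_LL, Finset.filter_union]
      exact Finset.card_le_card Finset.subset_union_left
    have hc'high : ∀ k : ℕ, c' (k + 1) ≤ c ((k + 1) ^ 2) + (k + 1) := by
      intro k
      rw [hcn]
      simp only [hc', toFinset_LL, Finset.filter_union]
      refine le_trans (Finset.card_union_le _ _) ?_
      have h2 : ((Finset.range (k + 1)).filter (fun x => x ∈ A)).card ≤ k + 1 :=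
        le_trans (Finset.card_filter_le _ _) (le_of_eq (Finset.card_range _))
      omega
    -- limit along the checkpoints
    have hm_t : Tendsto m atTop atTop := tendsto_atTop_mono (length_LL_ge p) tendsto_id
    have h1 : Tendsto (fun k => (c' k : ℝ) / (m k : ℝ)) atTop (nhds d) := by
      have h := hd0.comp hm_t
      refine h.congr fun k => ?_
      show partialDensity (pim p '' A) (m k) = _
      rw [partialDensity, count_image p A k]
    have h2 : Tendsto (fun j : ℕ => (c (j ^ 2) : ℝ) / ((j ^ 2 : ℕ) : ℝ)) atTop (nhds d) := by
      rw [← Filter.tendsto_add_atTop_iff_nat 1]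
      have hfk : Tendsto (fun k : ℕ => (c' (k + 1) : ℝ) / (m (k + 1) : ℝ)) atTop (nhds d) :=
        h1.comp (tendsto_add_atTop_nat 1)
      have herr : Tendsto (fun k : ℕ => (c ((k + 1) ^ 2) : ℝ) / (((k + 1) ^ 2 : ℕ) : ℝ)
          - (c' (k + 1) : ℝ) / (m (k + 1) : ℝ)) atTop (nhds 0) := by
        have hg : Tendsto (fun k : ℕ => ((k + 1 : ℕ) : ℝ) / (((k + 1) ^ 2 : ℕ) : ℝ))
            atTop (nhds 0) := by
          refine tendsto_one_div_add_atTop_nhds_zero_nat.congr fun k => ?_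
          have hk : ((k : ℝ) + 1) ≠ 0 := by positivity
          push_cast
          field_simp
        refine squeeze_zero_norm (fun k => ?_) hg
        rw [Real.norm_eq_abs, abs_sub_comm]
        exact ratio_bound (hc'low k) (hc'high k) (c_le _) (hmlow k) (hmhigh k)
          (pow_pos (Nat.succ_pos k) 2)
      have := herr.add hfk
      rw [zero_add] at this
      refine this.congr fun k => by ring
    -- from checkpoints to all n
    show Tendsto (partialDensity (p ⁻¹' A)) atTop (nhds d)
    have hs := sqrt_tendsto
    have hcomp : Tendsto (fun n : ℕ => (c (Nat.sqrt n ^ 2) : ℝ) / ((Nat.sqrt n ^ 2 : ℕ) : ℝ))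
        atTop (nhds d) := h2.comp hs
    have herr2 : Tendsto (fun n : ℕ => (c n : ℝ) / (n : ℝ)
        - (c (Nat.sqrt n ^ 2) : ℝ) / ((Nat.sqrt n ^ 2 : ℕ) : ℝ)) atTop (nhds 0) := by
      refine squeeze_zero_norm' ?_ ((tendsto_const_div_atTop_nhds_zero_nat 2).comp hs)
      filter_upwards [eventually_ge_atTop 1] with n hn
      have hs0 : 0 < Nat.sqrt n := Nat.sqrt_pos.mpr hn
      have hsq_le : Nat.sqrt n ^ 2 ≤ n := Nat.sqrt_le' n
      have hub : n ≤ Nat.sqrt n ^ 2 + 2 * Nat.sqrt n := by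
        have h3 : n < (Nat.sqrt n + 1) ^ 2 := by
          simpa [Nat.succ_eq_add_one] using Nat.lt_succ_sqrt' n
        have h4 : (Nat.sqrt n + 1) ^ 2 = Nat.sqrt n ^ 2 + 2 * Nat.sqrt n + 1 := by ring
        omega
      have hb := ratio_bound (a := c n) (b := c (Nat.sqrt n ^ 2)) (N := Nat.sqrt n ^ 2)
        (M := n) (K := 2 * Nat.sqrt n) (cLip hsq_le).1
        (le_trans (cLip hsq_le).2 (by omega)) (c_le _) hsq_le (by omega) (pow_pos hs0 2)
      rw [Real.norm_eq_abs]
      refine le_trans hb (le_of_eq ?_)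
      have hsr : ((Nat.sqrt n : ℝ)) ≠ 0 := Nat.cast_ne_zero.mpr hs0.ne'
      simp only [Function.comp_apply]
      push_cast
      field_simp
    have hfin := herr2.add hcomp
    rw [zero_add] at hfin
    refine hfin.congr fun n => ?_
    rw [c_def n]
    push_cast
    ring
  · -- injections ⇒ permutations
    intro hinj π hπ
    obtain ⟨⟨πinj, πsurj⟩, πcomp⟩ := hπ
    have hqex : ∀ n, ∃ m, π m = n := πsurj
    set q : ℕ → ℕ := fun n => Nat.find (hqex n) with hq_def
    have hq : ∀ n, π (q n) = n := fun n => Nat.find_spec (hqex n)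
    have qinj : Function.Injective q := by
      intro a b h
      rw [← hq a, ← hq b, h]
    have qcomp : Computable q := by
      have h1 : Primrec₂ fun a b : ℕ => decide (a = b) := Primrec.eq.decide
      have h2 : Computable fun pr : ℕ × ℕ => decide (π pr.2 = pr.1) :=
        h1.to_comp.comp (πcomp.comp Computable.snd) Computable.fst
      have h3 : Partrec₂ fun n m : ℕ => (Part.some (decide (π m = n)) : Part Bool) :=
        Computable₂.partrec₂ h2.to₂
      have h4 := Partrec.rfind h3
      refine Partrec.of_eq_tot h4 fun n => ?_
      refine Nat.mem_rfind.mpr ?_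
      constructor
      · simp [hq n]
      · intro m hm
        simp [Nat.find_min (hqex n) hm]
    have himg : π '' A = q ⁻¹' A := by
      ext x
      simp only [Set.mem_image, Set.mem_preimage]
      constructor
      · rintro ⟨a, ha, rfl⟩
        rwa [show q (π a) = a from πinj (hq (π a))]
      · intro h
        exact ⟨q x, h, hq x⟩
    rw [himg]
    exact hinj q qinj qcomp
end

section
/- Let S ⊆ ℕ be an index set, i.e., for all e, e' ∈ ℕ, if the partial computable functions with codes e and e' are equal then S(e) = S(e'). Then the following are equivalent: (i) π(S) is generic-case computable for every computable permutation π : ℕ → ℕ; (ii) S is computable; (iii) S = ∅ or S = ℕ. -/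
open Filter

open scoped Classical

/-- The `e`-th partial computable function, via the standard numbering of codes. -/
def phi (e : ℕ) : ℕ →. ℕ := (Denumerable.ofNat Nat.Partrec.Code e).eval

/-- `S` is an index set. -/
def IndexSet (S : Set ℕ) : Prop :=
  ∀ e e', phi e = phi e' → (e ∈ S ↔ e' ∈ S)

/-- `f` is a partial description of `A`: wherever `f` converges, it agrees with
the characteristic function of `A`. -/
def PartialDescription (f : ℕ →. Bool) (A : Set ℕ) : Prop :=
  ∀ n b, b ∈ f n → (b = true ↔ n ∈ A)

/-- `A` is generic-case computable: it has a partial computable partial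
description whose domain has density 1. -/
def GenericCaseComputable (A : Set ℕ) : Prop :=
  ∃ f : ℕ →. Bool, Partrec f ∧ PartialDescription f A ∧
    HasDensity {n | (f n).Dom} 1

namespace IGC

/-! ### pow4 and base-4 logarithm -/

def pow4 (n : ℕ) : ℕ := Nat.rec 1 (fun _ ih => 4 * ih) n

lemma pow4_eq (n : ℕ) : pow4 n = 4 ^ n := by
  induction n with
  | zero => rfl
  | succ n ih => show 4 * pow4 n = 4 ^ (n + 1); rw [ih, pow_succ]; ring

lemma pow4_primrec : Primrec pow4 :=
  Primrec.nat_rec₁ 1 ((Primrec.nat_mul.comp (Primrec.const 4) Primrec.snd).to₂)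

def BL (m : ℕ) : ℕ := Nat.rec 0 (fun m ih => if pow4 (ih + 1) ≤ m + 1 then ih + 1 else ih) m

lemma BL_succ (m : ℕ) : BL (m+1) = if pow4 (BL m + 1) ≤ m + 1 then BL m + 1 else BL m := rfl

lemma BL_primrec : Primrec BL := by
  refine Primrec.nat_rec₁ 0 ?_
  have hcond : PrimrecPred fun p : ℕ × ℕ => pow4 (p.2 + 1) ≤ p.1 + 1 :=
    Primrec.nat_le.comp (pow4_primrec.comp (Primrec.succ.comp Primrec.snd))
      (Primrec.succ.comp Primrec.fst)
  exact (Primrec.ite hcond (Primrec.succ.comp Primrec.snd) Primrec.snd).to₂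

lemma BL_spec : ∀ m, 1 ≤ m → 4 ^ BL m ≤ m ∧ m < 4 ^ (BL m + 1) := by
  intro m hm
  induction m with
  | zero => omega
  | succ m ih =>
    by_cases h0 : m = 0
    · subst h0
      have h1 : BL 1 = 0 := by rw [BL_succ]; norm_num [pow4_eq, show BL 0 = 0 from rfl]
      rw [h1]; norm_num
    · obtain ⟨h1, h2⟩ := ih (by omega)
      rw [BL_succ, pow4_eq]
      split_ifs with h
      · exact ⟨h, lt_of_le_of_lt h2 (Nat.pow_lt_pow_succ (by norm_num))⟩
      · exact ⟨le_trans h1 (Nat.le_succ m), by omega⟩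

lemma BL_of {n m : ℕ} (h1 : 4 ^ n ≤ m) (h2 : m < 4 ^ (n+1)) : BL m = n := by
  have hm : 1 ≤ m := le_trans (Nat.one_le_pow _ _ (by norm_num)) h1
  obtain ⟨g1, g2⟩ := BL_spec m hm
  have a1 : BL m < n + 1 := by
    by_contra hh; push_neg at hh
    have : 4 ^ (n+1) ≤ 4 ^ BL m := Nat.pow_le_pow_right (by norm_num) hh
    omega
  have a2 : n < BL m + 1 := by
    by_contra hh; push_neg at hh
    have : 4 ^ (BL m + 1) ≤ 4 ^ n := Nat.pow_le_pow_right (by norm_num) hh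
    omega
  omega

/-! ### block positions -/

def IsB (m : ℕ) : Prop := ∃ n k, k < 4 ^ n ∧ m = 4 ^ n + k

def inBb (m : ℕ) : Bool := decide (0 < m) && decide (m < 2 * pow4 (BL m))

lemma inBb_primrec : Primrec inBb := by
  have h1 : PrimrecPred fun m : ℕ => 0 < m :=
    Primrec.nat_lt.comp (Primrec.const 0) Primrec.id
  have h2 : PrimrecPred fun m : ℕ => m < 2 * pow4 (BL m) :=
    Primrec.nat_lt.comp Primrec.id
      (Primrec.nat_mul.comp (Primrec.const 2) (pow4_primrec.comp BL_primrec))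
  exact Primrec.and.comp h1.decide h2.decide

lemma BL_block {n k : ℕ} (hk : k < 4 ^ n) : BL (4 ^ n + k) = n :=
  BL_of (Nat.le_add_right _ _) (by
    have : 2 * 4 ^ n ≤ 4 ^ (n+1) := by rw [pow_succ]; omega
    omega)

lemma inBb_iff (m : ℕ) : inBb m = true ↔ IsB m := by
  rw [inBb, Bool.and_eq_true, decide_eq_true_iff, decide_eq_true_iff, pow4_eq]
  constructor
  · rintro ⟨h0, h2⟩
    obtain ⟨g1, g2⟩ := BL_spec m h0
    exact ⟨BL m, m - 4 ^ BL m, by omega, by omega⟩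
  · rintro ⟨n, k, hk, rfl⟩
    have hBL : BL (4 ^ n + k) = n := BL_block hk
    rw [hBL]
    have : 0 < 4 ^ n := by positivity
    omega

lemma not_isB_two (n : ℕ) : ¬ IsB (2 * 4 ^ n) := by
  rintro ⟨n', k', hk', he⟩
  have h1 : 4 ^ n' ≤ 2 * 4 ^ n := by omega
  have h2 : 2 * 4 ^ n < 2 * 4 ^ n' := by omega
  have h3 : 4 ^ n < 4 ^ n' := by omega
  have h4 : n < n' := (Nat.pow_lt_pow_iff_right (by norm_num)).1 h3
  have h5 : 4 ^ (n+1) ≤ 4 ^ n' := Nat.pow_le_pow_right (by norm_num) h4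
  rw [pow_succ] at h5
  omega

lemma isOther_infinite : {m | ¬ IsB m}.Infinite := by
  apply Set.infinite_of_forall_exists_gt
  intro a
  exact ⟨2 * 4 ^ (a+1), not_isB_two _, by
    have : a + 1 < 4 ^ (a+1) := Nat.lt_pow_self (by norm_num)
    omega⟩

/-! ### block bookkeeping: pc2 i n = sum of 4^m over m < n with m.unpair.1 = i -/

def pc2 (i n : ℕ) : ℕ := Nat.rec 0 (fun m ih => ih + if m.unpair.1 = i then pow4 m else 0) n

lemma pc2_succ (i n : ℕ) :
    pc2 i (n+1) = pc2 i n + if n.unpair.1 = i then 4 ^ n else 0 := by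
  show pc2 i n + _ = _
  rw [pow4_eq]

lemma pc2_primrec : Primrec₂ pc2 := by
  have hstep : Primrec fun q : ℕ × (ℕ × ℕ) =>
      q.2.2 + if q.2.1.unpair.1 = q.1 then pow4 q.2.1 else 0 := by
    refine Primrec.nat_add.comp (Primrec.snd.comp Primrec.snd) ?_
    refine Primrec.ite ?_ (pow4_primrec.comp (Primrec.fst.comp Primrec.snd)) (Primrec.const 0)
    exact Primrec.eq.comp
      (Primrec.fst.comp (Primrec.unpair.comp (Primrec.fst.comp Primrec.snd))) Primrec.fst
  exact Primrec.nat_rec (Primrec.const 0 : Primrec fun _ : ℕ => (0:ℕ)) hstep.to₂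

lemma pc2_mono (i : ℕ) : Monotone (pc2 i) := by
  apply monotone_nat_of_le_succ
  intro n
  rw [pc2_succ]
  omega

lemma pc2_step {i n : ℕ} (h : n.unpair.1 = i) {n' : ℕ} (hlt : n < n') :
    pc2 i n + 4 ^ n ≤ pc2 i n' := by
  have h1 : pc2 i (n+1) = pc2 i n + 4 ^ n := by rw [pc2_succ, if_pos h]
  calc pc2 i n + 4 ^ n = pc2 i (n+1) := h1.symm
  _ ≤ pc2 i n' := pc2_mono i hlt

lemma pc2_pos_exists {i n : ℕ} (h : 0 < pc2 i n) :
    ∃ m, m < n ∧ m.unpair.1 = i ∧ pc2 i n = pc2 i m + 4 ^ m := by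
  induction n with
  | zero => simp [pc2] at h
  | succ n ih =>
    by_cases hc : n.unpair.1 = i
    · exact ⟨n, n.lt_succ_self, hc, by rw [pc2_succ, if_pos hc]⟩
    · rw [pc2_succ, if_neg hc, add_zero] at h ⊢
      obtain ⟨m, hm, g1, g2⟩ := ih h
      exact ⟨m, hm.trans n.lt_succ_self, g1, g2⟩

lemma pc2_ge (i K : ℕ) : K ≤ pc2 i (Nat.pair i K) := by
  induction K with
  | zero => exact Nat.zero_le _
  | succ K ih =>
    have h1 : Nat.pair i K < Nat.pair i (K+1) := Nat.pair_lt_pair_right _ (Nat.lt_succ_self K)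
    have h2 : pc2 i (Nat.pair i K) + 4 ^ (Nat.pair i K) ≤ pc2 i (Nat.pair i (K+1)) :=
      pc2_step (by simp) h1
    have h3 : 1 ≤ 4 ^ (Nat.pair i K) := Nat.one_le_pow _ _ (by norm_num)
    omega

lemma exists_block (i K : ℕ) :
    ∃ n, n.unpair.1 = i ∧ pc2 i n ≤ K ∧ K < pc2 i n + 4 ^ n := by
  have hne : ∃ n, n.unpair.1 = i ∧ K < pc2 i n + 4 ^ n := by
    refine ⟨Nat.pair i K, by simp, ?_⟩
    have := pc2_ge i K
    have h3 : 1 ≤ 4 ^ (Nat.pair i K) := Nat.one_le_pow _ _ (by norm_num)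
    omega
  classical
  have hn := Nat.find_spec hne
  refine ⟨Nat.find hne, hn.1, ?_, hn.2⟩
  by_contra hK
  push_neg at hK
  have hpos : 0 < pc2 i (Nat.find hne) := lt_of_le_of_lt (Nat.zero_le K) hK
  obtain ⟨m, hmn, g1, g2⟩ := pc2_pos_exists hpos
  exact Nat.find_min hne hmn ⟨g1, by omega⟩

lemma unique_block {i n n' K : ℕ} (h : n.unpair.1 = i) (h' : n'.unpair.1 = i)
    (h1 : pc2 i n ≤ K) (h2 : K < pc2 i n + 4 ^ n)
    (h1' : pc2 i n' ≤ K) (h2' : K < pc2 i n' + 4 ^ n') : n = n' := by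
  rcases lt_trichotomy n n' with hlt | he | hlt
  · have := pc2_step h hlt; omega
  · exact he
  · have := pc2_step h' hlt; omega

/-! ### the permutation construction, generic in E -/

section Perm

variable (E : ℕ → ℕ)

def Q (x : ℕ) : Prop := x ∉ Set.range E

def inRb (x : ℕ) : Bool := Nat.rec false (fun n ih => ih || (E n == x)) (x + 1)

def cntC (x : ℕ) : ℕ := Nat.rec 0 (fun x' ih => ih + cond (inRb E x') 0 1) x

def cntO (m : ℕ) : ℕ := Nat.rec 0 (fun m' ih => ih + cond (inBb m') 0 1) m

noncomputable def tau (m : ℕ) : ℕ :=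
  if IsB m then E (Nat.pair (BL m).unpair.1 (pc2 (BL m).unpair.1 (BL m) + (m - 4 ^ BL m)))
  else Nat.nth (Q E) (Nat.count (fun m' => ¬ IsB m') m)

variable (hEinj : Function.Injective E) (hEb : ∀ n, 2 * n + 2 ≤ E n)

section
include hEb

lemma inRb_iff (x : ℕ) : inRb E x = true ↔ x ∈ Set.range E := by
  have key : ∀ k, (Nat.rec false (fun n ih => ih || (E n == x)) k : Bool) = true ↔
      ∃ n, n < k ∧ E n = x := by
    intro k
    induction k with
    | zero => simp
    | succ k ih =>
      show (_ || (E k == x)) = true ↔ _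
      rw [Bool.or_eq_true, ih, beq_iff_eq]
      constructor
      · rintro (⟨n, h1, h2⟩ | h) 
        · exact ⟨n, h1.trans k.lt_succ_self, h2⟩
        · exact ⟨k, k.lt_succ_self, h⟩
      · rintro ⟨n, h1, h2⟩
        rcases Nat.lt_succ_iff_lt_or_eq.1 h1 with h | rfl
        · exact Or.inl ⟨n, h, h2⟩
        · exact Or.inr h2
  refine (key (x+1)).trans ⟨fun ⟨n, _, h2⟩ => ⟨n, h2⟩, ?_⟩
  rintro ⟨n, rfl⟩
  exact ⟨n, by have := hEb n; omega, rfl⟩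

lemma cntC_eq (x : ℕ) : cntC E x = Nat.count (Q E) x := by
  induction x with
  | zero => simp [cntC, Nat.count_zero]
  | succ x ih =>
    rw [Nat.count_succ]
    show cntC E x + _ = _
    rw [ih]
    by_cases h : x ∈ Set.range E
    · have hb : inRb E x = true := (inRb_iff E hEb x).2 h
      simp [hb, Q, h]
    · have hb : inRb E x = false := by
        rw [← Bool.not_eq_true, inRb_iff E hEb]; exact h
      simp [hb, Q, h]

lemma Q_unbounded : ∀ N, ∃ x, N ≤ x ∧ Q E x := by
  intro N
  by_contra hc
  push_neg at hc
  have hmem : ∀ x, N ≤ x → x ∈ Set.range E := by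
    intro x hx
    by_contra h
    exact (hc x hx) h
  have hinj : Set.InjOn (fun x => Function.invFun E x) (Finset.Ico N (2*N+2)) := by
    intro x hx y hy hxy
    have ex : E (Function.invFun E x) = x :=
      Function.invFun_eq (hmem x (Finset.mem_Ico.1 (by exact_mod_cast hx)).1)
    have ey : E (Function.invFun E y) = y :=
      Function.invFun_eq (hmem y (Finset.mem_Ico.1 (by exact_mod_cast hy)).1)
    simp only [] at hxy
    rw [← ex, ← ey]; exact congrArg E hxy
  have hmaps : ∀ x ∈ Finset.Ico N (2*N+2), Function.invFun E x ∈ Finset.range N := by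
    intro x hx
    obtain ⟨h1, h2⟩ := Finset.mem_Ico.1 hx
    have ex : E (Function.invFun E x) = x := Function.invFun_eq (hmem x h1)
    have hb := hEb (Function.invFun E x)
    rw [ex] at hb
    simp only [Finset.mem_range]
    omega
  have hcard := Finset.card_le_card_of_injOn _ hmaps hinj
  simp [Nat.card_Ico, Finset.card_range] at hcard
  omega

end

include hEb in
lemma Q_infinite : (setOf (Q E)).Infinite :=
  Set.infinite_of_forall_exists_gt (fun a => by
    obtain ⟨x, h1, h2⟩ := Q_unbounded E hEb (a+1)
    exact ⟨x, h2, by omega⟩)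

lemma cntO_eq (m : ℕ) : cntO m = Nat.count (fun m' => ¬ IsB m') m := by
  induction m with
  | zero => simp [cntO, Nat.count_zero]
  | succ m ih =>
    rw [Nat.count_succ]
    show cntO m + _ = _
    rw [ih]
    by_cases h : IsB m
    · have hb : inBb m = true := (inBb_iff m).2 h
      simp [hb, h]
    · have hb : inBb m = false := by
        rw [← Bool.not_eq_true, inBb_iff]; exact h
      simp [hb, h]

lemma tau_block {n k : ℕ} (hk : k < 4 ^ n) :
    tau E (4 ^ n + k) = E (Nat.pair n.unpair.1 (pc2 n.unpair.1 n + k)) := by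
  have hB : IsB (4 ^ n + k) := ⟨n, k, hk, rfl⟩
  rw [tau, if_pos hB, BL_block hk]
  have h4 : 4 ^ n + k - 4 ^ n = k := by omega
  rw [h4]

lemma tau_other {m : ℕ} (hm : ¬ IsB m) :
    tau E m = Nat.nth (Q E) (Nat.count (fun m' => ¬ IsB m') m) := by
  rw [tau, if_neg hm]

include hEinj hEb in
lemma tau_inj : Function.Injective (tau E) := by
  intro m m' he
  by_cases h1 : IsB m <;> by_cases h2 : IsB m'
  · obtain ⟨n, k, hk, rfl⟩ := h1
    obtain ⟨n', k', hk', rfl⟩ := h2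
    rw [tau_block E hk, tau_block E hk'] at he
    obtain ⟨hc, hv⟩ := Nat.pair_eq_pair.1 (hEinj he)
    rw [← hc] at hv
    have hnn : n = n' := by
      refine unique_block (i := n.unpair.1) (K := pc2 n.unpair.1 n + k) rfl hc.symm
        (Nat.le_add_right _ _) (by omega) ?_ ?_
      · omega
      · omega
    subst hnn
    have : k = k' := by omega
    omega
  · exfalso
    obtain ⟨n, k, hk, rfl⟩ := h1
    rw [tau_block E hk, tau_other E h2] at he
    have hq : Q E (Nat.nth (Q E) (Nat.count (fun m' => ¬ IsB m') m')) :=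
      Nat.nth_mem_of_infinite (Q_infinite E hEb) _
    rw [← he] at hq
    exact hq ⟨_, rfl⟩
  · exfalso
    obtain ⟨n, k, hk, rfl⟩ := h2
    rw [tau_block E hk, tau_other E h1] at he
    have hq : Q E (Nat.nth (Q E) (Nat.count (fun m' => ¬ IsB m') m)) :=
      Nat.nth_mem_of_infinite (Q_infinite E hEb) _
    rw [he] at hq
    exact hq ⟨_, rfl⟩
  · rw [tau_other E h1, tau_other E h2] at he
    have hcount := Nat.nth_injective (Q_infinite E hEb) he
    exact Nat.count_injective h1 h2 hcount

omit hEinj hEb in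
lemma tau_surj : Function.Surjective (tau E) := by
  intro x
  by_cases hx : x ∈ Set.range E
  · obtain ⟨N, rfl⟩ := hx
    obtain ⟨n, hcol, h1, h2⟩ := exists_block N.unpair.1 N.unpair.2
    refine ⟨4 ^ n + (N.unpair.2 - pc2 N.unpair.1 n), ?_⟩
    rw [tau_block E (by omega), hcol]
    have h3 : pc2 N.unpair.1 n + (N.unpair.2 - pc2 N.unpair.1 n) = N.unpair.2 := by omega
    rw [h3, Nat.pair_unpair]
  · have hQx : Q E x := hx
    refine ⟨Nat.nth (fun m' => ¬ IsB m') (Nat.count (Q E) x), ?_⟩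
    have hO : ¬ IsB (Nat.nth (fun m' => ¬ IsB m') (Nat.count (Q E) x)) :=
      Nat.nth_mem_of_infinite isOther_infinite _
    rw [tau_other E hO, Nat.count_nth_of_infinite isOther_infinite, Nat.nth_count hQx]

lemma cntO_primrec : Primrec cntO := by
  have hstep : Primrec₂ fun (m' ih : ℕ) => ih + cond (inBb m') 0 1 :=
    (Primrec.nat_add.comp Primrec.snd
      (Primrec.cond (inBb_primrec.comp Primrec.fst) (Primrec.const 0)
        (Primrec.const 1))).to₂
  exact (Primrec.nat_rec₁ 0 hstep).of_eq fun m => rfl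

lemma inRb_computable (hE : Computable E) : Computable (inRb E) := by
  have hh : Computable fun q : ℕ × (ℕ × Bool) => q.2.2 || (E q.2.1 == q.1) :=
    Primrec.or.to_comp.comp (Computable.snd.comp Computable.snd)
      (Primrec.eq.decide.to_comp.comp (hE.comp (Computable.fst.comp Computable.snd)) Computable.fst)
  exact (Computable.nat_rec (f := Nat.succ) (g := fun _ : ℕ => false) Computable.succ
    (Computable.const false) hh.to₂).of_eq fun x => rfl

lemma cntC_computable (hE : Computable E) : Computable (cntC E) := by
  have hh : Computable fun q : ℕ × (ℕ × ℕ) => q.2.2 + cond (inRb E q.2.1) 0 1 :=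
    Primrec.nat_add.to_comp.comp (Computable.snd.comp Computable.snd)
      (Computable.cond ((inRb_computable E hE).comp (Computable.fst.comp Computable.snd))
        (Computable.const 0) (Computable.const 1))
  exact (Computable.nat_rec (f := @id ℕ) (g := fun _ : ℕ => (0:ℕ)) Computable.id
    (Computable.const 0) hh.to₂).of_eq fun x => rfl

include hEb in
lemma rfind_nthQ (j : ℕ) :
    Nat.rfind (fun x => Part.some (!(inRb E x) && (cntC E x == j))) =
      Part.some (Nat.nth (Q E) j) := by
  rw [Part.eq_some_iff]
  refine Nat.mem_rfind.2 ?_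
  beta_reduce
  constructor
  · rw [Part.mem_some_iff]
    have h1 : Q E (Nat.nth (Q E) j) := Nat.nth_mem_of_infinite (Q_infinite E hEb) j
    have h2 : inRb E (Nat.nth (Q E) j) = false := by
      rw [← Bool.not_eq_true, inRb_iff E hEb]; exact h1
    have h3 : cntC E (Nat.nth (Q E) j) = j := by
      rw [cntC_eq E hEb, Nat.count_nth_of_infinite (Q_infinite E hEb)]
    rw [h2, h3]
    simp
  · intro m hm
    rw [Part.mem_some_iff]
    by_contra hne
    have htrue : (!(inRb E m) && (cntC E m == j)) = true := by
      cases h : (!(inRb E m) && (cntC E m == j)) with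
      | false => exact absurd h.symm hne
      | true => rfl
    rw [Bool.and_eq_true, Bool.not_eq_true', beq_iff_eq] at htrue
    obtain ⟨hf, hcnt⟩ := htrue
    have hQm : Q E m := by
      intro hcontra
      rw [← inRb_iff E hEb] at hcontra
      rw [hf] at hcontra
      exact Bool.false_ne_true hcontra
    have hth := Nat.nth_count hQm
    rw [cntC_eq E hEb] at hcnt
    rw [hcnt] at hth
    omega

include hEb in
lemma nthQ_computable (hE : Computable E) : Computable (fun j => Nat.nth (Q E) j) := by
  have hpredp : Computable fun q : ℕ × ℕ => (!(inRb E q.2) && (cntC E q.2 == q.1) : Bool) :=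
    Primrec.and.to_comp.comp
      (Primrec.not.to_comp.comp ((inRb_computable E hE).comp Computable.snd))
      (Primrec.eq.decide.to_comp.comp ((cntC_computable E hE).comp Computable.snd) Computable.fst)
  have hpred : Computable₂ fun (j x : ℕ) => (!(inRb E x) && (cntC E x == j) : Bool) :=
    hpredp.to₂
  have hp : Partrec₂ fun (j x : ℕ) =>
      (Part.some (!(inRb E x) && (cntC E x == j)) : Part Bool) := hpred.partrec₂
  have hrf := Partrec.rfind hp
  exact (hrf.of_eq fun j => rfind_nthQ E hEb j)

include hEb in
lemma tau_computable (hE : Computable E) : Computable (tau E) := by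
  have hinner : Primrec fun m =>
      Nat.pair (BL m).unpair.1 (pc2 (BL m).unpair.1 (BL m) + (m - pow4 (BL m))) := by
    have h_i : Primrec fun m => (BL m).unpair.1 :=
      Primrec.fst.comp (Primrec.unpair.comp BL_primrec)
    exact Primrec₂.natPair.comp h_i
      (Primrec.nat_add.comp (pc2_primrec.comp h_i BL_primrec)
        (Primrec.nat_sub.comp Primrec.id (pow4_primrec.comp BL_primrec)))
  have hblockv : Computable fun m =>
      E (Nat.pair (BL m).unpair.1 (pc2 (BL m).unpair.1 (BL m) + (m - pow4 (BL m)))) :=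
    hE.comp hinner.to_comp
  have hotherv : Computable fun m => Nat.nth (Q E) (cntO m) :=
    (nthQ_computable E hEb hE).comp cntO_primrec.to_comp
  have hcond : Computable fun m => cond (inBb m)
      (E (Nat.pair (BL m).unpair.1 (pc2 (BL m).unpair.1 (BL m) + (m - pow4 (BL m)))))
      (Nat.nth (Q E) (cntO m)) :=
    Computable.cond inBb_primrec.to_comp hblockv hotherv
  refine hcond.of_eq fun m => ?_
  by_cases h : IsB m
  · have hb : inBb m = true := (inBb_iff m).2 h
    rw [hb, tau, if_pos h, pow4_eq]
    simp
  · have hb : inBb m = false := by rw [← Bool.not_eq_true, inBb_iff]; exact h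
    rw [hb, tau_other E h, cntO_eq]
    simp

noncomputable def sig : ℕ → ℕ := Function.invFun (tau E)

omit hEinj hEb in
lemma tau_sig (x : ℕ) : tau E (sig E x) = x :=
  Function.invFun_eq (tau_surj E x)

include hEinj hEb in
lemma sig_tau (m : ℕ) : sig E (tau E m) = m :=
  Function.leftInverse_invFun (tau_inj E hEinj hEb) m

include hEinj hEb in
lemma sig_bijective : Function.Bijective (sig E) := by
  constructor
  · intro x y h
    rw [← tau_sig E x, ← tau_sig E y, h]
  · intro m
    exact ⟨tau E m, sig_tau E hEinj hEb m⟩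

include hEinj hEb in
lemma sig_computable (hE : Computable E) : Computable (sig E) := by
  have hpredp : Computable fun q : ℕ × ℕ => (tau E q.2 == q.1 : Bool) :=
    Primrec.eq.decide.to_comp.comp ((tau_computable E hEb hE).comp Computable.snd) Computable.fst
  have hpred : Computable₂ fun (x m : ℕ) => (tau E m == x : Bool) := hpredp.to₂
  have hrf := Partrec.rfind hpred.partrec₂
  refine hrf.of_eq fun x => ?_
  show _ = Part.some (sig E x)
  rw [Part.eq_some_iff, Nat.mem_rfind]
  constructor
  · simp only [PFun.coe_val, Part.mem_some_iff]
    simp [tau_sig E x]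
  · intro m hm
    simp only [PFun.coe_val, Part.mem_some_iff]
    by_contra hne
    have : tau E m = x := by
      have : (tau E m == x) = true := by
        cases h : (tau E m == x) with
        | false => exact absurd h.symm hne
        | true => rfl
      exact beq_iff_eq.1 this
    have hmx : m = sig E x := by
      have := congrArg (sig E) this
      rwa [sig_tau E hEinj hEb] at this
    omega

include hEinj hEb in
lemma sig_block {n k : ℕ} (hk : k < 4 ^ n) :
    sig E (E (Nat.pair n.unpair.1 (pc2 n.unpair.1 n + k))) = 4 ^ n + k := by
  rw [← tau_block E hk, sig_tau E hEinj hEb]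

end Perm

end IGC

namespace IGC

open Nat.Partrec (Code)
open Nat.Partrec.Code

/-! ### density lemmas -/

lemma hasDensity_univ : HasDensity Set.univ 1 := by
  have h : ∀ᶠ n : ℕ in atTop, (1:ℝ) = partialDensity Set.univ n := by
    filter_upwards [eventually_gt_atTop 0] with n hn
    simp [partialDensity, Finset.filter_true_of_mem, hn.ne']
  exact Tendsto.congr' h tendsto_const_nhds

lemma not_hasDensity_one {D : Set ℕ}
    (h : ∀ j : ℕ, ∃ n, j ≤ n ∧ ∀ m, 4 ^ n ≤ m → m < 2 * 4 ^ n → m ∉ D) :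
    ¬ HasDensity D 1 := by
  intro hd
  have h2 : ∀ᶠ N in atTop, (1/2 : ℝ) < partialDensity D N :=
    hd.eventually (eventually_gt_nhds (by norm_num))
  obtain ⟨N₀, hN₀⟩ := eventually_atTop.1 h2
  obtain ⟨n, hn, hblock⟩ := h N₀
  have hsub : (Finset.range (2 * 4 ^ n)).filter (fun m => m ∈ D) ⊆ Finset.range (4 ^ n) := by
    intro m hm
    simp only [Finset.mem_filter, Finset.mem_range] at hm ⊢
    by_contra hge
    exact hblock m (le_of_not_gt hge) hm.1 hm.2
  have hcard : (((Finset.range (2 * 4 ^ n)).filter (fun m => m ∈ D)).card : ℝ) ≤ 4 ^ n := by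
    have h3 := Finset.card_le_card hsub
    rw [Finset.card_range] at h3
    exact_mod_cast h3
  have hle : partialDensity D (2 * 4 ^ n) ≤ 1/2 := by
    rw [partialDensity, div_le_iff₀ (by exact_mod_cast Nat.pos_of_ne_zero (by positivity))]
    push_cast
    nlinarith [hcard]
  have hge : N₀ ≤ 2 * 4 ^ n := by
    have h4 : n < 4 ^ n := Nat.lt_pow_self (by norm_num)
    omega
  exact absurd (hN₀ _ hge) (not_lt.2 hle)

/-! ### generic-case computability of trivial sets -/

lemma gcc_empty : GenericCaseComputable (∅ : Set ℕ) := by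
  refine ⟨fun _ => Part.some false, ?_, ?_, ?_⟩
  · exact ((Computable.const false).partrec : Partrec _).of_eq fun n => rfl
  · intro n b hb
    rw [Part.mem_some_iff] at hb
    subst hb
    simp
  · have h : {n : ℕ | (Part.some false).Dom} = Set.univ := by
      ext n; simp
    rw [h]; exact hasDensity_univ

lemma gcc_univ : GenericCaseComputable (Set.univ : Set ℕ) := by
  refine ⟨fun _ => Part.some true, ?_, ?_, ?_⟩
  · exact ((Computable.const true).partrec : Partrec _).of_eq fun n => rfl
  · intro n b hb
    rw [Part.mem_some_iff] at hb
    subst hb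
    simp
  · have h : {n : ℕ | (Part.some true).Dom} = Set.univ := by
      ext n; simp
    rw [h]; exact hasDensity_univ

/-! ### Rice's theorem transported to the numbering phi -/

lemma computablePred_iff_trivial (S : Set ℕ) (hS : IndexSet S) :
    ComputablePred (fun n => n ∈ S) ↔ (S = ∅ ∨ S = Set.univ) := by
  constructor
  · intro h
    have h2 : ComputablePred fun c : Code => c ∈ {c : Code | Encodable.encode c ∈ S} := by
      obtain ⟨f, hf, hpf⟩ := ComputablePred.computable_iff.1 h
      refine ComputablePred.computable_iff.2 ⟨fun c => f (Encodable.encode c),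
        hf.comp Computable.encode, ?_⟩
      funext c
      exact congrFun hpf (Encodable.encode c)
    have H : ∀ cf cg : Code, eval cf = eval cg →
        (cf ∈ {c : Code | Encodable.encode c ∈ S} ↔
          cg ∈ {c : Code | Encodable.encode c ∈ S}) := by
      intro cf cg he
      exact hS _ _ (by rw [phi, phi, Denumerable.ofNat_encode, Denumerable.ofNat_encode]; exact he)
    rcases (ComputablePred.rice₂ _ H).1 h2 with hC | hC
    · left
      ext n
      simp only [Set.mem_empty_iff_false, iff_false]
      intro hn
      have h3 : (Denumerable.ofNat Code n) ∈ {c : Code | Encodable.encode c ∈ S} := by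
        simp only [Set.mem_setOf_eq, Denumerable.encode_ofNat]
        exact hn
      rw [hC] at h3
      exact h3
    · right
      ext n
      simp only [Set.mem_univ, iff_true]
      have h3 : (Denumerable.ofNat Code n) ∈ {c : Code | Encodable.encode c ∈ S} := by
        rw [hC]; trivial
      simpa only [Set.mem_setOf_eq, Denumerable.encode_ofNat] using h3
  · rintro (rfl | rfl)
    · exact ComputablePred.computable_iff.2 ⟨fun _ => false, Computable.const _, by
        funext n; simp⟩
    · exact ComputablePred.computable_iff.2 ⟨fun _ => true, Computable.const _, by
        funext n; simp⟩

/-! ### an effective numbering of all partial computable `ℕ →. Bool` -/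

def G (i : ℕ) : ℕ →. Bool := fun n => (phi i n).map (fun m => decide (m = 1))

lemma exists_G {g : ℕ →. Bool} (hg : Partrec g) : ∃ i, G i = g := by
  have h1 : Nat.Partrec (fun n => (g n).map Encodable.encode) := by
    rw [Partrec] at hg
    exact hg.of_eq fun n => by simp
  obtain ⟨c, hc⟩ := Code.exists_code.1 h1
  refine ⟨Encodable.encode c, ?_⟩
  funext n
  show (phi (Encodable.encode c) n).map _ = g n
  rw [phi, Denumerable.ofNat_encode, hc, Part.map_map]
  exact Part.map_id' (fun b => by cases b <;> rfl) _

/-! ### the diagonal fixed-point construction -/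

def desc (a b : ℕ) : Code → ℕ →. ℕ := fun c y =>
  (G y.unpair.1.unpair.1 (Encodable.encode (curry c y.unpair.1))).bind
    (fun r => eval (bif r then Denumerable.ofNat Code b else Denumerable.ofNat Code a) y.unpair.2)

lemma desc_partrec (a b : ℕ) : Partrec₂ (desc a b) := by
  have h_i : Computable fun p : Code × ℕ => Denumerable.ofNat Code p.2.unpair.1.unpair.1 :=
    (Computable.ofNat Code).comp (Computable.fst.comp (Computable.unpair.comp
      (Computable.fst.comp (Computable.unpair.comp Computable.snd))))
  have h_m : Computable fun p : Code × ℕ => Encodable.encode (curry p.1 p.2.unpair.1) :=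
    Computable.encode.comp (primrec₂_curry.to_comp.comp Computable.fst
      (Computable.fst.comp (Computable.unpair.comp Computable.snd)))
  have h_eval : Partrec fun p : Code × ℕ =>
      eval (Denumerable.ofNat Code p.2.unpair.1.unpair.1)
        (Encodable.encode (curry p.1 p.2.unpair.1)) := eval_part.comp h_i h_m
  have hdec : Computable fun q : (Code × ℕ) × ℕ => decide (q.2 = 1) :=
    (Primrec.eq.comp Primrec.snd (Primrec.const 1)).decide.to_comp
  have h_G : Partrec fun p : Code × ℕ =>
      G p.2.unpair.1.unpair.1 (Encodable.encode (curry p.1 p.2.unpair.1)) :=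
    h_eval.map hdec.to₂
  have h_branch : Partrec₂ fun (p : Code × ℕ) (r : Bool) =>
      eval (bif r then Denumerable.ofNat Code b else Denumerable.ofNat Code a) p.2.unpair.2 := by
    have hcode : Computable fun q : (Code × ℕ) × Bool =>
        bif q.2 then Denumerable.ofNat Code b else Denumerable.ofNat Code a :=
      Computable.cond Computable.snd (Computable.const _) (Computable.const _)
    have harg : Computable fun q : (Code × ℕ) × Bool => q.1.2.unpair.2 :=
      Computable.snd.comp (Computable.unpair.comp (Computable.snd.comp Computable.fst))
    exact (eval_part.comp hcode harg).to₂
  exact h_G.bind h_branch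

noncomputable def dV (a b : ℕ) : Code := (fixed_point₂ (desc_partrec a b)).choose

lemma dV_spec (a b : ℕ) : eval (dV a b) = desc a b (dV a b) :=
  (fixed_point₂ (desc_partrec a b)).choose_spec

noncomputable def dE (a b : ℕ) (n : ℕ) : ℕ := Encodable.encode (curry (dV a b) n)

lemma dE_inj (a b : ℕ) : Function.Injective (dE a b) := fun n n' h =>
  (curry_inj (Encodable.encode_injective h)).2

lemma dE_computable (a b : ℕ) : Computable (dE a b) :=
  (Primrec.encode.comp (primrec₂_curry.comp (Primrec.const (dV a b)) Primrec.id)).to_comp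

lemma encodeCode_const_ge (n : ℕ) : n ≤ encodeCode (Code.const n) := by
  induction n with
  | zero => exact Nat.zero_le _
  | succ n ih =>
    have h1 : encodeCode (Code.const n) ≤ Nat.pair 1 (encodeCode (Code.const n)) :=
      Nat.right_le_pair _ _
    have h2 : encodeCode (Code.const (n+1)) =
        2 * (2 * Nat.pair 1 (encodeCode (Code.const n)) + 1) + 4 := rfl
    omega

lemma dE_bound (a b n : ℕ) : 2 * n + 2 ≤ dE a b n := by
  have he : dE a b n = encodeCode (curry (dV a b) n) := congrFun encodeCode_eq _
  have h1 : encodeCode (Code.pair (Code.const n) Code.id) =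
      2 * (2 * Nat.pair (encodeCode (Code.const n)) (encodeCode Code.id)) + 4 := rfl
  have h2 : encodeCode (curry (dV a b) n) =
      2 * (2 * Nat.pair (encodeCode (dV a b))
        (encodeCode (Code.pair (Code.const n) Code.id)) + 1) + 4 := rfl
  have h3 := Nat.left_le_pair (encodeCode (Code.const n)) (encodeCode Code.id)
  have h4 := Nat.right_le_pair (encodeCode (dV a b))
    (encodeCode (Code.pair (Code.const n) Code.id))
  have h5 := encodeCode_const_ge n
  omega

lemma phi_dE (a b i K x : ℕ) :
    phi (dE a b (Nat.pair i K)) x =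
      (G i (dE a b (Nat.pair i K))).bind
        (fun r => eval (bif r then Denumerable.ofNat Code b
          else Denumerable.ofNat Code a) x) := by
  show eval (Denumerable.ofNat Code (Encodable.encode (curry (dV a b) (Nat.pair i K)))) x = _
  rw [Denumerable.ofNat_encode, eval_curry,
    show eval (dV a b) = desc a b (dV a b) from dV_spec a b]
  rw [desc]
  simp only [Nat.unpair_pair]
  rfl

lemma diag_div {S : Set ℕ} (hS : IndexSet S) {a b : ℕ} (ha : a ∈ S) (hb : b ∉ S)
    {g : ℕ →. Bool} (hdesc : PartialDescription g S) {i : ℕ} (hgi : G i = g) (K : ℕ) :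
    ¬ (g (dE a b (Nat.pair i K))).Dom := by
  intro hdom
  set x := dE a b (Nat.pair i K) with hx
  have hr : (g x).get hdom ∈ g x := Part.get_mem hdom
  set r := (g x).get hdom with hrdef
  have hsome : g x = Part.some r := Part.eq_some_iff.2 hr
  have hphi : phi x =
      eval (bif r then Denumerable.ofNat Code b else Denumerable.ofNat Code a) := by
    funext y
    rw [hx, phi_dE a b i K y, hgi, ← hx, hsome, Part.bind_some]
  have hiff := hdesc x r hr
  cases hr' : r with
  | true =>
    have hpb : phi x = phi b := by rw [hphi, hr']; rfl
    have hxS : x ∈ S := hiff.1 hr'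
    exact hb ((hS x b hpb).1 hxS)
  | false =>
    have hpa : phi x = phi a := by rw [hphi, hr']; rfl
    have hxS : x ∈ S := (hS x a hpa).2 ha
    have := hiff.2 hxS
    rw [hr'] at this
    exact Bool.false_ne_true this

/-! ### the main construction -/

lemma hard {S : Set ℕ} (hS : IndexSet S)
    (H : ∀ π : ℕ → ℕ, ComputablePerm π → GenericCaseComputable (π '' S)) :
    S = ∅ ∨ S = Set.univ := by
  by_contra hc
  push_neg at hc
  obtain ⟨hne, hnu⟩ := hc
  obtain ⟨a, ha⟩ := hne
  obtain ⟨b, hb⟩ : ∃ b, b ∉ S := by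
    by_contra hall
    push_neg at hall
    exact hnu (Set.eq_univ_of_forall hall)
  have hEinj := dE_inj a b
  have hEb := dE_bound a b
  have hEcomp := dE_computable a b
  set E := dE a b with hE
  have hσbij := sig_bijective E hEinj hEb
  have hσcomp := sig_computable E hEinj hEb hEcomp
  obtain ⟨f, hf, hfdesc, hfdens⟩ := H (sig E) ⟨hσbij, hσcomp⟩
  have hgp : Partrec fun x => f (sig E x) := hf.comp hσcomp
  obtain ⟨i, hgi⟩ := exists_G hgp
  have hgdesc : PartialDescription (fun x => f (sig E x)) S := by
    intro x r hr
    rw [hfdesc (sig E x) r hr]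
    exact hσbij.1.mem_set_image
  refine not_hasDensity_one ?_ hfdens
  intro j
  refine ⟨Nat.pair i j, Nat.right_le_pair i j, ?_⟩
  intro m h1 h2 hmD
  set n := Nat.pair i j with hn
  have hk : m - 4 ^ n < 4 ^ n := by omega
  have hm_eq : 4 ^ n + (m - 4 ^ n) = m := by omega
  have htau := tau_block E (n := n) hk
  rw [hm_eq] at htau
  have hcol : n.unpair.1 = i := by rw [hn, Nat.unpair_pair]
  rw [hcol] at htau
  have hσm : sig E (tau E m) = m := sig_tau E hEinj hEb m
  have hdom : ((fun x => f (sig E x)) (tau E m)).Dom := by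
    show (f (sig E (tau E m))).Dom
    rw [hσm]
    exact hmD
  rw [htau] at hdom
  exact diag_div hS ha hb hgdesc hgi (pc2 i n + (m - 4 ^ n)) hdom

end IGC

theorem indexSet_intrinsically_gc_iff_computable (S : Set ℕ)
    (hS : IndexSet S) :
    ((∀ π : ℕ → ℕ, ComputablePerm π → GenericCaseComputable (π '' S)) ↔
        ComputablePred (fun n => n ∈ S)) ∧
      (ComputablePred (fun n => n ∈ S) ↔ (S = ∅ ∨ S = Set.univ)) := by
  have h2 := IGC.computablePred_iff_trivial S hS
  refine ⟨⟨fun H => h2.2 (IGC.hard hS H), fun hcomp π hπ => ?_⟩, h2⟩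
  rcases h2.1 hcomp with rfl | rfl
  · rw [Set.image_empty]
    exact IGC.gcc_empty
  · rw [Set.image_univ, Function.Surjective.range_eq hπ.1.2]
    exact IGC.gcc_univ
end
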